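/- arXiv:2007.00956 — 12 statements merged into one kernel-verified Lean document; each statement's English description precedes it below -/
import Mathlib

section
/- Let L be a number field and let v ∈ L be irrational (v ∉ ℚ). Then for every primitive element α of L (indeed, for every α with L = ℚ(v)(α)) and every polynomial f ∈ ℚ[x] with f(α) = v, one has deg f ≥ [L : ℚ(v)]. Consequently min deg_L(v) ≥ [L : ℚ(v)]. -/
/-- The minimal degree of an algebraic number `v ∈ L`: the minimum, over all primitive
elements `α` of `L` (i.e. `ℚ(α) = L`), of the degree of a polynomial `f ∈ ℚ[x]`
with `f(α) = v`. -/
noncomputable def minDegree (L : Type*) [Field L] [Algebra ℚ L] (v : L) : ℕ :=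
  sInf {d : ℕ | ∃ α : L, IntermediateField.adjoin ℚ {α} = ⊤ ∧
    ∃ f : Polynomial ℚ, f.natDegree = d ∧ Polynomial.aeval α f = v}

theorem stmt_0_key (L : Type*) [Field L] [NumberField L] (v : L)
    (hv : v ∉ Set.range (algebraMap ℚ L)) :
    ∀ α : L, IntermediateField.adjoin ℚ {v, α} = ⊤ →
      ∀ f : Polynomial ℚ, Polynomial.aeval α f = v →
        Module.finrank (IntermediateField.adjoin ℚ {v}) L ≤ f.natDegree := by
  intro α hα f hf
  set K : IntermediateField ℚ L := IntermediateField.adjoin ℚ {v} with hK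
  have hvK : v ∈ K := IntermediateField.subset_adjoin ℚ {v} rfl
  -- f is nonconstant
  have hf0 : f.natDegree ≠ 0 := by
    intro h
    obtain ⟨c, hc⟩ := Polynomial.natDegree_eq_zero.mp h
    apply hv
    exact ⟨c, by rw [← hf, ← hc, Polynomial.aeval_C]⟩
  -- K⟮α⟯ = ⊤
  have htop : IntermediateField.adjoin K {α} = ⊤ := by
    apply IntermediateField.restrictScalars_injective ℚ
    rw [IntermediateField.restrictScalars_top]
    have e := IntermediateField.adjoin_adjoin_left (F := ℚ) (S := ({v} : Set L)) (T := ({α} : Set L))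
    rw [Set.singleton_union] at e
    exact e.trans hα
  have hint : IsIntegral K α := IsIntegral.of_finite K α
  -- the annihilating polynomial over K
  set g : Polynomial K := f.map (algebraMap ℚ K) - Polynomial.C ⟨v, hvK⟩ with hg
  have hgval : Polynomial.aeval α g = 0 := by
    rw [hg, map_sub, Polynomial.aeval_map_algebraMap, Polynomial.aeval_C, hf]
    have : (algebraMap K L) ⟨v, hvK⟩ = v := rfl
    rw [this, sub_self]
  have hgdeg : g.natDegree = f.natDegree := by
    rw [hg, Polynomial.natDegree_sub_C, Polynomial.natDegree_map]
  have hgne : g ≠ 0 := by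
    intro h
    rw [h, Polynomial.natDegree_zero] at hgdeg
    exact hf0 hgdeg.symm
  have hmin : (minpoly K α).natDegree ≤ g.natDegree :=
    Polynomial.natDegree_le_natDegree (minpoly.degree_le_of_ne_zero K α hgne hgval)
  have hfr : Module.finrank K L = (minpoly K α).natDegree := by
    rw [← IntermediateField.finrank_top', ← htop, IntermediateField.adjoin.finrank hint]
  rw [hfr]
  omega

/-- If `v ∈ L` is irrational, then for every `α` with `L = ℚ(v)(α)` and every
`f ∈ ℚ[x]` with `f(α) = v` one has `deg f ≥ [L : ℚ(v)]`; consequently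
`min deg_L(v) ≥ [L : ℚ(v)]`. -/
theorem stmt_0 (L : Type*) [Field L] [NumberField L] (v : L)
    (hv : v ∉ Set.range (algebraMap ℚ L)) :
    (∀ α : L, IntermediateField.adjoin ℚ {v, α} = ⊤ →
      ∀ f : Polynomial ℚ, Polynomial.aeval α f = v →
        Module.finrank (IntermediateField.adjoin ℚ {v}) L ≤ f.natDegree) ∧
    Module.finrank (IntermediateField.adjoin ℚ {v}) L ≤ minDegree L v := by
  refine ⟨stmt_0_key L v hv, ?_⟩
  apply le_csInf
  · -- nonempty: primitive element theorem
    obtain ⟨α, hα⟩ := Field.exists_primitive_element ℚ L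
    have halg : (IntermediateField.adjoin ℚ ({α} : Set L)).toSubalgebra
        = Algebra.adjoin ℚ {α} :=
      IntermediateField.adjoin_toSubalgebra_of_isAlgebraic fun x _ => Algebra.IsAlgebraic.isAlgebraic x
    have : v ∈ Algebra.adjoin ℚ ({α} : Set L) := by
      rw [← halg, hα]
      trivial
    rw [Algebra.adjoin_singleton_eq_range_aeval] at this
    obtain ⟨f, hf⟩ := this
    exact ⟨f.natDegree, α, hα, f, rfl, hf⟩
  · rintro d ⟨α, hα, f, hd, hf⟩
    have h2 : IntermediateField.adjoin ℚ ({v, α} : Set L) = ⊤ := by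
      apply top_le_iff.mp
      rw [← hα]
      exact IntermediateField.adjoin.mono ℚ _ _ (by simp)
    rw [← hd]
    exact stmt_0_key L v hv α h2 f hf
end

section
/- Let L/ℚ be a Galois extension with [L : ℚ] = 4 and let v ∈ L be irrational (v ∉ ℚ). Then there exists a primitive element α of L and a polynomial f ∈ ℚ[x] with deg f = [L : ℚ(v)] such that v = f(α); in particular min deg_L(v) = [L : ℚ(v)]. -/
open IntermediateField Polynomial Module

lemma lower_bound (L : Type*) [Field L] [NumberField L] [IsGalois ℚ L] (v : L)
    (hv : v ∉ Set.range (algebraMap ℚ L)) (α : L)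
    (hα : IntermediateField.adjoin ℚ {α} = ⊤) (f : Polynomial ℚ)
    (hf : Polynomial.aeval α f = v) :
    finrank ↥(IntermediateField.adjoin ℚ {v}) L ≤ f.natDegree := by
  set K := IntermediateField.adjoin ℚ {v} with hK
  haveI : IsGalois ↥K L := IsGalois.tower_top_of_isGalois ℚ ↥K L
  have hcard : Fintype.card (L ≃ₐ[↥K] L) = finrank ↥K L := by
    rw [← Nat.card_eq_fintype_card]; exact IsGalois.card_aut_eq_finrank ↥K L
  by_contra hlt
  push_neg at hlt
  classical
  -- f is not constant
  have hf0 : f.natDegree ≠ 0 := by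
    intro h0
    apply hv
    refine ⟨f.coeff 0, ?_⟩
    rw [Polynomial.eq_C_of_natDegree_eq_zero h0] at hf
    simpa using hf
  set p : Polynomial L := f.map (algebraMap ℚ L) - Polynomial.C v with hp
  have hpdeg : p.natDegree = f.natDegree := by
    rw [hp, Polynomial.natDegree_sub_C, Polynomial.natDegree_map]
  have hpne : p ≠ 0 := fun h => hf0 (by rw [← hpdeg, h, Polynomial.natDegree_zero])
  -- each σ α is a root of p
  have hroot : ∀ σ : L ≃ₐ[↥K] L, p.IsRoot (σ α) := by
    intro σ
    have hvK : v ∈ K := IntermediateField.mem_adjoin_simple_self ℚ v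
    have hσv : σ v = v := by
      have := σ.commutes ⟨v, hvK⟩
      simpa using this
    have : Polynomial.aeval (σ α) f = σ (Polynomial.aeval α f) := by
      exact (Polynomial.aeval_algHom_apply ((σ : L →ₐ[↥K] L).restrictScalars ℚ) α f)
    simp only [Polynomial.IsRoot, hp, Polynomial.eval_sub, Polynomial.eval_C,
      Polynomial.eval_map, ← Polynomial.aeval_def]
    rw [this, hf, hσv, sub_self]
  -- σ ↦ σ α is injective
  have hAlgAdj : Algebra.adjoin ℚ {α} = ⊤ := by
    have hint : IsIntegral ℚ α := IsIntegral.of_finite ℚ α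
    have := IntermediateField.adjoin_simple_toSubalgebra_of_isAlgebraic hint.isAlgebraic
    rw [hα, IntermediateField.top_toSubalgebra] at this
    exact this.symm
  have hinj : Function.Injective (fun σ : L ≃ₐ[↥K] L => σ α) := by
    intro σ τ h
    have : ((σ : L →ₐ[↥K] L).restrictScalars ℚ) = ((τ : L →ₐ[↥K] L).restrictScalars ℚ) :=
      AlgHom.ext_of_adjoin_eq_top hAlgAdj (fun x hx => by
        simp only [Set.mem_singleton_iff] at hx
        subst hx
        simpa using h)
    ext x
    exact DFunLike.congr_fun this x
  have hT : (Finset.univ.image (fun σ : L ≃ₐ[↥K] L => σ α)).card = finrank ↥K L := by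
    rw [Finset.card_image_of_injective _ hinj, Finset.card_univ, hcard]
  have hsub : (Finset.univ.image (fun σ : L ≃ₐ[↥K] L => σ α)) ⊆ p.roots.toFinset := by
    intro x hx
    simp only [Finset.mem_image] at hx
    obtain ⟨σ, _, rfl⟩ := hx
    rw [Multiset.mem_toFinset, Polynomial.mem_roots hpne]
    exact hroot σ
  have := Finset.card_le_card hsub
  have h2 := Multiset.toFinset_card_le p.roots
  have h3 := Polynomial.card_roots' p
  omega


lemma repr_mem (L : Type*) [Field L] [NumberField L] (v x : L)
    (hdeg2 : (minpoly ℚ v).natDegree = 2)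
    (hx : x ∈ IntermediateField.adjoin ℚ {v}) :
    ∃ u w : ℚ, x = u • v + algebraMap ℚ L w := by
  have hint : IsIntegral ℚ v := IsIntegral.of_finite ℚ v
  have hxA : x ∈ Algebra.adjoin ℚ ({v} : Set L) := by
    rw [← IntermediateField.adjoin_simple_toSubalgebra_of_isAlgebraic hint.isAlgebraic]
    exact hx
  rw [Algebra.adjoin_singleton_eq_range_aeval, AlgHom.mem_range] at hxA
  obtain ⟨g, hg⟩ := hxA
  have hmon := minpoly.monic hint
  have hne1 : minpoly ℚ v ≠ 1 := fun h => by simp [h] at hdeg2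
  set r := g %ₘ minpoly ℚ v with hr
  have hrdeg : r.natDegree ≤ 1 := by
    have h := Polynomial.natDegree_modByMonic_lt g hmon hne1
    rw [← hr, hdeg2] at h
    omega
  have hrx : Polynomial.aeval v r = x := by
    rw [hr, Polynomial.aeval_modByMonic_eq_self_of_root (minpoly.aeval ℚ v), hg]
  refine ⟨r.coeff 1, r.coeff 0, ?_⟩
  rw [← hrx]
  conv_lhs => rw [Polynomial.eq_X_add_C_of_natDegree_le_one hrdeg]
  simp [Algebra.smul_def]

lemma exists_primitive (L : Type*) [Field L] [NumberField L]
    (hdeg : finrank ℚ L = 4) (v : L) (hv : v ∉ Set.range (algebraMap ℚ L))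
    (hm : finrank ↥(IntermediateField.adjoin ℚ {v}) L = 2) :
    ∃ α : L, IntermediateField.adjoin ℚ {α} = ⊤ ∧
      ∃ f : Polynomial ℚ, f.natDegree = 2 ∧ Polynomial.aeval α f = v := by
  set K := IntermediateField.adjoin ℚ {v} with hK
  have hKfin : finrank ℚ ↥K = 2 := by
    have h2 : finrank ℚ ↥K * finrank ↥K L = finrank ℚ L := finrank_mul_finrank ℚ ↥K L
    rw [hm, hdeg] at h2
    omega
  have hvint : IsIntegral ℚ v := IsIntegral.of_finite ℚ v
  have hdeg2 : (minpoly ℚ v).natDegree = 2 := by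
    have := IntermediateField.adjoin.finrank hvint
    rw [← this, hKfin]
  -- pick γ ∉ K
  have hKne : K ≠ ⊤ := by
    intro h
    rw [h] at hm
    rw [IntermediateField.finrank_top] at hm
    omega
  obtain ⟨γ, hγ⟩ : ∃ γ, γ ∉ K := by
    by_contra h
    push_neg at h
    exact hKne (eq_top_iff.mpr fun x _ => h x)
  -- quadratic identity
  obtain ⟨b, c, hbK, hcK, hident⟩ : ∃ b c : L, b ∈ K ∧ c ∈ K ∧ γ ^ 2 + b * γ + c = 0 := by
    haveI : FiniteDimensional ↥K L := inferInstance
    have hγint : IsIntegral ↥K γ := IsIntegral.of_finite ↥K γ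
    set q := minpoly ↥K γ with hq
    have hq2 : q.natDegree = 2 := by
      have hle : q.natDegree ≤ 2 := hm ▸ minpoly.natDegree_le γ
      have hne1 : q.natDegree ≠ 1 := by
        intro h1
        rw [hq, minpoly.natDegree_eq_one_iff] at h1
        obtain ⟨k, hk⟩ := h1
        exact hγ (hk ▸ k.2)
      have hpos : 0 < q.natDegree := minpoly.natDegree_pos hγint
      omega
    refine ⟨(q.coeff 1 : ↥K), (q.coeff 0 : ↥K), (q.coeff 1).2, (q.coeff 0).2, ?_⟩
    have h0 : Polynomial.aeval γ q = 0 := minpoly.aeval ↥K γ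
    rw [Polynomial.aeval_eq_sum_range, hq2] at h0
    have hlead : q.coeff 2 = 1 := by
      have := (minpoly.monic hγint).coeff_natDegree
      rwa [hq2] at this
    rw [Finset.sum_range_succ, Finset.sum_range_succ, Finset.sum_range_one, hlead] at h0
    simp only [Algebra.smul_def, IntermediateField.algebraMap_apply, one_smul, pow_zero, pow_one,
      mul_one, map_one] at h0
    linear_combination h0
  -- β = γ + b/2
  set β : L := γ + b / 2 with hβ
  have h2K : (2 : L) ∈ K := by
    rw [show (2:L) = algebraMap ℚ L 2 from (map_ofNat (algebraMap ℚ L) 2).symm]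
    exact K.algebraMap_mem 2
  have hβsq : β ^ 2 = b ^ 2 / 4 - c := by
    rw [hβ]
    linear_combination hident
  have hβsqK : β ^ 2 ∈ K := by
    rw [hβsq]
    have h4K : (4 : L) ∈ K := by
      have : (4 : L) = 2 * 2 := by norm_num
      rw [this]; exact K.mul_mem h2K h2K
    exact K.sub_mem (K.div_mem (pow_mem hbK 2) h4K) hcK
  have hβnK : β ∉ K := by
    intro h
    apply hγ
    have : γ = β - b / 2 := by rw [hβ]; ring
    rw [this]
    exact K.sub_mem h (K.div_mem hbK h2K)
  have hβne : β ≠ 0 := fun h => hβnK (h ▸ K.zero_mem)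
  have hvK : v ∈ K := IntermediateField.mem_adjoin_simple_self ℚ v
  have hvne : v ≠ 0 := by
    intro h
    exact hv ⟨0, by rw [h, map_zero]⟩
  -- choose k ∈ K, k ≠ 0 with β² k² ∉ ℚ
  obtain ⟨k, hkK, hkne, hknotQ⟩ :
      ∃ k : L, k ∈ K ∧ k ≠ 0 ∧ (β * k) ^ 2 ∉ Set.range (algebraMap ℚ L) := by
    by_cases h1 : β ^ 2 ∈ Set.range (algebraMap ℚ L)
    · obtain ⟨q0, hq0⟩ := h1
      have hq0ne : q0 ≠ 0 := by
        intro h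
        rw [h, map_zero] at hq0
        exact pow_ne_zero 2 hβne hq0.symm
      by_cases h2 : v ^ 2 ∈ Set.range (algebraMap ℚ L)
      · obtain ⟨s, hs⟩ := h2
        refine ⟨1 + v, K.add_mem K.one_mem hvK, ?_, ?_⟩
        · intro h
          apply hv
          refine ⟨-1, ?_⟩
          have : v = -1 := by linear_combination h
          rw [this]; simp
        · rintro ⟨t, ht⟩
          apply hv
          refine ⟨(t - q0 * (1 + s)) / (2 * q0), ?_⟩
          have key : algebraMap ℚ L t = algebraMap ℚ L q0 * (1 + 2 * v + v ^ 2) := by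
            rw [ht, mul_pow, ← hq0]; ring
          rw [← hs] at key
          have h2q0 : algebraMap ℚ L (2 * q0) ≠ 0 := by simp [hq0ne]
          rw [map_div₀, div_eq_iff h2q0]
          simp only [map_sub, map_mul, map_add, map_one, map_ofNat] at key ⊢
          linear_combination key
      · refine ⟨v, hvK, hvne, ?_⟩
        rintro ⟨t, ht⟩
        apply h2
        refine ⟨t / q0, ?_⟩
        have hq0' : algebraMap ℚ L q0 ≠ 0 := by simp [hq0ne]
        rw [map_div₀, ht, mul_pow, ← hq0, mul_comm, mul_div_assoc, div_self hq0', mul_one]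
    · exact ⟨1, K.one_mem, one_ne_zero, by simpa using h1⟩
  set α : L := β * k with hα
  have hαnK : α ∉ K := by
    intro h
    apply hβnK
    have : β = α / k := by rw [hα]; field_simp
    rw [this]
    exact K.div_mem h hkK
  have hα2K : α ^ 2 ∈ K := by
    rw [hα, mul_pow]
    exact K.mul_mem hβsqK (pow_mem hkK 2)
  obtain ⟨u, w, hrepr⟩ := repr_mem L v (α ^ 2) hdeg2 hα2K
  have hune : u ≠ 0 := by
    intro h
    apply hknotQ
    rw [hrepr, h, zero_smul, zero_add]
    exact ⟨w, rfl⟩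
  -- E = adjoin ℚ {α} is everything
  set E := IntermediateField.adjoin ℚ {α} with hE
  have hαE : α ∈ E := IntermediateField.mem_adjoin_simple_self ℚ α
  have hvE : v ∈ E := by
    have : v = u⁻¹ • (α ^ 2 - algebraMap ℚ L w) := by
      rw [hrepr]
      rw [add_sub_cancel_right, smul_smul, inv_mul_cancel₀ hune, one_smul]
    rw [this]
    exact E.smul_mem (E.sub_mem (pow_mem hαE 2) (E.algebraMap_mem w))
  have hKE : K ≤ E := by
    rw [hK]
    exact IntermediateField.adjoin_simple_le_iff.mpr hvE
  have hEdvd : finrank ℚ ↥E ∣ 4 := by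
    have h2 : finrank ℚ ↥E * finrank ↥E L = finrank ℚ L := finrank_mul_finrank ℚ ↥E L
    exact ⟨finrank ↥E L, by rw [← hdeg, ← h2]⟩
  have hEgt : ¬ (finrank ℚ ↥E ≤ 2) := by
    intro hle
    have : K = E := IntermediateField.eq_of_le_of_finrank_le hKE (by omega)
    exact hαnK (this ▸ hαE)
  have hE4 : finrank ℚ ↥E = 4 := by
    have hle4 : finrank ℚ ↥E ≤ 4 := Nat.le_of_dvd (by norm_num) hEdvd
    have h34 : finrank ℚ ↥E = 3 ∨ finrank ℚ ↥E = 4 := by omega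
    rcases h34 with h3 | h4
    · rw [h3] at hEdvd; norm_num at hEdvd
    · exact h4
  have hEtop : E = ⊤ := by
    apply IntermediateField.eq_of_le_of_finrank_eq le_top
    rw [hE4, IntermediateField.finrank_top', hdeg]
  -- f = C u⁻¹ * (X² - C w)
  refine ⟨α, hEtop, Polynomial.C u⁻¹ * (Polynomial.X ^ 2 - Polynomial.C w), ?_, ?_⟩
  · rw [Polynomial.natDegree_C_mul (inv_ne_zero hune), Polynomial.natDegree_X_pow_sub_C]
  · rw [map_mul, map_sub, Polynomial.aeval_C, map_pow, Polynomial.aeval_X, Polynomial.aeval_C]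
    rw [hrepr, Algebra.smul_def]
    rw [add_sub_cancel_right, ← mul_assoc, ← map_mul, inv_mul_cancel₀ hune, map_one, one_mul]

/-- If `L/ℚ` is Galois of degree `4` and `v ∈ L` is irrational, then there is a primitive
element `α` of `L` and a polynomial `f ∈ ℚ[x]` of degree `[L : ℚ(v)]` with `v = f(α)`;
in particular `min deg_L(v) = [L : ℚ(v)]`. -/

theorem stmt_1 (L : Type*) [Field L] [NumberField L] [IsGalois ℚ L]
    (hdeg : Module.finrank ℚ L = 4) (v : L)
    (hv : v ∉ Set.range (algebraMap ℚ L)) :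
    (∃ α : L, IntermediateField.adjoin ℚ {α} = ⊤ ∧
      ∃ f : Polynomial ℚ,
        f.natDegree = Module.finrank (IntermediateField.adjoin ℚ {v}) L ∧
        Polynomial.aeval α f = v) ∧
    minDegree L v = Module.finrank (IntermediateField.adjoin ℚ {v}) L := by
  set K := IntermediateField.adjoin ℚ {v} with hK
  set m := finrank ↥K L with hmdef
  have h2 : finrank ℚ ↥K * m = finrank ℚ L := finrank_mul_finrank ℚ ↥K L
  rw [hdeg] at h2
  have hKne1 : finrank ℚ ↥K ≠ 1 := by
    intro h1
    rw [hK, IntermediateField.finrank_adjoin_simple_eq_one_iff] at h1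
    rw [IntermediateField.mem_bot] at h1
    exact hv h1
  have hKpos : 0 < finrank ℚ ↥K := finrank_pos
  have hmpos : 0 < m := finrank_pos
  have hmle : m ≤ 2 := by
    by_contra h
    push_neg at h
    have : 2 * m ≤ finrank ℚ ↥K * m := Nat.mul_le_mul_right m (by omega)
    omega
  have hex : ∃ α : L, IntermediateField.adjoin ℚ {α} = ⊤ ∧
      ∃ f : Polynomial ℚ, f.natDegree = m ∧ Polynomial.aeval α f = v := by
    rcases (show m = 1 ∨ m = 2 by omega) with hm1 | hm2
    · have htop : K = ⊤ := by
        apply IntermediateField.eq_of_le_of_finrank_le' le_top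
        rw [← hmdef, hm1, IntermediateField.finrank_top]
      exact ⟨v, htop, Polynomial.X, by rw [Polynomial.natDegree_X, hm1], Polynomial.aeval_X v⟩
    · obtain ⟨α, hα, f, hf1, hf2⟩ := exists_primitive L hdeg v hv (by rw [← hK, ← hmdef, hm2])
      exact ⟨α, hα, f, by rw [hf1, hm2], hf2⟩
  refine ⟨hex, ?_⟩
  have hmem : m ∈ {d : ℕ | ∃ α : L, IntermediateField.adjoin ℚ {α} = ⊤ ∧
      ∃ f : Polynomial ℚ, f.natDegree = d ∧ Polynomial.aeval α f = v} := hex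
  apply le_antisymm
  · exact Nat.sInf_le hmem
  · apply le_csInf ⟨m, hmem⟩
    rintro d ⟨α, hα, f, hf1, hf2⟩
    rw [← hf1]
    exact lower_bound L v hv α hα f hf2
end

section
/- Let L = ℚ(√A, √B, √C) be a triquadratic number field and let v ∈ L be an element with [L : ℚ(v)] = 4. Then there exists a primitive element α of L such that deg_α(v) = 4; in particular min deg_L(v) = [L : ℚ(v)] = 4. -/
/-- `L = ℚ(√A, √B, √C)` is a triquadratic number field: `A, B, C, ABC` are distinct
square-free integers, none equal to `0` or `1`, `u, v, w ∈ L` are square roots of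
`A, B, C` generating `L` over `ℚ`, and `[L : ℚ] = 8`. -/
structure IsTriquadratic (A B C : ℤ) (L : Type*) [Field L] [Algebra ℚ L]
    (u v w : L) : Prop where
  sqfA : Squarefree A
  sqfB : Squarefree B
  sqfC : Squarefree C
  sqfABC : Squarefree (A * B * C)
  A_ne_B : A ≠ B
  A_ne_C : A ≠ C
  B_ne_C : B ≠ C
  ABC_ne_A : A * B * C ≠ A
  ABC_ne_B : A * B * C ≠ B
  ABC_ne_C : A * B * C ≠ C
  A_ne_zero : A ≠ 0
  B_ne_zero : B ≠ 0
  C_ne_zero : C ≠ 0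
  A_ne_one : A ≠ 1
  B_ne_one : B ≠ 1
  C_ne_one : C ≠ 1
  ABC_ne_one : A * B * C ≠ 1
  hu : u ^ 2 = algebraMap ℚ L (A : ℚ)
  hv : v ^ 2 = algebraMap ℚ L (B : ℚ)
  hw : w ^ 2 = algebraMap ℚ L (C : ℚ)
  gen : IntermediateField.adjoin ℚ {u, v, w} = ⊤
  deg : Module.finrank ℚ L = 8

open IntermediateField Polynomial Module

private lemma quad_step {L : Type*} [Field L] [Algebra ℚ L] [FiniteDimensional ℚ L]
    (S : Set L) (z : L) (c : ℚ) (hz : z ^ 2 = algebraMap ℚ L c) :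
    finrank ℚ (adjoin ℚ (S ∪ {z})) ≤ 2 * finrank ℚ (adjoin ℚ S) ∧
      (z ∉ adjoin ℚ S → finrank ℚ (adjoin ℚ (S ∪ {z})) = 2 * finrank ℚ (adjoin ℚ S)) := by
  set E := adjoin ℚ S with hE
  haveI : FiniteDimensional E L := FiniteDimensional.right ℚ E L
  have hzint : IsIntegral E z := IsIntegral.of_finite E z
  have hdvd : minpoly E z ∣ (X ^ 2 - C (algebraMap ℚ E c)) := minpoly.dvd E z (by
    rw [map_sub, map_pow, aeval_X, aeval_C, ← IsScalarTower.algebraMap_apply, ← hz, sub_self])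
  have hne2 : (X ^ 2 - C (algebraMap ℚ E c) : Polynomial E) ≠ 0 :=
    X_pow_sub_C_ne_zero (by norm_num) _
  have hmp : (minpoly E z).natDegree ≤ 2 := by
    have := natDegree_le_of_dvd hdvd hne2
    rwa [natDegree_X_pow_sub_C] at this
  have hrel : finrank ℚ (adjoin ℚ (S ∪ {z})) = finrank ℚ E * finrank E (adjoin E {z}) := by
    rw [← adjoin_adjoin_left ℚ S {z}]
    exact (Module.finrank_mul_finrank ℚ E (adjoin E {z})).symm
  have hfr : finrank E (adjoin E {z}) = (minpoly E z).natDegree :=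
    IntermediateField.adjoin.finrank hzint
  constructor
  · rw [hrel, hfr, mul_comm]
    exact Nat.mul_le_mul_right _ hmp
  · intro hzE
    have h1 : (minpoly E z).natDegree ≠ 1 := by
      intro h1
      rw [minpoly.natDegree_eq_one_iff] at h1
      obtain ⟨y, hy⟩ := h1
      exact hzE (hy ▸ y.2)
    have h0 : 0 < (minpoly E z).natDegree := minpoly.natDegree_pos hzint
    rw [hrel, hfr, mul_comm]
    congr 1
    omega

set_option maxHeartbeats 3200000 in
private
theorem key_construction {L : Type*} [Field L] [Algebra ℚ L]
    (t p q : L) (d P Q : ℚ)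
    (ht2 : t ^ 2 = algebraMap ℚ L d)
    (hp2 : p ^ 2 = algebraMap ℚ L P)
    (hq2 : q ^ 2 = algebraMap ℚ L Q)
    (htr : ∀ r : ℚ, t ≠ algebraMap ℚ L r)
    (hP : P ≠ 0) (hQ : Q ≠ 0) (hPQ : P * Q ≠ d) :
    ∃ α : L, (∃ f : Polynomial ℚ, f.natDegree = 4 ∧ Polynomial.aeval α f = t) ∧
      t ∈ adjoin ℚ {α} ∧ p ∈ adjoin ℚ {α} ∧ q ∈ adjoin ℚ {α} := by
  have hinj : Function.Injective (algebraMap ℚ L) := (algebraMap ℚ L).injective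
  have hmapne : ∀ r : ℚ, r ≠ 0 → algebraMap ℚ L r ≠ 0 := fun r hr h =>
    hr (hinj (by rw [h, map_zero]))
  obtain ⟨s, hs0, hs1⟩ : ∃ s : ℚ, s ≠ 0 ∧ 1 - s ^ 2 * P * Q ≠ 0 := by
    by_cases h : P * Q = 1
    · refine ⟨2, by norm_num, ?_⟩
      rw [mul_assoc, h]; norm_num
    · exact ⟨1, one_ne_zero, by rw [one_pow, one_mul]; exact sub_ne_zero.mpr (Ne.symm h)⟩
  have hD0 : (Q * (1 - s ^ 2 * P * Q) * (P * Q - d)) ≠ 0 := mul_ne_zero (mul_ne_zero hQ hs1) (sub_ne_zero.mpr hPQ)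
  have hD1 : (4 * s * P * Q ^ 2) ≠ 0 :=
    mul_ne_zero (mul_ne_zero (mul_ne_zero (by norm_num) hs0) hP) (pow_ne_zero 2 hQ)
  have hCr : (2 * ((Q * (1 - s ^ 2 * P * Q) * (P * Q - d)) * (4 * s * P * Q ^ 2))) ≠ 0 := mul_ne_zero (by norm_num) (mul_ne_zero hD0 hD1)
  have hQL : algebraMap ℚ L Q ≠ 0 := hmapne _ hQ
  have hsL : algebraMap ℚ L s ≠ 0 := hmapne _ hs0
  have hD1L : algebraMap ℚ L (4 * s * P * Q ^ 2) ≠ 0 := hmapne _ hD1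
  have h2L : (2 : L) ≠ 0 := by
    have h' := hmapne 2 (by norm_num); rwa [map_ofNat] at h'
  have hlam : ((algebraMap ℚ L Q) * (1 + (algebraMap ℚ L s) * t)) ≠ 0 := by
    refine mul_ne_zero hQL fun h => htr (-(1/s)) (mul_left_cancel₀ hsL ?_)
    rw [← map_mul, show s * -(1/s) = -1 by field_simp, map_neg, map_one]
    linear_combination h
  have hmu : ((algebraMap ℚ L (s * P * Q)) - t) ≠ 0 := fun h => htr (s * P * Q) (by linear_combination -h)
  have hW : ((algebraMap ℚ L (Q * (1 - s ^ 2 * P * Q) * (P * Q - d))) + (algebraMap ℚ L (4 * s * P * Q ^ 2)) * t) ≠ 0 := by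
    intro h
    refine htr (-((Q * (1 - s ^ 2 * P * Q) * (P * Q - d)) / (4 * s * P * Q ^ 2))) (mul_left_cancel₀ hD1L ?_)
    rw [← map_mul, show (4 * s * P * Q ^ 2) * -((Q * (1 - s ^ 2 * P * Q) * (P * Q - d)) / (4 * s * P * Q ^ 2)) = -(Q * (1 - s ^ 2 * P * Q) * (P * Q - d)) from by field_simp, map_neg]
    linear_combination h
  have E1 : t * (algebraMap ℚ L (2 * ((Q * (1 - s ^ 2 * P * Q) * (P * Q - d)) * (4 * s * P * Q ^ 2)))) = (2 * (algebraMap ℚ L (P * Q ^ 2 * (1 + s ^ 2 * d) + (s ^ 2 * P ^ 2 * Q ^ 3 + d * Q))) * ((algebraMap ℚ L Q) * (1 + (algebraMap ℚ L s) * t) * p + ((algebraMap ℚ L (s * P * Q)) - t) * q) ^ 2 - ((algebraMap ℚ L Q) * (1 + (algebraMap ℚ L s) * t) * p + ((algebraMap ℚ L (s * P * Q)) - t) * q) ^ 4 - (algebraMap ℚ L ((Q * (1 - s ^ 2 * P * Q) * (P * Q - d)) ^ 2 + d * (4 * s * P * Q ^ 2) ^ 2))) := by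
    simp only [map_ofNat, map_mul, map_add, map_sub, map_pow, map_one, map_neg]
    linear_combination ((6 : L) * (algebraMap ℚ L d) * (algebraMap ℚ L P) * (algebraMap ℚ L Q)^3 * (algebraMap ℚ L s)^2 + (-2 : L) * q^2 * (algebraMap ℚ L P) * (algebraMap ℚ L Q)^2 + (-2 : L) * q^2 * (algebraMap ℚ L P)^2 * (algebraMap ℚ L Q)^3 * (algebraMap ℚ L s)^2 + (-1 : L) * q^2 * (algebraMap ℚ L d) * (algebraMap ℚ L Q) + (-2 : L) * q^2 * (algebraMap ℚ L d) * (algebraMap ℚ L P) * (algebraMap ℚ L Q)^2 * (algebraMap ℚ L s)^2 + (6 : L) * q^4 * (algebraMap ℚ L P)^2 * (algebraMap ℚ L Q)^2 * (algebraMap ℚ L s)^2 + (4 : L) * p * q * (algebraMap ℚ L P) * (algebraMap ℚ L Q)^3 * (algebraMap ℚ L s) + (4 : L) * p * q * (algebraMap ℚ L P)^2 * (algebraMap ℚ L Q)^4 * (algebraMap ℚ L s)^3 + (12 : L) * p * q^3 * (algebraMap ℚ L P) * (algebraMap ℚ L Q)^2 * (algebraMap ℚ L s) + (-12 : L) * p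 * q^3 * (algebraMap ℚ L P)^2 * (algebraMap ℚ L Q)^3 * (algebraMap ℚ L s)^3 + (-2 : L) * p^2 * (algebraMap ℚ L P) * (algebraMap ℚ L Q)^4 * (algebraMap ℚ L s)^2 + (-2 : L) * p^2 * (algebraMap ℚ L P)^2 * (algebraMap ℚ L Q)^5 * (algebraMap ℚ L s)^4 + (-2 : L) * p^2 * (algebraMap ℚ L d) * (algebraMap ℚ L Q)^3 * (algebraMap ℚ L s)^2 + (-1 : L) * p^2 * (algebraMap ℚ L d) * (algebraMap ℚ L P) * (algebraMap ℚ L Q)^4 * (algebraMap ℚ L s)^4 + (6 : L) * p^2 * q^2 * (algebraMap ℚ L Q)^2 + (-24 : L) * p^2 * q^2 * (algebraMap ℚ L P) * (algebraMap ℚ L Q)^3 * (algebraMap ℚ L s)^2 + (6 : L) * p^2 * q^2 * (algebraMap ℚ L P)^2 * (algebraMap ℚ L Q)^4 * (algebraMap ℚ L s)^4 + (-12 : L) * p^3 * q * (algebraMap ℚ L Q)^3 * (algebraMap ℚ L s) + (12 : L) * p^3 * q * (algebraMap ℚ L P) * (algebraMap ℚ L Q)^4 * (algebraMap ℚ L s)^3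 + (6 : L) * p^4 * (algebraMap ℚ L Q)^4 * (algebraMap ℚ L s)^2 + (-4 : L) * t * q^4 * (algebraMap ℚ L P) * (algebraMap ℚ L Q) * (algebraMap ℚ L s) + (-4 : L) * t * p * q^3 * (algebraMap ℚ L Q) + (12 : L) * t * p * q^3 * (algebraMap ℚ L P) * (algebraMap ℚ L Q)^2 * (algebraMap ℚ L s)^2 + (12 : L) * t * p^2 * q^2 * (algebraMap ℚ L Q)^2 * (algebraMap ℚ L s) + (-12 : L) * t * p^2 * q^2 * (algebraMap ℚ L P) * (algebraMap ℚ L Q)^3 * (algebraMap ℚ L s)^3 + (-12 : L) * t * p^3 * q * (algebraMap ℚ L Q)^3 * (algebraMap ℚ L s)^2 + (4 : L) * t * p^3 * q * (algebraMap ℚ L P) * (algebraMap ℚ L Q)^4 * (algebraMap ℚ L s)^4 + (4 : L) * t * p^4 * (algebraMap ℚ L Q)^4 * (algebraMap ℚ L s)^3 + (1 : L) * t^2 * q^4 + (-4 : L) * t^2 * p * q^3 * (algebraMap ℚ L Q) * (algebraMap ℚ L s) + (6 : L) * t^2 * p^2 * q^2 * (algebraMap ℚ L Q)^2 * (algebraMap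 ℚ L s)^2 + (-4 : L) * t^2 * p^3 * q * (algebraMap ℚ L Q)^3 * (algebraMap ℚ L s)^3 + (1 : L) * t^2 * p^4 * (algebraMap ℚ L Q)^4 * (algebraMap ℚ L s)^4) * ht2 + ((-1 : L) * (algebraMap ℚ L P) * (algebraMap ℚ L Q)^4 + (-2 : L) * (algebraMap ℚ L P)^2 * (algebraMap ℚ L Q)^5 * (algebraMap ℚ L s)^2 + (-2 : L) * (algebraMap ℚ L d) * (algebraMap ℚ L Q)^3 + (2 : L) * (algebraMap ℚ L d) * (algebraMap ℚ L P) * (algebraMap ℚ L Q)^4 * (algebraMap ℚ L s)^2 + (-2 : L) * (algebraMap ℚ L d) * (algebraMap ℚ L P)^2 * (algebraMap ℚ L Q)^5 * (algebraMap ℚ L s)^4 + (-2 : L) * (algebraMap ℚ L d)^2 * (algebraMap ℚ L Q)^3 * (algebraMap ℚ L s)^2 + (-1 : L) * (algebraMap ℚ L d)^2 * (algebraMap ℚ L P) * (algebraMap ℚ L Q)^4 * (algebraMap ℚ L s)^4 + (6 : L) * q^2 * (algebraMap ℚ L P)^2 * (algebraMap ℚ L Q)^4 * (algebraMap ℚ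 L s)^2 + (6 : L) * q^2 * (algebraMap ℚ L d) * (algebraMap ℚ L Q)^2 + (-24 : L) * q^2 * (algebraMap ℚ L d) * (algebraMap ℚ L P) * (algebraMap ℚ L Q)^3 * (algebraMap ℚ L s)^2 + (6 : L) * q^2 * (algebraMap ℚ L d) * (algebraMap ℚ L P)^2 * (algebraMap ℚ L Q)^4 * (algebraMap ℚ L s)^4 + (4 : L) * p * q * (algebraMap ℚ L P) * (algebraMap ℚ L Q)^4 * (algebraMap ℚ L s) + (-12 : L) * p * q * (algebraMap ℚ L d) * (algebraMap ℚ L Q)^3 * (algebraMap ℚ L s) + (12 : L) * p * q * (algebraMap ℚ L d) * (algebraMap ℚ L P) * (algebraMap ℚ L Q)^4 * (algebraMap ℚ L s)^3 + (1 : L) * p^2 * (algebraMap ℚ L Q)^4 + (6 : L) * p^2 * (algebraMap ℚ L d) * (algebraMap ℚ L Q)^4 * (algebraMap ℚ L s)^2 + (-4 : L) * t * (algebraMap ℚ L P)^2 * (algebraMap ℚ L Q)^5 * (algebraMap ℚ L s)^3 + (-4 : L) * t * (algebraMap ℚ L d) * (algebraMap ℚ L Q)^3 * (algebraMap ℚ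 L s) + (-12 : L) * t * q^2 * (algebraMap ℚ L P) * (algebraMap ℚ L Q)^3 * (algebraMap ℚ L s) + (12 : L) * t * q^2 * (algebraMap ℚ L P)^2 * (algebraMap ℚ L Q)^4 * (algebraMap ℚ L s)^3 + (12 : L) * t * q^2 * (algebraMap ℚ L d) * (algebraMap ℚ L Q)^2 * (algebraMap ℚ L s) + (-12 : L) * t * q^2 * (algebraMap ℚ L d) * (algebraMap ℚ L P) * (algebraMap ℚ L Q)^3 * (algebraMap ℚ L s)^3 + (-4 : L) * t * p * q * (algebraMap ℚ L Q)^3 + (12 : L) * t * p * q * (algebraMap ℚ L P) * (algebraMap ℚ L Q)^4 * (algebraMap ℚ L s)^2 + (-12 : L) * t * p * q * (algebraMap ℚ L d) * (algebraMap ℚ L Q)^3 * (algebraMap ℚ L s)^2 + (4 : L) * t * p * q * (algebraMap ℚ L d) * (algebraMap ℚ L P) * (algebraMap ℚ L Q)^4 * (algebraMap ℚ L s)^4 + (4 : L) * t * p^2 * (algebraMap ℚ L Q)^4 * (algebraMap ℚ L s) + (4 : L) * t * p^2 * (algebraMap ℚ L d) * (algebraMap ℚ L Q)^4 * (algebraMap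 ℚ L s)^3 + (6 : L) * t^2 * q^2 * (algebraMap ℚ L d) * (algebraMap ℚ L Q)^2 * (algebraMap ℚ L s)^2 + (-4 : L) * t^2 * p * q * (algebraMap ℚ L d) * (algebraMap ℚ L Q)^3 * (algebraMap ℚ L s)^3 + (1 : L) * t^2 * p^2 * (algebraMap ℚ L d) * (algebraMap ℚ L Q)^4 * (algebraMap ℚ L s)^4) * hp2 + ((4 : L) * (algebraMap ℚ L P)^3 * (algebraMap ℚ L Q)^4 * (algebraMap ℚ L s)^2 + (-1 : L) * (algebraMap ℚ L P)^4 * (algebraMap ℚ L Q)^5 * (algebraMap ℚ L s)^4 + (4 : L) * (algebraMap ℚ L d) * (algebraMap ℚ L P) * (algebraMap ℚ L Q)^2 + (-22 : L) * (algebraMap ℚ L d) * (algebraMap ℚ L P)^2 * (algebraMap ℚ L Q)^3 * (algebraMap ℚ L s)^2 + (4 : L) * (algebraMap ℚ L d) * (algebraMap ℚ L P)^3 * (algebraMap ℚ L Q)^4 * (algebraMap ℚ L s)^4 + (-1 : L) * (algebraMap ℚ L d)^2 * (algebraMap ℚ L Q) + (-2 : L) * (algebraMap ℚ L d)^2 *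 (algebraMap ℚ L P) * (algebraMap ℚ L Q)^2 * (algebraMap ℚ L s)^2 + (1 : L) * q^2 * (algebraMap ℚ L P)^4 * (algebraMap ℚ L Q)^4 * (algebraMap ℚ L s)^4 + (6 : L) * q^2 * (algebraMap ℚ L d) * (algebraMap ℚ L P)^2 * (algebraMap ℚ L Q)^2 * (algebraMap ℚ L s)^2 + (4 : L) * p * q * (algebraMap ℚ L P)^3 * (algebraMap ℚ L Q)^4 * (algebraMap ℚ L s)^3 + (12 : L) * p * q * (algebraMap ℚ L d) * (algebraMap ℚ L P) * (algebraMap ℚ L Q)^2 * (algebraMap ℚ L s) + (-12 : L) * p * q * (algebraMap ℚ L d) * (algebraMap ℚ L P)^2 * (algebraMap ℚ L Q)^3 * (algebraMap ℚ L s)^3 + (-8 : L) * t * (algebraMap ℚ L P)^2 * (algebraMap ℚ L Q)^3 * (algebraMap ℚ L s) + (12 : L) * t * (algebraMap ℚ L P)^3 * (algebraMap ℚ L Q)^4 * (algebraMap ℚ L s)^3 + (12 : L) * t * (algebraMap ℚ L d) * (algebraMap ℚ L P) * (algebraMap ℚ L Q)^2 * (algebraMap ℚ L s) + (-8 : L)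 * t * (algebraMap ℚ L d) * (algebraMap ℚ L P)^2 * (algebraMap ℚ L Q)^3 * (algebraMap ℚ L s)^3 + (-4 : L) * t * q^2 * (algebraMap ℚ L P)^3 * (algebraMap ℚ L Q)^3 * (algebraMap ℚ L s)^3 + (-4 : L) * t * q^2 * (algebraMap ℚ L d) * (algebraMap ℚ L P) * (algebraMap ℚ L Q) * (algebraMap ℚ L s) + (-12 : L) * t * p * q * (algebraMap ℚ L P)^2 * (algebraMap ℚ L Q)^3 * (algebraMap ℚ L s)^2 + (4 : L) * t * p * q * (algebraMap ℚ L P)^3 * (algebraMap ℚ L Q)^4 * (algebraMap ℚ L s)^4 + (-4 : L) * t * p * q * (algebraMap ℚ L d) * (algebraMap ℚ L Q) + (12 : L) * t * p * q * (algebraMap ℚ L d) * (algebraMap ℚ L P) * (algebraMap ℚ L Q)^2 * (algebraMap ℚ L s)^2 + (6 : L) * t^2 * (algebraMap ℚ L d) * (algebraMap ℚ L P) * (algebraMap ℚ L Q)^2 * (algebraMap ℚ L s)^2 + (1 : L) * t^2 * q^2 * (algebraMap ℚ L d) + (-4 : L) * t^2 * p * q * (algebraMap ℚ L d) * (algebraMap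 ℚ L Q) * (algebraMap ℚ L s)) * hq2
  have E2 : p * (2 * ((algebraMap ℚ L Q) * (1 + (algebraMap ℚ L s) * t)) * ((algebraMap ℚ L (Q * (1 - s ^ 2 * P * Q) * (P * Q - d))) + (algebraMap ℚ L (4 * s * P * Q ^ 2)) * t)) = (((algebraMap ℚ L (P * Q ^ 2 * (1 + s ^ 2 * d) + (s ^ 2 * P ^ 2 * Q ^ 3 + d * Q))) + 2 * ((algebraMap ℚ L (P * Q ^ 2 * (1 + s ^ 2 * d))) + (algebraMap ℚ L (2 * s * P * Q ^ 2)) * t)) * ((algebraMap ℚ L Q) * (1 + (algebraMap ℚ L s) * t) * p + ((algebraMap ℚ L (s * P * Q)) - t) * q) - ((algebraMap ℚ L Q) * (1 + (algebraMap ℚ L s) * t) * p + ((algebraMap ℚ L (s * P * Q)) - t) * q) ^ 3) := by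
    simp only [map_ofNat, map_mul, map_add, map_sub, map_pow, map_one, map_neg]
    linear_combination ((4 : L) * q * (algebraMap ℚ L P) * (algebraMap ℚ L Q)^2 * (algebraMap ℚ L s) + (3 : L) * q^3 * (algebraMap ℚ L P) * (algebraMap ℚ L Q) * (algebraMap ℚ L s) + (4 : L) * p * (algebraMap ℚ L P) * (algebraMap ℚ L Q)^3 * (algebraMap ℚ L s)^2 + (3 : L) * p * q^2 * (algebraMap ℚ L Q) + (-6 : L) * p * q^2 * (algebraMap ℚ L P) * (algebraMap ℚ L Q)^2 * (algebraMap ℚ L s)^2 + (-6 : L) * p^2 * q * (algebraMap ℚ L Q)^2 * (algebraMap ℚ L s) + (3 : L) * p^2 * q * (algebraMap ℚ L P) * (algebraMap ℚ L Q)^3 * (algebraMap ℚ L s)^3 + (3 : L) * p^3 * (algebraMap ℚ L Q)^3 * (algebraMap ℚ L s)^2 + (-1 : L) * t * q^3 + (3 : L) * t * p * q^2 * (algebraMap ℚ L Q) * (algebraMap ℚ L s) + (-3 : L) * t * p^2 * q * (algebraMap ℚ L Q)^2 * (algebraMap ℚ L s)^2 + (1 : L) * t * p^3 * (algebraMap ℚ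 L Q)^3 * (algebraMap ℚ L s)^3) * ht2 + ((3 : L) * q * (algebraMap ℚ L P) * (algebraMap ℚ L Q)^3 * (algebraMap ℚ L s) + (-6 : L) * q * (algebraMap ℚ L d) * (algebraMap ℚ L Q)^2 * (algebraMap ℚ L s) + (3 : L) * q * (algebraMap ℚ L d) * (algebraMap ℚ L P) * (algebraMap ℚ L Q)^3 * (algebraMap ℚ L s)^3 + (1 : L) * p * (algebraMap ℚ L Q)^3 + (3 : L) * p * (algebraMap ℚ L d) * (algebraMap ℚ L Q)^3 * (algebraMap ℚ L s)^2 + (-3 : L) * t * q * (algebraMap ℚ L Q)^2 + (6 : L) * t * q * (algebraMap ℚ L P) * (algebraMap ℚ L Q)^3 * (algebraMap ℚ L s)^2 + (-3 : L) * t * q * (algebraMap ℚ L d) * (algebraMap ℚ L Q)^2 * (algebraMap ℚ L s)^2 + (3 : L) * t * p * (algebraMap ℚ L Q)^3 * (algebraMap ℚ L s) + (1 : L) * t * p * (algebraMap ℚ L d) * (algebraMap ℚ L Q)^3 * (algebraMap ℚ L s)^3) * hp2 + ((1 : L) * q * (algebraMap ℚ L P)^3 * (algebraMap ℚ L Q)^3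 * (algebraMap ℚ L s)^3 + (3 : L) * q * (algebraMap ℚ L d) * (algebraMap ℚ L P) * (algebraMap ℚ L Q) * (algebraMap ℚ L s) + (3 : L) * p * (algebraMap ℚ L P)^2 * (algebraMap ℚ L Q)^3 * (algebraMap ℚ L s)^2 + (3 : L) * p * (algebraMap ℚ L d) * (algebraMap ℚ L Q) + (-6 : L) * p * (algebraMap ℚ L d) * (algebraMap ℚ L P) * (algebraMap ℚ L Q)^2 * (algebraMap ℚ L s)^2 + (-3 : L) * t * q * (algebraMap ℚ L P)^2 * (algebraMap ℚ L Q)^2 * (algebraMap ℚ L s)^2 + (-1 : L) * t * q * (algebraMap ℚ L d) + (-6 : L) * t * p * (algebraMap ℚ L P) * (algebraMap ℚ L Q)^2 * (algebraMap ℚ L s) + (3 : L) * t * p * (algebraMap ℚ L P)^2 * (algebraMap ℚ L Q)^3 * (algebraMap ℚ L s)^3 + (3 : L) * t * p * (algebraMap ℚ L d) * (algebraMap ℚ L Q) * (algebraMap ℚ L s)) * hq2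
  have E3 : q * (2 * ((algebraMap ℚ L (s * P * Q)) - t) * ((algebraMap ℚ L (Q * (1 - s ^ 2 * P * Q) * (P * Q - d))) + (algebraMap ℚ L (4 * s * P * Q ^ 2)) * t)) = (((algebraMap ℚ L Q) * (1 + (algebraMap ℚ L s) * t) * p + ((algebraMap ℚ L (s * P * Q)) - t) * q) ^ 3 - ((algebraMap ℚ L (P * Q ^ 2 * (1 + s ^ 2 * d) + (s ^ 2 * P ^ 2 * Q ^ 3 + d * Q))) + 2 * ((algebraMap ℚ L (s ^ 2 * P ^ 2 * Q ^ 3 + d * Q)) + (algebraMap ℚ L (-(2 * s * P * Q ^ 2))) * t)) * ((algebraMap ℚ L Q) * (1 + (algebraMap ℚ L s) * t) * p + ((algebraMap ℚ L (s * P * Q)) - t) * q)) := by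
    simp only [map_ofNat, map_mul, map_add, map_sub, map_pow, map_one, map_neg]
    linear_combination ((-4 : L) * q * (algebraMap ℚ L P) * (algebraMap ℚ L Q)^2 * (algebraMap ℚ L s) + (-3 : L) * q^3 * (algebraMap ℚ L P) * (algebraMap ℚ L Q) * (algebraMap ℚ L s) + (-4 : L) * p * (algebraMap ℚ L P) * (algebraMap ℚ L Q)^3 * (algebraMap ℚ L s)^2 + (-3 : L) * p * q^2 * (algebraMap ℚ L Q) + (6 : L) * p * q^2 * (algebraMap ℚ L P) * (algebraMap ℚ L Q)^2 * (algebraMap ℚ L s)^2 + (6 : L) * p^2 * q * (algebraMap ℚ L Q)^2 * (algebraMap ℚ L s) + (-3 : L) * p^2 * q * (algebraMap ℚ L P) * (algebraMap ℚ L Q)^3 * (algebraMap ℚ L s)^3 + (-3 : L) * p^3 * (algebraMap ℚ L Q)^3 * (algebraMap ℚ L s)^2 + (1 : L) * t * q^3 + (-3 : L) * t * p * q^2 * (algebraMap ℚ L Q) * (algebraMap ℚ L s) + (3 : L) * t * p^2 * q * (algebraMap ℚ L Q)^2 * (algebraMap ℚ L s)^2 + (-1 : L) * t * p^3 * (algebraMap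 ℚ L Q)^3 * (algebraMap ℚ L s)^3) * ht2 + ((-3 : L) * q * (algebraMap ℚ L P) * (algebraMap ℚ L Q)^3 * (algebraMap ℚ L s) + (6 : L) * q * (algebraMap ℚ L d) * (algebraMap ℚ L Q)^2 * (algebraMap ℚ L s) + (-3 : L) * q * (algebraMap ℚ L d) * (algebraMap ℚ L P) * (algebraMap ℚ L Q)^3 * (algebraMap ℚ L s)^3 + (-1 : L) * p * (algebraMap ℚ L Q)^3 + (-3 : L) * p * (algebraMap ℚ L d) * (algebraMap ℚ L Q)^3 * (algebraMap ℚ L s)^2 + (3 : L) * t * q * (algebraMap ℚ L Q)^2 + (-6 : L) * t * q * (algebraMap ℚ L P) * (algebraMap ℚ L Q)^3 * (algebraMap ℚ L s)^2 + (3 : L) * t * q * (algebraMap ℚ L d) * (algebraMap ℚ L Q)^2 * (algebraMap ℚ L s)^2 + (-3 : L) * t * p * (algebraMap ℚ L Q)^3 * (algebraMap ℚ L s) + (-1 : L) * t * p * (algebraMap ℚ L d) * (algebraMap ℚ L Q)^3 * (algebraMap ℚ L s)^3) * hp2 + ((-1 : L) * q * (algebraMap ℚ L P)^3 * (algebraMap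 ℚ L Q)^3 * (algebraMap ℚ L s)^3 + (-3 : L) * q * (algebraMap ℚ L d) * (algebraMap ℚ L P) * (algebraMap ℚ L Q) * (algebraMap ℚ L s) + (-3 : L) * p * (algebraMap ℚ L P)^2 * (algebraMap ℚ L Q)^3 * (algebraMap ℚ L s)^2 + (-3 : L) * p * (algebraMap ℚ L d) * (algebraMap ℚ L Q) + (6 : L) * p * (algebraMap ℚ L d) * (algebraMap ℚ L P) * (algebraMap ℚ L Q)^2 * (algebraMap ℚ L s)^2 + (3 : L) * t * q * (algebraMap ℚ L P)^2 * (algebraMap ℚ L Q)^2 * (algebraMap ℚ L s)^2 + (1 : L) * t * q * (algebraMap ℚ L d) + (6 : L) * t * p * (algebraMap ℚ L P) * (algebraMap ℚ L Q)^2 * (algebraMap ℚ L s) + (-3 : L) * t * p * (algebraMap ℚ L P)^2 * (algebraMap ℚ L Q)^3 * (algebraMap ℚ L s)^3 + (-3 : L) * t * p * (algebraMap ℚ L d) * (algebraMap ℚ L Q) * (algebraMap ℚ L s)) * hq2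
  have hteq : t = (2 * (algebraMap ℚ L (P * Q ^ 2 * (1 + s ^ 2 * d) + (s ^ 2 * P ^ 2 * Q ^ 3 + d * Q))) * ((algebraMap ℚ L Q) * (1 + (algebraMap ℚ L s) * t) * p + ((algebraMap ℚ L (s * P * Q)) - t) * q) ^ 2 - ((algebraMap ℚ L Q) * (1 + (algebraMap ℚ L s) * t) * p + ((algebraMap ℚ L (s * P * Q)) - t) * q) ^ 4 - (algebraMap ℚ L ((Q * (1 - s ^ 2 * P * Q) * (P * Q - d)) ^ 2 + d * (4 * s * P * Q ^ 2) ^ 2))) * (algebraMap ℚ L (2 * ((Q * (1 - s ^ 2 * P * Q) * (P * Q - d)) * (4 * s * P * Q ^ 2))))⁻¹ := by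
    rw [eq_mul_inv_iff_mul_eq₀ (hmapne _ hCr)]; exact E1
  have hpeq : p = (((algebraMap ℚ L (P * Q ^ 2 * (1 + s ^ 2 * d) + (s ^ 2 * P ^ 2 * Q ^ 3 + d * Q))) + 2 * ((algebraMap ℚ L (P * Q ^ 2 * (1 + s ^ 2 * d))) + (algebraMap ℚ L (2 * s * P * Q ^ 2)) * t)) * ((algebraMap ℚ L Q) * (1 + (algebraMap ℚ L s) * t) * p + ((algebraMap ℚ L (s * P * Q)) - t) * q) - ((algebraMap ℚ L Q) * (1 + (algebraMap ℚ L s) * t) * p + ((algebraMap ℚ L (s * P * Q)) - t) * q) ^ 3) * (2 * ((algebraMap ℚ L Q) * (1 + (algebraMap ℚ L s) * t)) * ((algebraMap ℚ L (Q * (1 - s ^ 2 * P * Q) * (P * Q - d))) + (algebraMap ℚ L (4 * s * P * Q ^ 2)) * t))⁻¹ := by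
    rw [eq_mul_inv_iff_mul_eq₀ (mul_ne_zero (mul_ne_zero h2L hlam) hW)]; exact E2
  have hqeq : q = (((algebraMap ℚ L Q) * (1 + (algebraMap ℚ L s) * t) * p + ((algebraMap ℚ L (s * P * Q)) - t) * q) ^ 3 - ((algebraMap ℚ L (P * Q ^ 2 * (1 + s ^ 2 * d) + (s ^ 2 * P ^ 2 * Q ^ 3 + d * Q))) + 2 * ((algebraMap ℚ L (s ^ 2 * P ^ 2 * Q ^ 3 + d * Q)) + (algebraMap ℚ L (-(2 * s * P * Q ^ 2))) * t)) * ((algebraMap ℚ L Q) * (1 + (algebraMap ℚ L s) * t) * p + ((algebraMap ℚ L (s * P * Q)) - t) * q)) * (2 * ((algebraMap ℚ L (s * P * Q)) - t) * ((algebraMap ℚ L (Q * (1 - s ^ 2 * P * Q) * (P * Q - d))) + (algebraMap ℚ L (4 * s * P * Q ^ 2)) * t))⁻¹ := by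
    rw [eq_mul_inv_iff_mul_eq₀ (mul_ne_zero (mul_ne_zero h2L hmu) hW)]; exact E3
  have hAF : ((algebraMap ℚ L Q) * (1 + (algebraMap ℚ L s) * t) * p + ((algebraMap ℚ L (s * P * Q)) - t) * q) ∈ adjoin ℚ {((algebraMap ℚ L Q) * (1 + (algebraMap ℚ L s) * t) * p + ((algebraMap ℚ L (s * P * Q)) - t) * q)} := mem_adjoin_simple_self ℚ _
  have hconst : ∀ r : ℚ, algebraMap ℚ L r ∈ adjoin ℚ {((algebraMap ℚ L Q) * (1 + (algebraMap ℚ L s) * t) * p + ((algebraMap ℚ L (s * P * Q)) - t) * q)} := fun r =>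
    IntermediateField.algebraMap_mem _ r
  have htwo : (2 : L) ∈ adjoin ℚ {((algebraMap ℚ L Q) * (1 + (algebraMap ℚ L s) * t) * p + ((algebraMap ℚ L (s * P * Q)) - t) * q)} := by simpa using hconst 2
  have hone : (1 : L) ∈ adjoin ℚ {((algebraMap ℚ L Q) * (1 + (algebraMap ℚ L s) * t) * p + ((algebraMap ℚ L (s * P * Q)) - t) * q)} := one_mem _
  have htF : t ∈ adjoin ℚ {((algebraMap ℚ L Q) * (1 + (algebraMap ℚ L s) * t) * p + ((algebraMap ℚ L (s * P * Q)) - t) * q)} := by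
    have hm : (2 * (algebraMap ℚ L (P * Q ^ 2 * (1 + s ^ 2 * d) + (s ^ 2 * P ^ 2 * Q ^ 3 + d * Q))) * ((algebraMap ℚ L Q) * (1 + (algebraMap ℚ L s) * t) * p + ((algebraMap ℚ L (s * P * Q)) - t) * q) ^ 2 - ((algebraMap ℚ L Q) * (1 + (algebraMap ℚ L s) * t) * p + ((algebraMap ℚ L (s * P * Q)) - t) * q) ^ 4 - (algebraMap ℚ L ((Q * (1 - s ^ 2 * P * Q) * (P * Q - d)) ^ 2 + d * (4 * s * P * Q ^ 2) ^ 2))) * (algebraMap ℚ L (2 * ((Q * (1 - s ^ 2 * P * Q) * (P * Q - d)) * (4 * s * P * Q ^ 2))))⁻¹ ∈ adjoin ℚ {((algebraMap ℚ L Q) * (1 + (algebraMap ℚ L s) * t) * p + ((algebraMap ℚ L (s * P * Q)) - t) * q)} :=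
      mul_mem (sub_mem (sub_mem (mul_mem (mul_mem htwo (hconst _)) (pow_mem hAF 2))
        (pow_mem hAF 4)) (hconst _)) (inv_mem (hconst _))
    rwa [← hteq] at hm
  have hWJ : ((algebraMap ℚ L (Q * (1 - s ^ 2 * P * Q) * (P * Q - d))) + (algebraMap ℚ L (4 * s * P * Q ^ 2)) * t) ∈ adjoin ℚ {((algebraMap ℚ L Q) * (1 + (algebraMap ℚ L s) * t) * p + ((algebraMap ℚ L (s * P * Q)) - t) * q)} := add_mem (hconst _) (mul_mem (hconst _) htF)
  have hpF : p ∈ adjoin ℚ {((algebraMap ℚ L Q) * (1 + (algebraMap ℚ L s) * t) * p + ((algebraMap ℚ L (s * P * Q)) - t) * q)} := by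
    have hm : (((algebraMap ℚ L (P * Q ^ 2 * (1 + s ^ 2 * d) + (s ^ 2 * P ^ 2 * Q ^ 3 + d * Q))) + 2 * ((algebraMap ℚ L (P * Q ^ 2 * (1 + s ^ 2 * d))) + (algebraMap ℚ L (2 * s * P * Q ^ 2)) * t)) * ((algebraMap ℚ L Q) * (1 + (algebraMap ℚ L s) * t) * p + ((algebraMap ℚ L (s * P * Q)) - t) * q) - ((algebraMap ℚ L Q) * (1 + (algebraMap ℚ L s) * t) * p + ((algebraMap ℚ L (s * P * Q)) - t) * q) ^ 3) * (2 * ((algebraMap ℚ L Q) * (1 + (algebraMap ℚ L s) * t)) * ((algebraMap ℚ L (Q * (1 - s ^ 2 * P * Q) * (P * Q - d))) + (algebraMap ℚ L (4 * s * P * Q ^ 2)) * t))⁻¹ ∈ adjoin ℚ {((algebraMap ℚ L Q) * (1 + (algebraMap ℚ L s) * t) * p + ((algebraMap ℚ L (s * P * Q)) - t) * q)} := by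
      refine mul_mem (sub_mem (mul_mem (add_mem (hconst _) (mul_mem htwo
        (add_mem (hconst _) (mul_mem (hconst _) htF)))) hAF) (pow_mem hAF 3)) (inv_mem ?_)
      exact mul_mem (mul_mem htwo (mul_mem (hconst _)
        (add_mem hone (mul_mem (hconst _) htF)))) hWJ
    rwa [← hpeq] at hm
  have hqF : q ∈ adjoin ℚ {((algebraMap ℚ L Q) * (1 + (algebraMap ℚ L s) * t) * p + ((algebraMap ℚ L (s * P * Q)) - t) * q)} := by
    have hm : (((algebraMap ℚ L Q) * (1 + (algebraMap ℚ L s) * t) * p + ((algebraMap ℚ L (s * P * Q)) - t) * q) ^ 3 - ((algebraMap ℚ L (P * Q ^ 2 * (1 + s ^ 2 * d) + (s ^ 2 * P ^ 2 * Q ^ 3 + d * Q))) + 2 * ((algebraMap ℚ L (s ^ 2 * P ^ 2 * Q ^ 3 + d * Q)) + (algebraMap ℚ L (-(2 * s * P * Q ^ 2))) * t)) * ((algebraMap ℚ L Q) * (1 + (algebraMap ℚ L s) * t) * p + ((algebraMap ℚ L (s * P * Q)) - t) * q)) * (2 * ((algebraMap ℚ L (s * P * Q)) - t) * ((algebraMap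 ℚ L (Q * (1 - s ^ 2 * P * Q) * (P * Q - d))) + (algebraMap ℚ L (4 * s * P * Q ^ 2)) * t))⁻¹ ∈ adjoin ℚ {((algebraMap ℚ L Q) * (1 + (algebraMap ℚ L s) * t) * p + ((algebraMap ℚ L (s * P * Q)) - t) * q)} := by
      refine mul_mem (sub_mem (pow_mem hAF 3) (mul_mem (add_mem (hconst _) (mul_mem htwo
        (add_mem (hconst _) (mul_mem (hconst _) htF)))) hAF)) (inv_mem ?_)
      exact mul_mem (mul_mem htwo (sub_mem (hconst _) htF)) hWJ
    rwa [← hqeq] at hm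
  refine ⟨((algebraMap ℚ L Q) * (1 + (algebraMap ℚ L s) * t) * p + ((algebraMap ℚ L (s * P * Q)) - t) * q), ⟨C (1 / (2 * ((Q * (1 - s ^ 2 * P * Q) * (P * Q - d)) * (4 * s * P * Q ^ 2)))) * (C (2 * (P * Q ^ 2 * (1 + s ^ 2 * d) + (s ^ 2 * P ^ 2 * Q ^ 3 + d * Q))) * X ^ 2 - X ^ 4 - C ((Q * (1 - s ^ 2 * P * Q) * (P * Q - d)) ^ 2 + d * (4 * s * P * Q ^ 2) ^ 2)), ?_, ?_⟩, htF, hpF, hqF⟩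
  · rw [natDegree_C_mul (one_div_ne_zero hCr)]
    compute_degree!
  · conv_rhs => rw [hteq]
    simp only [map_mul, map_sub, map_add, map_pow, aeval_C, aeval_X, map_ofNat, map_div₀,
      map_one, map_neg]
    ring

private lemma glue_construction {L : Type*} [Field L] [Algebra ℚ L] [FiniteDimensional ℚ L]
    (hdim : finrank ℚ L = 8)
    (x y z r : L) (Y Z e dq : ℚ)
    (hgen : adjoin ℚ ({y, z, r} : Set L) = ⊤)
    (hy2 : y ^ 2 = algebraMap ℚ L Y) (hz2 : z ^ 2 = algebraMap ℚ L Z)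
    (hY0 : Y ≠ 0) (hZ0 : Z ≠ 0)
    (ht2 : (x + algebraMap ℚ L e) ^ 2 = algebraMap ℚ L dq)
    (htr : ∀ r' : ℚ, (x + algebraMap ℚ L e) ≠ algebraMap ℚ L r')
    (hr : r ∈ adjoin ℚ ({x} ∪ {y} ∪ {z})) :
    ∃ α : L, adjoin ℚ ({α} : Set L) = ⊤ ∧
      ∃ f : Polynomial ℚ, f.natDegree = 4 ∧ Polynomial.aeval α f = x := by
  have hyM : y ∈ adjoin ℚ ({y} ∪ {z} : Set L) := subset_adjoin _ _ (by simp)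
  have hzM : z ∈ adjoin ℚ ({y} ∪ {z} : Set L) := subset_adjoin _ _ (by simp)
  have hYZ : Y * Z ≠ dq := by
    intro hYZ
    have hsq : (y * z - (x + algebraMap ℚ L e)) * (y * z + (x + algebraMap ℚ L e)) = 0 := by
      have hh : (y * z) ^ 2 = (x + algebraMap ℚ L e) ^ 2 := by
        rw [mul_pow, hy2, hz2, ht2, ← map_mul, hYZ]
      linear_combination hh
    have htM : (x + algebraMap ℚ L e) ∈ adjoin ℚ ({y} ∪ {z} : Set L) := by
      rcases mul_eq_zero.mp hsq with h | h
      · have h2 : y * z = x + algebraMap ℚ L e := by linear_combination h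
        exact h2 ▸ mul_mem hyM hzM
      · have h2 : x + algebraMap ℚ L e = -(y * z) := by linear_combination h
        rw [h2]; exact neg_mem (mul_mem hyM hzM)
    have hxM : x ∈ adjoin ℚ ({y} ∪ {z} : Set L) := by
      have hh := (adjoin ℚ ({y} ∪ {z} : Set L)).sub_mem htM
        ((adjoin ℚ ({y} ∪ {z} : Set L)).algebraMap_mem e)
      simpa using hh
    have hle : adjoin ℚ ({x} ∪ {y} ∪ {z} : Set L) ≤ adjoin ℚ ({y} ∪ {z} : Set L) := by
      rw [adjoin_le_iff]
      rintro a ((ha | ha) | ha) <;> rw [Set.mem_singleton_iff] at ha <;> subst ha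
      · exact hxM
      · exact hyM
      · exact hzM
    have hrM : r ∈ adjoin ℚ ({y} ∪ {z} : Set L) := hle hr
    have htop : adjoin ℚ ({y} ∪ {z} : Set L) = ⊤ := by
      refine le_antisymm le_top ?_
      rw [← hgen, adjoin_le_iff]
      rintro a ha
      simp only [Set.mem_insert_iff, Set.mem_singleton_iff] at ha
      rcases ha with rfl | rfl | rfl
      · exact hyM
      · exact hzM
      · exact hrM
    have h8 : finrank ℚ (adjoin ℚ ({y} ∪ {z} : Set L)) = 8 := by
      rw [htop, IntermediateField.finrank_top']
      exact hdim
    have hb1 := (quad_step (∅ : Set L) y Y hy2).1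
    rw [Set.empty_union, IntermediateField.adjoin_empty, IntermediateField.finrank_bot] at hb1
    have hb2 := (quad_step ({y} : Set L) z Z hz2).1
    omega
  obtain ⟨α, ⟨f, hf4, hft⟩, htα, hyα, hzα⟩ :=
    key_construction (x + algebraMap ℚ L e) y z dq Y Z ht2 hy2 hz2 htr hY0 hZ0 hYZ
  have hxα : x ∈ adjoin ℚ ({α} : Set L) := by
    have hh := (adjoin ℚ ({α} : Set L)).sub_mem htα ((adjoin ℚ ({α} : Set L)).algebraMap_mem e)
    simpa using hh
  have hrα : r ∈ adjoin ℚ ({α} : Set L) := by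
    refine (adjoin_le_iff.mpr ?_ : adjoin ℚ ({x} ∪ {y} ∪ {z} : Set L) ≤ adjoin ℚ ({α} : Set L)) hr
    rintro a ((ha | ha) | ha) <;> rw [Set.mem_singleton_iff] at ha <;> subst ha
    · exact hxα
    · exact hyα
    · exact hzα
  have htopα : adjoin ℚ ({α} : Set L) = ⊤ := by
    refine le_antisymm le_top ?_
    rw [← hgen, adjoin_le_iff]
    rintro a ha
    simp only [Set.mem_insert_iff, Set.mem_singleton_iff] at ha
    rcases ha with rfl | rfl | rfl
    · exact hyα
    · exact hzα
    · exact hrα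
  refine ⟨α, htopα, f - Polynomial.C e, ?_, ?_⟩
  · rw [natDegree_sub_C, hf4]
  · rw [map_sub, aeval_C, hft]
    ring

private lemma lower_bound_s3 {L : Type*} [Field L] [Algebra ℚ L] [FiniteDimensional ℚ L]
    (x : L) (hx4 : Module.finrank (adjoin ℚ ({x} : Set L)) L = 4)
    (hxnb : x ∉ (⊥ : IntermediateField ℚ L)) :
    ∀ k ∈ {d : ℕ | ∃ α : L, adjoin ℚ {α} = ⊤ ∧
      ∃ f : Polynomial ℚ, f.natDegree = d ∧ Polynomial.aeval α f = x}, 4 ≤ k := by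
  rintro k ⟨β, hβ, g, hgdeg, hgx⟩
  haveI : FiniteDimensional (adjoin ℚ ({x} : Set L)) L :=
    FiniteDimensional.right ℚ _ L
  have hk1 : g.natDegree ≠ 0 := by
    intro h0
    obtain ⟨a, ha⟩ := Polynomial.natDegree_eq_zero.mp h0
    refine hxnb ?_
    rw [IntermediateField.mem_bot]
    exact ⟨a, by rw [← hgx, ← ha, aeval_C]⟩
  set K : IntermediateField ℚ L := adjoin ℚ ({x} : Set L) with hK
  have hxK : x ∈ K := mem_adjoin_simple_self ℚ x
  set gK : Polynomial K := g.map (algebraMap ℚ K) - Polynomial.C (⟨x, hxK⟩ : K) with hgK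
  have hmapdeg : (g.map (algebraMap ℚ K)).natDegree = g.natDegree :=
    natDegree_map_eq_of_injective (algebraMap ℚ K).injective g
  have hgKdeg : gK.natDegree = k := by
    rw [hgK, natDegree_sub_C, hmapdeg, hgdeg]
  have hgK0 : gK ≠ 0 := by
    intro h0
    rw [h0, natDegree_zero] at hgKdeg
    rw [hgdeg] at hk1
    omega
  have haev : Polynomial.aeval β gK = 0 := by
    rw [hgK, map_sub, aeval_map_algebraMap, aeval_C, hgx]
    have : algebraMap K L (⟨x, hxK⟩ : K) = x := rfl
    rw [this, sub_self]
  have hβK : adjoin K {β} = ⊤ :=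
    IntermediateField.adjoin_eq_top_of_adjoin_eq_top (F := ℚ) hβ
  have hβint : IsIntegral K β := IsIntegral.of_finite K β
  have hfr : finrank K (adjoin K ({β} : Set L)) = (minpoly K β).natDegree :=
    IntermediateField.adjoin.finrank hβint
  have h4 : (minpoly K β).natDegree = 4 := by
    rw [← hfr, hβK, IntermediateField.finrank_top']
    exact hx4
  have hdegle : (minpoly K β).degree ≤ gK.degree :=
    minpoly.degree_le_of_ne_zero K β hgK0 haev
  have hnatle : (minpoly K β).natDegree ≤ gK.natDegree :=
    natDegree_le_natDegree hdegle
  omega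


/-- If `L = ℚ(√A, √B, √C)` is a triquadratic number field and `x ∈ L` satisfies
`[L : ℚ(x)] = 4`, then there is a primitive element `α` of `L` with `deg_α(x) = 4`;
in particular `min deg_L(x) = [L : ℚ(x)] = 4`. -/
theorem stmt_3 (A B C : ℤ) (L : Type*) [Field L] [Algebra ℚ L] (u v w : L)
    (hL : IsTriquadratic A B C L u v w) (x : L)
    (hx : Module.finrank (IntermediateField.adjoin ℚ {x}) L = 4) :
    (∃ α : L, IntermediateField.adjoin ℚ {α} = ⊤ ∧
      ∃ f : Polynomial ℚ, f.natDegree = 4 ∧ Polynomial.aeval α f = x) ∧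
    minDegree L x = 4 := by
  haveI hFD : FiniteDimensional ℚ L :=
    FiniteDimensional.of_finrank_pos (by rw [hL.deg]; norm_num)
  have hxint : IsIntegral ℚ x := IsIntegral.of_finite ℚ x
  have hK2 : finrank ℚ (adjoin ℚ ({x} : Set L)) = 2 := by
    have hmul := Module.finrank_mul_finrank ℚ (adjoin ℚ ({x} : Set L)) L
    rw [hx, hL.deg] at hmul
    omega
  have hxdeg : (minpoly ℚ x).natDegree = 2 := by
    rw [← IntermediateField.adjoin.finrank hxint]
    exact hK2
  have hmon : (minpoly ℚ x).Monic := minpoly.monic hxint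
  have hmx : x ^ 2 + algebraMap ℚ L ((minpoly ℚ x).coeff 1) * x
      + algebraMap ℚ L ((minpoly ℚ x).coeff 0) = 0 := by
    have h0 : Polynomial.aeval x (minpoly ℚ x) = 0 := minpoly.aeval ℚ x
    rw [Polynomial.aeval_eq_sum_range, hxdeg] at h0
    rw [Finset.sum_range_succ, Finset.sum_range_succ, Finset.sum_range_one] at h0
    have hm2 : (minpoly ℚ x).coeff 2 = 1 := by
      have h := hmon.coeff_natDegree
      rwa [hxdeg] at h
    rw [hm2] at h0
    simp only [Algebra.smul_def, map_one, one_mul, pow_zero, pow_one, mul_one] at h0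
    linear_combination h0
  have hmx' : x ^ 2 + 2 * algebraMap ℚ L ((minpoly ℚ x).coeff 1 / 2) * x
      + algebraMap ℚ L ((minpoly ℚ x).coeff 0) = 0 := by
    have hb2 : (2 : L) * algebraMap ℚ L ((minpoly ℚ x).coeff 1 / 2)
        = algebraMap ℚ L ((minpoly ℚ x).coeff 1) := by
      rw [← map_ofNat (algebraMap ℚ L) 2, ← map_mul]
      congr 1
      ring
    calc x ^ 2 + 2 * algebraMap ℚ L ((minpoly ℚ x).coeff 1 / 2) * x
          + algebraMap ℚ L ((minpoly ℚ x).coeff 0)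
        = x ^ 2 + algebraMap ℚ L ((minpoly ℚ x).coeff 1) * x
          + algebraMap ℚ L ((minpoly ℚ x).coeff 0) := by rw [hb2]
      _ = 0 := hmx
  have ht2 : (x + algebraMap ℚ L ((minpoly ℚ x).coeff 1 / 2)) ^ 2
      = algebraMap ℚ L (((minpoly ℚ x).coeff 1 / 2) ^ 2 - (minpoly ℚ x).coeff 0) := by
    rw [map_sub, map_pow]
    linear_combination hmx'
  have hxnb : x ∉ (⊥ : IntermediateField ℚ L) := by
    intro hb
    have h1 : adjoin ℚ ({x} : Set L) ≤ ⊥ := adjoin_le_iff.mpr (Set.singleton_subset_iff.mpr hb)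
    have h3 : adjoin ℚ ({x} : Set L) = ⊥ := le_antisymm h1 bot_le
    rw [h3, IntermediateField.finrank_bot] at hK2
    omega
  have htr : ∀ r : ℚ, (x + algebraMap ℚ L ((minpoly ℚ x).coeff 1 / 2)) ≠ algebraMap ℚ L r := by
    intro r h
    apply hxnb
    rw [IntermediateField.mem_bot]
    refine ⟨r - (minpoly ℚ x).coeff 1 / 2, ?_⟩
    rw [map_sub]
    linear_combination -h
  have hA0 : ((A : ℚ)) ≠ 0 := Int.cast_ne_zero.mpr hL.A_ne_zero
  have hB0 : ((B : ℚ)) ≠ 0 := Int.cast_ne_zero.mpr hL.B_ne_zero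
  have hC0 : ((C : ℚ)) ≠ 0 := Int.cast_ne_zero.mpr hL.C_ne_zero
  have hEx : ∃ α : L, adjoin ℚ ({α} : Set L) = ⊤ ∧
      ∃ f : Polynomial ℚ, f.natDegree = 4 ∧ Polynomial.aeval α f = x := by
    by_cases hcaseA : u ∈ adjoin ℚ ({x} ∪ {v} ∪ {w} : Set L)
    · refine glue_construction hL.deg x v w u (B : ℚ) (C : ℚ) _ _ ?_ hL.hv hL.hw hB0 hC0
        ht2 htr hcaseA
      have hset : ({v, w, u} : Set L) = {u, v, w} := by
        ext a; simp only [Set.mem_insert_iff, Set.mem_singleton_iff]; tauto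
      rw [hset]; exact hL.gen
    · by_cases hcaseB : w ∈ adjoin ℚ ({x} ∪ {u} ∪ {v} : Set L)
      · exact glue_construction hL.deg x u v w (A : ℚ) (B : ℚ) _ _ hL.gen hL.hu hL.hv hA0 hB0
          ht2 htr hcaseB
      · have hv2 : v ∈ adjoin ℚ ({x} ∪ {u} : Set L) := by
          by_contra hv'
          have hu' : u ∉ adjoin ℚ ({x} : Set L) := by
            intro hu''
            exact hcaseA (IntermediateField.adjoin.mono ℚ _ _
              (by intro a ha; exact Or.inl (Or.inl ha)) hu'')
          have h4 := (quad_step ({x} : Set L) u (A : ℚ) hL.hu).2 hu'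
          rw [hK2] at h4
          have h8 := (quad_step ({x} ∪ {u} : Set L) v (B : ℚ) hL.hv).2 hv'
          rw [h4] at h8
          have htop' : adjoin ℚ (({x} ∪ {u}) ∪ {v} : Set L) = ⊤ := by
            refine IntermediateField.eq_of_le_of_finrank_le le_top ?_
            rw [IntermediateField.finrank_top', hL.deg, h8]
          exact hcaseB (htop' ▸ IntermediateField.mem_top)
        refine glue_construction hL.deg x u w v (A : ℚ) (C : ℚ) _ _ ?_ hL.hu hL.hw hA0 hC0
          ht2 htr ?_
        · have hset : ({u, w, v} : Set L) = {u, v, w} := by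
            ext a; simp only [Set.mem_insert_iff, Set.mem_singleton_iff]; tauto
          rw [hset]; exact hL.gen
        · exact IntermediateField.adjoin.mono ℚ _ _
            (by intro a ha; exact Or.inl ha) hv2
  refine ⟨hEx, ?_⟩
  obtain ⟨α, htop, f, hf4, hfx⟩ := hEx
  have hmem : 4 ∈ {d : ℕ | ∃ α : L, adjoin ℚ {α} = ⊤ ∧
      ∃ f : Polynomial ℚ, f.natDegree = d ∧ Polynomial.aeval α f = x} := ⟨α, htop, f, hf4, hfx⟩
  refine le_antisymm (Nat.sInf_le hmem) (le_csInf ⟨4, hmem⟩ (lower_bound_s3 x hx hxnb))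
end

section
/- Let L = ℚ(√A, √B, √C) be a triquadratic number field, and let u, v, w ∈ L satisfy u² = A, v² = B, w² = C. Set α = v + B·w − C·u·v + u·w (i.e. α = √B + B√C − C√(AB) + √(AC)). Then ℚ(α) = L and there exist rational numbers c₀, c₂, c₄ with c₄ ≠ 0 such that u = c₄·α⁴ + c₂·α² + c₀; in particular deg_α(√A) = 4. -/
section AuxLemmas

private lemma key1' {R : Type*} [CommRing R] (a b c u v w : R) (hu : u^2 = a) (hv : v^2 = b)
    (hw : w^2 = c) :
    2*(2*(b-a*c))*(2*(1-b*c))*b*c*u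
      = (v+b*w-c*(u*v)+u*w)^4 - 2*(b+a*b*c^2+b^2*c+a*c)*(v+b*w-c*(u*v)+u*w)^2
        + ((b+a*b*c^2+b^2*c+a*c)^2 - (2*(b-a*c))^2*(b*c) - (2*(1-b*c))^2*(a*b*c)) := by
  linear_combination ((2)*w^2*b + (2)*w^2*b^2*c + (2)*w^2*a*c + (2)*w^2*a*b*c^2 + (-6)*w^4*b^2 + (-1)*w^4*a + (-4)*v*w*b*c + (-4)*v*w*b^2*c^2 + (-4)*v*w*a*c^2 + (-4)*v*w*a*b*c^3 + (-12)*v*w^3*b + (12)*v*w^3*b^2*c + (4)*v*w^3*a*c + (2)*v^2*b*c^2 + (2)*v^2*b^2*c^3 + (2)*v^2*a*c^3 + (2)*v^2*a*b*c^4 + (-6)*v^2*w^2 + (24)*v^2*w^2*b*c + (-6)*v^2*w^2*b^2*c^2 + (-6)*v^2*w^2*a*c^2 + (12)*v^3*w*c + (-12)*v^3*w*b*c^2 + (4)*v^3*w*a*c^3 + (-6)*v^4*c^2 + (-1)*v^4*a*c^4 + (-4)*u*w^4*b + (-4)*u*v*w^3 + (12)*u*v*w^3*b*c + (12)*u*v^2*w^2*c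 + (-12)*u*v^2*w^2*b*c^2 + (-12)*u*v^3*w*c^2 + (4)*u*v^3*w*b*c^3 + (4)*u*v^4*c^3 + (-1)*u^2*w^4 + (4)*u^2*v*w^3*c + (-6)*u^2*v^2*w^2*c^2 + (4)*u^2*v^3*w*c^3 + (-1)*u^2*v^4*c^4) * hu + (b + (2)*b^2*c + (2)*a*c + (-2)*a*b*c^2 + (2)*a*b^2*c^3 + (2)*a^2*c^3 + a^2*b*c^4 + (-6)*w^2*b^2 + (-6)*w^2*a + (24)*w^2*a*b*c + (-6)*w^2*a*b^2*c^2 + (-6)*w^2*a^2*c^2 + (-4)*v*w*b + (12)*v*w*a*c + (-12)*v*w*a*b*c^2 + (4)*v*w*a^2*c^3 + (-1)*v^2 + (-6)*v^2*a*c^2 + (-1)*v^2*a^2*c^4 + (-4)*u*b^2*c^2 + (-4)*u*a*c^2 + (-12)*u*w^2*b + (12)*u*w^2*b^2*c + (12)*u*w^2*a*c + (-12)*u*w^2*a*b*c^2 + (-4)*u*v*w + (12)*u*v*w*b*c + (-12)*u*v*w*a*c^2 + (4)*u*v*w*a*b*c^3 + (4)*u*v^2*c + (4)*u*v^2*a*c^3)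 * hv + ((-4)*b^3 + b^4*c + (-4)*a*b + (22)*a*b^2*c + (-4)*a*b^3*c^2 + a^2*c + (-4)*a^2*b*c^2 + (-1)*w^2*b^4 + (-6)*w^2*a*b^2 + (-1)*w^2*a^2 + (-4)*v*w*b^3 + (-12)*v*w*a*b + (12)*v*w*a*b^2*c + (4)*v*w*a^2*c + (-8)*u*b^2 + (12)*u*b^3*c + (12)*u*a*b*c + (-8)*u*a*b^2*c^2 + (-4)*u*w^2*b^3 + (-4)*u*w^2*a*b + (-12)*u*v*w*b^2 + (4)*u*v*w*b^3*c + (-4)*u*v*w*a + (12)*u*v*w*a*b*c) * hw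

private lemma key2' {R : Type*} [CommRing R] (a b c u v w : R) (hu : u^2 = a) (hv : v^2 = b)
    (hw : w^2 = c) :
    4*(b^2-a)*(1-a*c^2)*(v*w)
      = 2*(b-a*c)*((v+b*w-c*(u*v)+u*w)^2 - (b+a*b*c^2+b^2*c+a*c))
        - 2*(1-b*c)*u*((v+b*w-c*(u*v)+u*w)^2 - (b+a*b*c^2+b^2*c+a*c)) := by
  linear_combination ((2)*w^2*b + (-4)*w^2*b^2*c + (2)*w^2*a*c + (4)*v*w + (-4)*v*w*b*c + (4)*v*w*b^2*c^2 + (-4)*v*w*a*c^2 + (-4)*v^2*c + (2)*v^2*b*c^2 + (2)*v^2*a*c^3 + (2)*u*w^2 + (-2)*u*w^2*b*c + (-4)*u*v*w*c + (4)*u*v*w*b*c^2 + (2)*u*v^2*c^2 + (-2)*u*v^2*b*c^3) * hu + ((-2)*b + (-2)*a*c + (2)*a*b*c^2 + (2)*a^2*c^3 + (2)*u + (2)*u*b*c + (-2)*u*a*c^2 + (-2)*u*a*b*c^3) * hv + ((-2)*b^3 + (2)*a*b + (-2)*a*b^2*c + (2)*a^2*c + (-2)*u*b^2 + (-2)*u*b^3*c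 + (2)*u*a + (2)*u*a*b*c) * hw

private lemma key3' {R : Type*} [CommRing R] (a b c u v w : R) (hu : u^2 = a) (hv : v^2 = b)
    (hw : w^2 = c) :
    (b+a*b*c^2-b^2*c-a*c - 4*b*c*u)*v
      = b*(1-c*u)*(v+b*w-c*(u*v)+u*w) - (b+u)*((v*w)*(v+b*w-c*(u*v)+u*w)) := by
  linear_combination (w*b*c + (-1)*v*b*c^2 + v*w^2 + (-1)*v^2*w*c) * hu + (w*b + (-1)*w*a*c + u*w + (-1)*u*w*b*c) * hv + (v*b^2 + v*a + (2)*u*v*b) * hw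

private lemma key4' {R : Type*} [CommRing R] (a b c u v w : R) (hu : u^2 = a) (hv : v^2 = b)
    (hw : w^2 = c) :
    (b+a*b*c^2-b^2*c-a*c - 4*b*c*u)*w
      = (1-c*u)*((v*w)*(v+b*w-c*(u*v)+u*w)) - c*(b+u)*(v+b*w-c*(u*v)+u*w) := by
  linear_combination (w*c + (-1)*v*c^2 + v*w^2*c + (-1)*v^2*w*c^2) * hu + ((-1)*w + (-1)*w*a*c^2 + (2)*u*w*c) * hv + ((-1)*v*b + v*a*c + (-1)*u*v + u*v*b*c) * hw

private lemma sq_not_rat (A : ℤ) (hsq : Squarefree A) (hA1 : A ≠ 1) (r : ℚ) :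
    r ^ 2 ≠ (A : ℚ) := by
  intro h
  have hden : ((r.den : ℚ)) ≠ 0 := by exact_mod_cast r.den_ne_zero
  have h2 : ((r.num : ℚ)) ^ 2 = (A : ℚ) * ((r.den : ℚ)) ^ 2 := by
    have h3 : ((r.num : ℚ) / (r.den : ℚ)) ^ 2 = (A : ℚ) := by
      rw [Rat.num_div_den]; exact h
    field_simp at h3
    linarith [h3]
  have hn : r.num ^ 2 = A * (r.den : ℤ) ^ 2 := by exact_mod_cast h2
  have hcop : IsCoprime r.num ((r.den : ℤ)) := by
    rw [Int.isCoprime_iff_gcd_eq_one]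
    simpa [Int.gcd] using r.reduced
  have hdvd : ((r.den : ℤ)) ^ 2 ∣ r.num ^ 2 := ⟨A, by linear_combination hn⟩
  have hunit : IsUnit (((r.den : ℤ)) ^ 2) :=
    (hcop.pow (m := 2) (n := 2)).symm.isUnit_of_dvd' (dvd_refl _) hdvd
  have hd1 : ((r.den : ℤ)) ^ 2 = 1 := by
    rcases Int.isUnit_iff.mp hunit with h' | h'
    · exact h'
    · nlinarith [sq_nonneg ((r.den : ℤ))]
  rw [hd1, mul_one] at hn
  have hnu : IsUnit r.num := hsq r.num ⟨1, by linear_combination -hn⟩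
  have : A = 1 := by
    rcases Int.isUnit_iff.mp hnu with h' | h' <;> rw [h'] at hn <;> omega
  exact hA1 this

private lemma int1 (A B C : ℤ) (hsq : Squarefree (A*B*C)) (hB1 : B ≠ 1) (hABC1 : A*B*C ≠ 1) :
    B - A*C ≠ 0 := by
  intro h
  have hB : B = A*C := by linarith [sub_eq_zero.mp h]
  have hdvd : (A*C) * (A*C) ∣ A*B*C := ⟨1, by rw [hB]; ring⟩
  rcases Int.isUnit_iff.mp (hsq _ hdvd) with h' | h'
  · exact hB1 (by rw [hB, h'])
  · apply hABC1
    have : A*B*C = (A*C)*(A*C) := by rw [hB]; ring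
    rw [this, h']; ring

private lemma int2 (B C : ℤ) (hB1 : B ≠ 1) (hBC : B ≠ C) : 1 - B*C ≠ 0 := by
  intro h
  have : B * C = 1 := by linarith [sub_eq_zero.mp h]
  rcases Int.mul_eq_one_iff_eq_one_or_neg_one.mp this with ⟨h1, h2⟩ | ⟨h1, h2⟩
  · exact hB1 h1
  · exact hBC (h1.trans h2.symm)

private lemma int3 (A B : ℤ) (hsq : Squarefree A) (hB1 : B ≠ 1) (hA1 : A ≠ 1) :
    B^2 - A ≠ 0 := by
  intro h
  have hA : A = B*B := by nlinarith [sub_eq_zero.mp h]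
  rcases Int.isUnit_iff.mp (hsq B ⟨1, by rw [hA]; ring⟩) with h' | h'
  · exact hB1 h'
  · exact hA1 (by rw [hA, h']; ring)

private lemma int4 (A C : ℤ) (hA1 : A ≠ 1) : 1 - A*C^2 ≠ 0 := by
  intro h
  have hAC : A * C^2 = 1 := by linarith [sub_eq_zero.mp h]
  have hCu : IsUnit C := isUnit_of_dvd_one ⟨A*C, by linear_combination -hAC⟩
  have hC2 : C^2 = 1 := by rcases Int.isUnit_iff.mp hCu with h' | h' <;> rw [h'] <;> ring
  rw [hC2, mul_one] at hAC
  exact hA1 hAC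

end AuxLemmas

/-- Let `L = ℚ(√A, √B, √C)` be triquadratic with `u = √A`, `v = √B`, `w = √C`, and set
`α = √B + B√C − C√(AB) + √(AC)`. Then `ℚ(α) = L` and `u = c₄α⁴ + c₂α² + c₀` for some
rationals `c₀, c₂, c₄` with `c₄ ≠ 0`; in particular `deg_α(√A) = 4`. -/
theorem stmt_4 (A B C : ℤ) (L : Type*) [Field L] [Algebra ℚ L] (u v w : L)
    (hL : IsTriquadratic A B C L u v w) :
    IntermediateField.adjoin ℚ
        {v + algebraMap ℚ L (B : ℚ) * w - algebraMap ℚ L (C : ℚ) * (u * v) + u * w} = ⊤ ∧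
    ∃ c₀ c₂ c₄ : ℚ, c₄ ≠ 0 ∧
      u = algebraMap ℚ L c₄ *
            (v + algebraMap ℚ L (B : ℚ) * w - algebraMap ℚ L (C : ℚ) * (u * v) + u * w) ^ 4
          + algebraMap ℚ L c₂ *
            (v + algebraMap ℚ L (B : ℚ) * w - algebraMap ℚ L (C : ℚ) * (u * v) + u * w) ^ 2
          + algebraMap ℚ L c₀ := by
  set a1 := algebraMap ℚ L (A : ℚ) with ha1
  set b1 := algebraMap ℚ L (B : ℚ) with hb1
  set c1 := algebraMap ℚ L (C : ℚ) with hc1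
  have hu0 : u ^ 2 = a1 := hL.hu
  have hv0 : v ^ 2 = b1 := hL.hv
  have hw0 : w ^ 2 = c1 := hL.hw
  set α := v + b1 * w - c1 * (u * v) + u * w with hα
  have hinj := (algebraMap ℚ L).injective
  -- integer facts, cast to ℚ
  have hq1 : (B:ℚ) - (A:ℚ)*(C:ℚ) ≠ 0 := by
    exact_mod_cast int1 A B C hL.sqfABC hL.B_ne_one hL.ABC_ne_one
  have hq2 : 1 - (B:ℚ)*(C:ℚ) ≠ 0 := by
    exact_mod_cast int2 B C hL.B_ne_one hL.B_ne_C
  have hq3 : (B:ℚ)^2 - (A:ℚ) ≠ 0 := by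
    exact_mod_cast int3 A B hL.sqfA hL.B_ne_one hL.A_ne_one
  have hq4 : 1 - (A:ℚ)*(C:ℚ)^2 ≠ 0 := by
    exact_mod_cast int4 A C hL.A_ne_one
  have hqB : (B:ℚ) ≠ 0 := by exact_mod_cast hL.B_ne_zero
  have hqC : (C:ℚ) ≠ 0 := by exact_mod_cast hL.C_ne_zero
  -- the coefficients
  set Sq : ℚ := (B:ℚ) + (A:ℚ)*(B:ℚ)*(C:ℚ)^2 + (B:ℚ)^2*(C:ℚ) + (A:ℚ)*(C:ℚ) with hSq
  set Dq : ℚ := 2*(2*((B:ℚ)-(A:ℚ)*(C:ℚ)))*(2*(1-(B:ℚ)*(C:ℚ)))*(B:ℚ)*(C:ℚ) with hDq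
  set K0q : ℚ := Sq^2 - (2*((B:ℚ)-(A:ℚ)*(C:ℚ)))^2*((B:ℚ)*(C:ℚ))
      - (2*(1-(B:ℚ)*(C:ℚ)))^2*((A:ℚ)*(B:ℚ)*(C:ℚ)) with hK0q
  have hDq0 : Dq ≠ 0 := by
    rw [hDq]
    exact mul_ne_zero (mul_ne_zero (mul_ne_zero (mul_ne_zero two_ne_zero
      (mul_ne_zero two_ne_zero hq1)) (mul_ne_zero two_ne_zero hq2)) hqB) hqC
  have hmapD : algebraMap ℚ L Dq = 2*(2*(b1-a1*c1))*(2*(1-b1*c1))*b1*c1 := by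
    rw [hDq]
    simp only [map_mul, map_sub, map_one, map_ofNat, ← ha1, ← hb1, ← hc1]
  have hmapS : algebraMap ℚ L (2*Sq) = 2*(b1+a1*b1*c1^2+b1^2*c1+a1*c1) := by
    rw [hSq]
    simp only [map_mul, map_add, map_pow, map_ofNat, ← ha1, ← hb1, ← hc1]
  have hmapK : algebraMap ℚ L K0q
      = (b1+a1*b1*c1^2+b1^2*c1+a1*c1)^2 - (2*(b1-a1*c1))^2*(b1*c1)
        - (2*(1-b1*c1))^2*(a1*b1*c1) := by
    rw [hK0q, hSq]
    simp only [map_mul, map_add, map_sub, map_pow, map_one, map_ofNat, ← ha1, ← hb1, ← hc1]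
  have hueq : algebraMap ℚ L Dq * u
      = α^4 - algebraMap ℚ L (2*Sq) * α^2 + algebraMap ℚ L K0q := by
    rw [hmapD, hmapS, hmapK, hα]
    exact key1' a1 b1 c1 u v w hu0 hv0 hw0
  have hD0' : (algebraMap ℚ L Dq) ≠ 0 := fun h =>
    hDq0 (hinj (by rw [h, map_zero]))
  have hufin : u = algebraMap ℚ L (Dq⁻¹) * α ^ 4 + algebraMap ℚ L (-(2*Sq) * Dq⁻¹) * α ^ 2
      + algebraMap ℚ L (K0q * Dq⁻¹) := by
    calc u = (algebraMap ℚ L Dq)⁻¹ * (algebraMap ℚ L Dq * u) := by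
          rw [← mul_assoc, inv_mul_cancel₀ hD0', one_mul]
      _ = (algebraMap ℚ L Dq)⁻¹ * (α^4 - algebraMap ℚ L (2*Sq) * α^2 + algebraMap ℚ L K0q) := by
          rw [hueq]
      _ = algebraMap ℚ L (Dq⁻¹) * α ^ 4 + algebraMap ℚ L (-(2*Sq) * Dq⁻¹) * α ^ 2
            + algebraMap ℚ L (K0q * Dq⁻¹) := by
          simp only [map_mul, map_neg, map_inv₀]; ring
  refine ⟨?_, K0q * Dq⁻¹, -(2*Sq) * Dq⁻¹, Dq⁻¹, inv_ne_zero hDq0, hufin⟩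
  -- Part 1: ℚ(α) = L
  set K := IntermediateField.adjoin ℚ {α} with hK
  have hαK : α ∈ K := IntermediateField.subset_adjoin ℚ {α} (Set.mem_singleton α)
  have hratK : ∀ r : ℚ, algebraMap ℚ L r ∈ K := fun r => K.algebraMap_mem r
  have ha1K : a1 ∈ K := hratK _
  have hb1K : b1 ∈ K := hratK _
  have hc1K : c1 ∈ K := hratK _
  have h2K : (2:L) ∈ K := by simpa using hratK 2
  have huK : u ∈ K := by
    rw [hufin]
    exact add_mem (add_mem (mul_mem (hratK _) (pow_mem hαK 4))
      (mul_mem (hratK _) (pow_mem hαK 2))) (hratK _)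
  -- vw ∈ K
  set d2q : ℚ := 4*((B:ℚ)^2-(A:ℚ))*(1-(A:ℚ)*(C:ℚ)^2) with hd2q
  have hd2q0 : d2q ≠ 0 := by
    rw [hd2q]; exact mul_ne_zero (mul_ne_zero (by norm_num) hq3) hq4
  have hmapd2 : algebraMap ℚ L d2q = 4*(b1^2-a1)*(1-a1*c1^2) := by
    rw [hd2q]
    simp only [map_mul, map_sub, map_one, map_pow, map_ofNat, ← ha1, ← hb1, ← hc1]
  have hd2L0 : algebraMap ℚ L d2q ≠ 0 := fun h => hd2q0 (hinj (by rw [h, map_zero]))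
  have hvwK : v * w ∈ K := by
    have heq2 : algebraMap ℚ L d2q * (v*w)
        = 2*(b1-a1*c1)*(α^2 - (b1+a1*b1*c1^2+b1^2*c1+a1*c1))
          - 2*(1-b1*c1)*u*(α^2 - (b1+a1*b1*c1^2+b1^2*c1+a1*c1)) := by
      rw [hmapd2, hα]
      exact key2' a1 b1 c1 u v w hu0 hv0 hw0
    have hvw : v*w = (algebraMap ℚ L d2q)⁻¹
        * (2*(b1-a1*c1)*(α^2 - (b1+a1*b1*c1^2+b1^2*c1+a1*c1))
          - 2*(1-b1*c1)*u*(α^2 - (b1+a1*b1*c1^2+b1^2*c1+a1*c1))) := by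
      rw [← heq2, ← mul_assoc, inv_mul_cancel₀ hd2L0, one_mul]
    rw [hvw]
    have hSmem : α^2 - (b1+a1*b1*c1^2+b1^2*c1+a1*c1) ∈ K := by
      refine sub_mem (pow_mem hαK 2) ?_
      refine add_mem (add_mem (add_mem hb1K ?_) ?_) ?_
      · exact mul_mem (mul_mem ha1K hb1K) (pow_mem hc1K 2)
      · exact mul_mem (pow_mem hb1K 2) hc1K
      · exact mul_mem ha1K hc1K
    refine mul_mem (K.inv_mem (hratK d2q)) ?_
    refine sub_mem (mul_mem ?_ hSmem) (mul_mem (mul_mem ?_ huK) hSmem)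
    · exact mul_mem h2K (sub_mem hb1K (mul_mem ha1K hc1K))
    · exact mul_mem h2K (sub_mem (K.one_mem) (mul_mem hb1K hc1K))
  -- δ ≠ 0 and δ ∈ K
  set S2q : ℚ := (B:ℚ) + (A:ℚ)*(B:ℚ)*(C:ℚ)^2 - (B:ℚ)^2*(C:ℚ) - (A:ℚ)*(C:ℚ) with hS2q
  set δ : L := algebraMap ℚ L S2q - algebraMap ℚ L (4*(B:ℚ)*(C:ℚ)) * u with hδ
  have hδmap : δ = (b1+a1*b1*c1^2-b1^2*c1-a1*c1 - 4*b1*c1*u) := by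
    rw [hδ, hS2q]
    simp only [map_mul, map_add, map_sub, map_pow, map_ofNat, ← ha1, ← hb1, ← hc1]
  have hδK : δ ∈ K := by
    rw [hδ]; exact sub_mem (hratK _) (mul_mem (hratK _) huK)
  have h4bc : (4*(B:ℚ)*(C:ℚ)) ≠ 0 := mul_ne_zero (mul_ne_zero (by norm_num) hqB) hqC
  have hδ0 : δ ≠ 0 := by
    intro h
    rw [hδ] at h
    have h' : algebraMap ℚ L S2q = algebraMap ℚ L (4*(B:ℚ)*(C:ℚ)) * u := by
      exact sub_eq_zero.mp h
    have hur : u = algebraMap ℚ L (S2q / (4*(B:ℚ)*(C:ℚ))) := by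
      rw [map_div₀, eq_div_iff (fun hh => h4bc (hinj (by rw [hh, map_zero])))]
      linear_combination -h'
    have hsq2 : (S2q / (4*(B:ℚ)*(C:ℚ)))^2 = (A:ℚ) := by
      apply hinj
      rw [map_pow, ← hur, hu0, ha1]
    exact sq_not_rat A hL.sqfA hL.A_ne_one _ hsq2
  -- v and w are in K
  have hvK : v ∈ K := by
    have heq3 : δ * v = b1*(1-c1*u)*α - (b1+u)*((v*w)*α) := by
      rw [hδmap, hα]
      exact key3' a1 b1 c1 u v w hu0 hv0 hw0
    have hv' : v = δ⁻¹ * (b1*(1-c1*u)*α - (b1+u)*((v*w)*α)) := by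
      rw [← heq3, ← mul_assoc, inv_mul_cancel₀ hδ0, one_mul]
    rw [hv']
    refine mul_mem (K.inv_mem hδK) (sub_mem ?_ ?_)
    · exact mul_mem (mul_mem hb1K (sub_mem K.one_mem (mul_mem hc1K huK))) hαK
    · exact mul_mem (add_mem hb1K huK) (mul_mem hvwK hαK)
  have hwK : w ∈ K := by
    have heq4 : δ * w = (1-c1*u)*((v*w)*α) - c1*(b1+u)*α := by
      rw [hδmap, hα]
      exact key4' a1 b1 c1 u v w hu0 hv0 hw0
    have hw' : w = δ⁻¹ * ((1-c1*u)*((v*w)*α) - c1*(b1+u)*α) := by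
      rw [← heq4, ← mul_assoc, inv_mul_cancel₀ hδ0, one_mul]
    rw [hw']
    refine mul_mem (K.inv_mem hδK) (sub_mem ?_ ?_)
    · exact mul_mem (sub_mem K.one_mem (mul_mem hc1K huK)) (mul_mem hvwK hαK)
    · exact mul_mem (mul_mem hc1K (add_mem hb1K huK)) hαK
  rw [eq_top_iff, ← hL.gen]
  apply IntermediateField.adjoin_le_iff.mpr
  rintro x hx
  simp only [Set.mem_insert_iff, Set.mem_singleton_iff] at hx
  rcases hx with rfl | rfl | rfl
  exacts [huK, hvK, hwK]
end

section
/- Let B be a square-free nonzero integer. Then there exist no integers p, q satisfying simultaneously B = p⁴ + 2p³q and −B = 2pq³ + q⁴. (Indeed these equations would force 2B = p⁴ + 2p³q − 2pq³ − q⁴ = −(p − q)(p + q)³, which is impossible: the left side is exactly divisible by 2 but not by 8, while the right side is either odd or divisible by 16.) -/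
/-- If `B` is a square-free nonzero integer, then there are no integers `p, q` with
`B = p ^ 4 + 2 * p ^ 3 * q` and `−B = 2pq³ + q⁴`. -/
theorem stmt_9 (B : ℤ) (hB : Squarefree B) (hB0 : B ≠ 0) :
    ¬ ∃ p q : ℤ, B = p ^ 4 + 2 * p ^ 3 * q ∧ -B = 2 * p * q ^ 3 + q ^ 4 := by
  rintro ⟨p, q, h1, h2⟩
  have key : 2 * B = (p - q) * (p + q) ^ 3 := by linear_combination h1 - h2
  rcases Int.even_or_odd (p + q) with he | ho
  · obtain ⟨k, hk⟩ := he
    have hp : p = 2 * k - q := by omega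
    subst hp
    have h2B : 2 * B = 2 * (8 * ((k - q) * k ^ 3)) := by linear_combination key
    have hBform : B = 8 * ((k - q) * k ^ 3) := by omega
    have hdvd : (2 : ℤ) * 2 ∣ B := ⟨2 * ((k - q) * k ^ 3), by linarith⟩
    have := hB 2 hdvd
    rw [Int.isUnit_iff] at this
    omega
  · have hodd : Odd ((p - q) * (p + q) ^ 3) := by
      obtain ⟨k, hk⟩ := id ho
      have h1o : Odd (p - q) := ⟨k - q, by omega⟩
      exact h1o.mul ho.pow
    rw [← key] at hodd
    obtain ⟨m, hm⟩ := hodd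
    omega
end

section
/- Let A, B be distinct square-free nonzero integers and let a be a nonzero rational number. Then the set of square-free positive integers γ such that the elliptic curve E_γ over ℚ given by Y² = X(X − a²Bγ)(X − (a²B − A)γ) has a rational point of order 3 is finite. -/
/-- The quadratic twist by `γ` of the curve `Y² = X(X − a²B)(X − (a²B − A))`, namely
`Y² = X(X − a²Bγ)(X − (a²B − A)γ)` in Weierstrass form. -/
def curveETwist (A B : ℤ) (a : ℚ) (γ : ℕ) : WeierstrassCurve.Affine ℚ where
  a₁ := 0
  a₂ := -(a ^ 2 * (B : ℚ) * (γ : ℚ) + (a ^ 2 * (B : ℚ) - (A : ℚ)) * (γ : ℚ))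
  a₃ := 0
  a₄ := a ^ 2 * (B : ℚ) * (γ : ℚ) * ((a ^ 2 * (B : ℚ) - (A : ℚ)) * (γ : ℚ))
  a₆ := 0

open WeierstrassCurve.Affine WeierstrassCurve.Affine.Point

lemma sqfree_mul_sq_eq {m n : ℕ} (hm : Squarefree m) (hn : Squarefree n)
    (h : IsSquare (m * n)) : m = n := by
  obtain ⟨k, hk⟩ := h
  refine Nat.eq_of_factorization_eq hm.ne_zero hn.ne_zero fun p => ?_
  have h1 := hm.natFactorization_le_one p
  have h2 := hn.natFactorization_le_one p
  have he : Even ((m * n).factorization p) := by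
    rw [hk, ← sq, Nat.factorization_pow]
    exact ⟨k.factorization p, by simp [two_mul]⟩
  rw [Nat.factorization_mul hm.ne_zero hn.ne_zero] at he
  simp only [Finsupp.add_apply] at he
  obtain ⟨r, hr⟩ := he
  omega

lemma key (A B : ℤ) (a : ℚ) (γ : ℕ) (hγ : 0 < γ)
    (P : (curveETwist A B a γ).Point) (hP : addOrderOf P = 3) :
    ∃ t s : ℚ, s ≠ 0 ∧
      (γ : ℚ) * (t * (t - a^2*B) * (t - (a^2*B - A))) = s * s ∧
      3*t^4 - 4*(a^2*B + (a^2*B - A))*t^3 + 6*((a^2*B)*(a^2*B - A))*t^2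
        - ((a^2*B)*(a^2*B - A))^2 = 0 := by
  cases P with
  | zero => rw [← Point.zero_def, addOrderOf_zero] at hP; omega
  | @some x y h =>
    let W := curveETwist A B a γ
    have hW : W = curveETwist A B a γ := rfl
    set P : W.Point := Point.some _ _ h with hPdef
    have hγ0 : (γ : ℚ) ≠ 0 := Nat.cast_ne_zero.mpr hγ.ne'
    have hnegY : W.negY x y = -y := by
      simp [hW, curveETwist, WeierstrassCurve.Affine.negY]
    have hy : y ≠ W.negY x y := by
      intro heq
      have h2 : P + P = 0 := Point.add_self_of_Y_eq heq
      have h2' : (2 : ℕ) • P = 0 := by rw [two_nsmul]; exact h2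
      have := addOrderOf_dvd_of_nsmul_eq_zero h2'
      rw [hP] at this
      omega
    have hy0 : y ≠ 0 := by
      intro h0; apply hy; rw [hnegY, h0]; norm_num
    have h30 : (P + P) + P = 0 := by
      have h3 := addOrderOf_nsmul_eq_zero P
      rw [hP] at h3
      calc (P + P) + P = (2 : ℕ) • P + P := by rw [two_nsmul]
        _ = (3 : ℕ) • P := by rw [← succ_nsmul]
        _ = 0 := h3
    have h2eq : P + P = -P := eq_neg_of_add_eq_zero_left h30
    have hadd : P + P = Point.some _ _ (nonsingular_add h h fun hxy => hy hxy.right) :=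
      Point.add_self_of_Y_ne hy
    rw [hadd, hPdef, Point.neg_some] at h2eq
    have hx : W.addX x x (W.slope x x y y) = x := by
      injection h2eq with h1 _
    -- abbreviations
    have ha₁ : W.a₁ = 0 := rfl
    have ha₃ : W.a₃ = 0 := rfl
    have ha₆ : W.a₆ = 0 := rfl
    have ha₂ : W.a₂ = -(a ^ 2 * (B : ℚ) * (γ : ℚ) + (a ^ 2 * (B : ℚ) - (A : ℚ)) * (γ : ℚ)) := rfl
    have ha₄ : W.a₄ = a ^ 2 * (B : ℚ) * (γ : ℚ) * ((a ^ 2 * (B : ℚ) - (A : ℚ)) * (γ : ℚ)) := rfl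
    have heqn : y ^ 2 = x ^ 3 + W.a₂ * x ^ 2 + W.a₄ * x := by
      have he := (W.equation_iff x y).mp h.left
      rw [ha₁, ha₃, ha₆] at he
      linarith
    rw [W.slope_of_Y_ne rfl hy, hnegY] at hx
    simp only [WeierstrassCurve.Affine.addX, ha₁, ha₂, ha₄] at hx
    rw [ha₂, ha₄] at heqn
    field_simp [hy0] at hx
    have hquart : 3*x^4 + 4*(-(a^2*(B:ℚ)*(γ:ℚ) + (a^2*(B:ℚ) - (A:ℚ))*(γ:ℚ)))*x^3
        + 6*(a^2*(B:ℚ)*(γ:ℚ)*((a^2*(B:ℚ) - (A:ℚ))*(γ:ℚ)))*x^2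
        - (a^2*(B:ℚ)*(γ:ℚ)*((a^2*(B:ℚ) - (A:ℚ))*(γ:ℚ)))^2 = 0 := by
      linear_combination (-1 : ℚ)*hx - (4*(3*x + (-(a^2*(B:ℚ)*(γ:ℚ) + (a^2*(B:ℚ) - (A:ℚ))*(γ:ℚ)))))*heqn
    refine ⟨x / γ, y / γ, div_ne_zero hy0 hγ0, ?_, ?_⟩
    · field_simp
      linear_combination (-1 : ℚ)*heqn
    · field_simp
      linear_combination hquart

/-- For distinct square-free nonzero integers `A, B` and nonzero rational `a`, the set of
square-free positive integers `γ` such that the twisted curve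
`E_γ : Y² = X(X − a²Bγ)(X − (a²B − A)γ)` has a rational point of order `3` is finite. -/
theorem stmt_11 (A B : ℤ) (hA : Squarefree A) (hB : Squarefree B) (hAB : A ≠ B)
    (hA0 : A ≠ 0) (hB0 : B ≠ 0) (a : ℚ) (ha : a ≠ 0) :
    {γ : ℕ | Squarefree γ ∧ 0 < γ ∧
      ∃ P : (curveETwist A B a γ).Point, addOrderOf P = 3}.Finite := by
  classical
  set b : ℚ := a ^ 2 * B with hb
  set c : ℚ := a ^ 2 * B - A with hc
  set q : Polynomial ℚ := Polynomial.C 3 * Polynomial.X ^ 4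
      + Polynomial.C (-(4 * (b + c))) * Polynomial.X ^ 3
      + Polynomial.C (6 * (b * c)) * Polynomial.X ^ 2
      + Polynomial.C (-((b * c) ^ 2)) with hq
  have hq0 : q ≠ 0 := by
    intro h
    have h4 := congrArg (fun p => Polynomial.coeff p 4) h
    simp only [hq, Polynomial.coeff_add, Polynomial.coeff_C_mul, Polynomial.coeff_X_pow,
        Polynomial.coeff_C, Polynomial.coeff_zero] at h4
    norm_num at h4
  have hRfin : {t : ℚ | q.IsRoot t}.Finite := Polynomial.finite_setOf_isRoot hq0
  have hfin : (⋃ t ∈ {t : ℚ | q.IsRoot t},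
      {γ : ℕ | Squarefree γ ∧ ∃ s : ℚ, s ≠ 0 ∧
        (γ : ℚ) * (t * (t - b) * (t - c)) = s * s}).Finite := by
    refine Set.Finite.biUnion hRfin fun t _ => Set.Subsingleton.finite ?_
    rintro γ₁ ⟨sf₁, s₁, hs₁, he₁⟩ γ₂ ⟨sf₂, s₂, hs₂, he₂⟩
    have hf : t * (t - b) * (t - c) ≠ 0 := by
      intro h0
      rw [h0, mul_zero] at he₁
      exact hs₁ (by nlinarith [sq_nonneg s₁])
    have hsq : IsSquare ((γ₁ * γ₂ : ℕ) : ℚ) := by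
      refine ⟨s₁ * s₂ / (t * (t - b) * (t - c)), ?_⟩
      push_cast
      rw [div_mul_div_comm, eq_div_iff (mul_ne_zero hf hf)]
      linear_combination ((γ₂ : ℚ) * (t * (t - b) * (t - c))) * he₁ + (s₁ * s₁) * he₂
    rw [Rat.isSquare_natCast_iff] at hsq
    exact sqfree_mul_sq_eq sf₁ sf₂ hsq
  refine Set.Finite.subset hfin ?_
  rintro γ ⟨sf, pos, P, hP⟩
  obtain ⟨t, s, hs, hsq, hq4⟩ := key A B a γ pos P hP
  refine Set.mem_biUnion (show t ∈ {t : ℚ | q.IsRoot t} from ?_) ⟨sf, s, hs, hsq⟩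
  simp only [Set.mem_setOf_eq, Polynomial.IsRoot, hq]
  simp only [Polynomial.eval_add, Polynomial.eval_mul, Polynomial.eval_C, Polynomial.eval_pow,
    Polynomial.eval_X]
  linear_combination hq4
end

section
/- Let L = ℚ(√A, √B, √C) be a triquadratic number field and suppose there exist nonzero rational numbers a, b with a² − 1 = (B − A)b². Then min deg_L(√A + a√B) = 2; that is, there exists a primitive element α of L and rationals a₀, a₁, a₂ with a₂ ≠ 0 such that √A + a√B = a₂α² + a₁α + a₀. -/
open IntermediateField Polynomial

lemma finrank_adjoin_sqrt_le {K L : Type*} [Field K] [Field L] [Algebra K L]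
    [FiniteDimensional K L] (x : L) (p : K) (hx : x ^ 2 = algebraMap K L p) :
    Module.finrank K K⟮x⟯ ≤ 2 := by
  have hint : IsIntegral K x := IsIntegral.of_finite K x
  rw [IntermediateField.adjoin.finrank hint]
  have hpoly : (X ^ 2 - C p : K[X]) ≠ 0 := by
    intro h
    have := congrArg natDegree h
    simp [natDegree_X_pow_sub_C] at this
  have haev : aeval x (X ^ 2 - C p : K[X]) = 0 := by
    simp [hx]
  have hle := minpoly.degree_le_of_ne_zero K x hpoly haev
  have h2 : (X ^ 2 - C p : K[X]).natDegree = 2 := natDegree_X_pow_sub_C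
  calc (minpoly K x).natDegree ≤ (X ^ 2 - C p : K[X]).natDegree :=
        natDegree_le_natDegree hle
    _ = 2 := h2

lemma adjoin_two_ne_top {L : Type*} [Field L] [Algebra ℚ L]
    (hd : Module.finrank ℚ L = 8) (x y : L) (p q : ℚ)
    (hx : x ^ 2 = algebraMap ℚ L p) (hy : y ^ 2 = algebraMap ℚ L q) :
    IntermediateField.adjoin ℚ {x, y} ≠ ⊤ := by
  haveI : FiniteDimensional ℚ L := FiniteDimensional.of_finrank_pos (by omega)
  intro htop
  have h1 : Module.finrank ℚ ℚ⟮x⟯ ≤ 2 := finrank_adjoin_sqrt_le x p hx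
  have htop2 : IntermediateField.adjoin ℚ⟮x⟯ {y} = ⊤ := by
    have hkey := IntermediateField.adjoin_adjoin_left ℚ {x} {y}
    rw [eq_top_iff]
    intro z _
    have hz : z ∈ IntermediateField.adjoin ℚ ({x} ∪ {y}) := by
      rw [Set.singleton_union]
      rw [show (insert x {y} : Set L) = {x, y} from rfl]
      exact htop ▸ trivial
    rw [← hkey] at hz
    exact hz
  have hy2 : y ^ 2 = algebraMap ℚ⟮x⟯ L ((algebraMap ℚ ℚ⟮x⟯) q) := by
    rw [← IsScalarTower.algebraMap_apply]; exact hy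
  have h2 : Module.finrank ℚ⟮x⟯ ℚ⟮x⟯⟮y⟯ ≤ 2 := finrank_adjoin_sqrt_le y _ hy2
  have h3 : Module.finrank ℚ⟮x⟯ L ≤ 2 := by
    have heq : Module.finrank ℚ⟮x⟯ ℚ⟮x⟯⟮y⟯ = Module.finrank ℚ⟮x⟯ L := by
      rw [htop2]
      exact (IntermediateField.topEquiv.toLinearEquiv).finrank_eq
    omega
  have hmul := Module.finrank_mul_finrank ℚ ℚ⟮x⟯ L
  rw [hd] at hmul
  nlinarith [Module.finrank_pos (R := ℚ) (M := ℚ⟮x⟯)]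

lemma rat_sq_int (r : ℚ) (n : ℤ) (h : r ^ 2 = (n : ℚ)) : ∃ m : ℤ, (m : ℚ) = r := by
  have hint : IsIntegral ℤ r := by
    refine ⟨X ^ 2 - C n, ?_, ?_⟩
    · apply Polynomial.monic_X_pow_sub_C _ (by norm_num)
    · rw [show ((X ^ 2 - C n : ℤ[X])) = X ^ 2 - C n from rfl]
      rw [eval₂_sub, eval₂_pow, eval₂_X, eval₂_C]
      simp [h]
  exact IsIntegrallyClosed.isIntegral_iff.mp hint

lemma sqfree_rat_sq {A : ℤ} (hA : Squarefree A) {r : ℚ} (h : (A : ℚ) = r ^ 2) : A = 1 := by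
  obtain ⟨m, hm⟩ := rat_sq_int r A h.symm
  have hAm : A = m ^ 2 := by
    have h2 : (A : ℚ) = ((m ^ 2 : ℤ) : ℚ) := by push_cast [← hm] at h ⊢; linarith
    exact_mod_cast h2
  have hu : IsUnit m := hA m (by rw [hAm]; ring_nf; exact dvd_rfl)
  rcases Int.isUnit_iff.mp hu with h1 | h1 <;> simp [hAm, h1]

lemma sqfree_neg {B : ℤ} (h : Squarefree B) : Squarefree (-B) := fun x hx => h x (dvd_neg.mp hx)



/-- If `L = ℚ(√A, √B, √C)` is triquadratic and there are nonzero rationals `a, b` with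
`a² − 1 = (B − A)b²`, then `min deg_L(√A + a√B) = 2`: there is a primitive element `α`
of `L` and rationals `a₀, a₁, a₂` with `a₂ ≠ 0` and `√A + a√B = a₂α² + a₁α + a₀`. -/
theorem stmt_12 (A B C : ℤ) (L : Type*) [Field L] [Algebra ℚ L] (u v w : L)
    (hL : IsTriquadratic A B C L u v w) (a b : ℚ) (ha : a ≠ 0) (hb : b ≠ 0)
    (hab : a ^ 2 - 1 = ((B : ℚ) - (A : ℚ)) * b ^ 2) :
    minDegree L (u + algebraMap ℚ L a * v) = 2 ∧
    ∃ α : L, IntermediateField.adjoin ℚ {α} = ⊤ ∧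
      ∃ a₀ a₁ a₂ : ℚ, a₂ ≠ 0 ∧
        u + algebraMap ℚ L a * v =
          algebraMap ℚ L a₂ * α ^ 2 + algebraMap ℚ L a₁ * α + algebraMap ℚ L a₀ := by

  classical
  haveI : CharZero L := charZero_of_injective_algebraMap (algebraMap ℚ L).injective
  obtain ⟨sqfA, sqfB, sqfC, sqfABC, A_ne_B, A_ne_C, B_ne_C, _, _, _, A_ne_zero, B_ne_zero,
    C_ne_zero, A_ne_one, B_ne_one, C_ne_one, _, hu, hv, hw, gen, deg⟩ := hL
  simp only [eq_ratCast] at hu hv hw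
  push_cast at hu hv hw
  have hQmem : ∀ (K : IntermediateField ℚ L) (x : ℚ), ((x : L)) ∈ K := fun K x => by
    rw [← eq_ratCast (algebraMap ℚ L) x]; exact K.algebraMap_mem x
  have hcast : ∀ x : ℚ, algebraMap ℚ L x = (x : L) := fun x => eq_ratCast _ x
  have hinj : Function.Injective (fun x : ℚ => (x : L)) := fun x y hxy => by
    apply (algebraMap ℚ L).injective
    rw [hcast, hcast]; exact hxy
  -- basic nonvanishing facts
  have hA1 : (1:ℚ) - b^2*(A:ℚ) ≠ 0 := by
    intro h
    have : (A:ℚ) = (1/b)^2 := by field_simp; linarith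
    exact A_ne_one (sqfree_rat_sq sqfA this)
  set t : ℚ := 2*b*(1 - b^2*(A:ℚ)) with ht_def
  set s : ℚ := a^2 + a^2*b^2*(A:ℚ) + b^2*(B:ℚ) + b^4*(A:ℚ)*(B:ℚ) with hs_def
  have htne : t ≠ 0 := by
    rw [ht_def]
    exact mul_ne_zero (mul_ne_zero two_ne_zero hb) hA1
  have hCQne : ((C:ℚ)) ≠ 0 := Int.cast_ne_zero.mpr C_ne_zero
  have htL : ((t:L)) ≠ 0 := Rat.cast_ne_zero.mpr htne
  have hCL : ((C : L)) ≠ 0 := Int.cast_ne_zero.mpr C_ne_zero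
  have haL : ((a:L)) ≠ 0 := Rat.cast_ne_zero.mpr ha
  have hsolve : ∀ (c : ℚ) (X Y : L), c ≠ 0 → (c:L) * X = Y → X = ((c⁻¹ : ℚ) : L) * Y := by
    intro c X Y hc h
    rw [← h, ← mul_assoc, ← Rat.cast_mul, inv_mul_cancel₀ hc, Rat.cast_one, one_mul]
  -- the key elements
  set β : L := (a:L) + (a:L)*(b:L) * u + (b:L) * v - (b:L)^2 * (u*v) with hβ_def
  set α : L := β * w with hα_def
  have habL : ((a:L))^2 - 1 = ((B:L) - (A:L)) * ((b:L))^2 := by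
    exact_mod_cast congrArg (fun x : ℚ => (x : L)) hab
  -- main identity
  have hMain : α ^ 2 = (C:L) * (t:L) * (u + (a:L) * v) + (C:L) * (s:L) := by
    rw [hα_def, hβ_def, ht_def, hs_def]
    push_cast
    linear_combination ((a:L) + (a:L)*(b:L) * u + (b:L) * v - (b:L)^2 * (u*v))^2 * hw
      + (C:L) * ((a:L)^2*(b:L)^2 + (b:L)^4 * v^2 - 2*(a:L)*(b:L)^3*v) * hu
      + (C:L) * ((b:L)^2 + (b:L)^4 * (A:L) - 2*(b:L)^3*u) * hv
      + (C:L) * 2 * (b:L) * u * habL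
  -- linear independence: u + a v is irrational
  have hlin : ∀ c : ℚ, u + (a:L) * v ≠ (c:L) := by
    intro c hc
    have hvw : IntermediateField.adjoin ℚ {v, w} = ⊤ := by
      rw [eq_top_iff, ← gen]
      apply IntermediateField.adjoin_le_iff.mpr
      intro z hz
      rcases hz with rfl | rfl | rfl
      · have hz2 : z = (c:L) - (a:L) * v := by linear_combination hc
        rw [hz2]
        exact sub_mem (hQmem _ c)
          (mul_mem (hQmem _ a) (IntermediateField.subset_adjoin ℚ _ (by left; rfl)))
      · exact IntermediateField.subset_adjoin ℚ _ (by left; rfl)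
      · exact IntermediateField.subset_adjoin ℚ _ (by right; rfl)
    exact adjoin_two_ne_top deg v w (B:ℚ) (C:ℚ)
      (by rw [hcast]; exact_mod_cast hv) (by rw [hcast]; exact_mod_cast hw) hvw
  -- α ≠ 0
  have hαne : α ≠ 0 := by
    intro h0
    rw [h0] at hMain
    apply hlin (-(s/t))
    have h1 : (C:L) * (t:L) * (u + (a:L) * v) = (C:L) * (t:L) * ((-(s/t) : ℚ):L) := by
      push_cast
      have hts : (C:L) * (t:L) * ((s:L) / (t:L)) = (C:L) * (s:L) := by field_simp
      linear_combination (-1:L) * hMain + hts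
    exact mul_left_cancel₀ (mul_ne_zero hCL htL) h1
  have hβne : β ≠ 0 := by
    intro h0
    apply hαne
    rw [hα_def, h0, zero_mul]
  -- α is primitive
  have hprim : IntermediateField.adjoin ℚ {α} = ⊤ := by
    set K := IntermediateField.adjoin ℚ {α} with hK_def
    have hαK : α ∈ K := IntermediateField.subset_adjoin ℚ _ rfl
    have h2 : ((((C:ℚ)*t) : ℚ):L) * (u + (a:L) * v) = α^2 - (((C:ℚ)*s : ℚ):L) := by
      push_cast
      linear_combination -hMain
    have hexpγ : u + (a:L) * v = ((((C:ℚ)*t)⁻¹ : ℚ):L) * (α^2 - (((C:ℚ)*s : ℚ):L)) :=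
      hsolve _ _ _ (mul_ne_zero hCQne htne) h2
    have hγK : u + (a:L) * v ∈ K := by
      rw [hexpγ]
      exact mul_mem (hQmem _ _) (sub_mem (pow_mem hαK 2) (hQmem _ _))
    have huvK : u * v ∈ K := by
      have h1 : ((2*a : ℚ):L) * (u*v) =
          (u + (a:L)*v)^2 - (((A:ℚ) + a^2*(B:ℚ) : ℚ):L) := by
        push_cast
        linear_combination -hu - (a:L)^2*hv
      rw [hsolve _ _ _ (mul_ne_zero two_ne_zero ha) h1]
      exact mul_mem (hQmem _ _) (sub_mem (pow_mem hγK 2) (hQmem _ _))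
    have hδK : ((A:ℚ):L) * v + ((a*(B:ℚ) : ℚ):L) * u ∈ K := by
      have hexp : ((A:ℚ):L) * v + ((a*(B:ℚ) : ℚ):L) * u = (u + (a:L)*v) * (u*v) := by
        push_cast
        linear_combination (-v) * hu + (-(a:L)*u) * hv
      rw [hexp]
      exact mul_mem hγK huvK
    have hABne : (A:ℚ) - a^2*(B:ℚ) ≠ 0 := by
      intro h
      have hAB : (A:ℚ) = a^2*(B:ℚ) := by linarith
      have hfact : (a^2 - 1) * (1 + (B:ℚ)*b^2) = 0 := by
        linear_combination hab - b^2 * hAB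
      rcases mul_eq_zero.mp hfact with h1 | h1
      · have ha2 : a^2 = 1 := by linarith
        rw [ha2, one_mul] at hAB
        exact A_ne_B (by exact_mod_cast hAB)
      · have hBb : ((-B : ℤ) : ℚ) = (1/b)^2 := by push_cast; field_simp; linarith
        have hB1 : -B = 1 := sqfree_rat_sq (sqfree_neg sqfB) hBb
        have hBval : (B:ℚ) = -1 := by
          have : B = -1 := by omega
          rw [this]; norm_num
        have hb2 : b^2 = 1 := by
          rw [hBval] at h1; linarith
        have hAa : ((-A : ℤ) : ℚ) = a^2 := by push_cast; rw [hBval] at hAB; linarith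
        have hA1' : -A = 1 := sqfree_rat_sq (sqfree_neg sqfA) hAa
        have hAB' : A = B := by omega
        exact A_ne_B hAB'
    have huK : u ∈ K := by
      have h1 : (((A:ℚ) - a^2*(B:ℚ) : ℚ):L) * u =
          ((A:ℚ):L) * (u + (a:L)*v) - (a:L) * (((A:ℚ):L) * v + ((a*(B:ℚ):ℚ):L) * u) := by
        push_cast
        ring
      rw [hsolve _ _ _ hABne h1]
      exact mul_mem (hQmem _ _) (sub_mem (mul_mem (hQmem _ _) hγK)
        (mul_mem (hQmem _ _) hδK))
    have hvK : v ∈ K := by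
      have h1 : (a:L) * v = (u + (a:L)*v) - u := by ring
      rw [hsolve _ _ _ ha h1]
      exact mul_mem (hQmem _ _) (sub_mem hγK huK)
    have hβK : β ∈ K := by
      rw [hβ_def]
      exact sub_mem (add_mem (add_mem (hQmem _ _) (mul_mem (mul_mem (hQmem _ _) (hQmem _ _)) huK))
        (mul_mem (hQmem _ _) hvK)) (mul_mem (pow_mem (hQmem _ _) 2) (mul_mem huK hvK))
    have hwK : w ∈ K := by
      have hexp : w = β⁻¹ * α := by
        rw [hα_def]
        field_simp
      rw [hexp]
      exact mul_mem (inv_mem hβK) hαK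
    rw [eq_top_iff, ← gen]
    apply IntermediateField.adjoin_le_iff.mpr
    intro z hz
    rcases hz with rfl | rfl | rfl
    · exact huK
    · exact hvK
    · exact hwK
  -- the representation
  set a₂ : ℚ := ((C:ℚ)*t)⁻¹ with ha₂_def
  set a₀ : ℚ := -(s/t) with ha₀_def
  have ha₂ne : a₂ ≠ 0 := inv_ne_zero (mul_ne_zero hCQne htne)
  have h2' : ((((C:ℚ)*t) : ℚ):L) * (u + (a:L) * v) = α^2 - (((C:ℚ)*s : ℚ):L) := by
    push_cast
    linear_combination -hMain
  have hrep : u + (a:L) * v = (a₂:L) * α^2 + ((0:ℚ):L) * α + (a₀:L) := by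
    rw [hsolve _ _ _ (mul_ne_zero hCQne htne) h2', ha₂_def, ha₀_def]
    push_cast
    field_simp
    ring
  constructor
  · -- minDegree = 2
    rw [hcast a]
    have hmem2 : 2 ∈ {d : ℕ | ∃ γ : L, IntermediateField.adjoin ℚ {γ} = ⊤ ∧
        ∃ f : Polynomial ℚ, f.natDegree = d ∧ Polynomial.aeval γ f = u + (a:L) * v} := by
      refine ⟨α, hprim, Polynomial.C a₂ * Polynomial.X^2 + Polynomial.C a₀, ?_, ?_⟩
      · rw [Polynomial.natDegree_add_C, Polynomial.natDegree_C_mul ha₂ne, Polynomial.natDegree_X_pow]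
      · simp only [map_add, map_mul, Polynomial.aeval_C, Polynomial.aeval_X_pow, hcast]
        rw [hrep]
        push_cast
        ring
    apply le_antisymm
    · exact Nat.sInf_le hmem2
    · apply le_csInf ⟨2, hmem2⟩
      rintro d ⟨γ, hγtop, f, hdeg, hval⟩
      by_contra hlt
      push_neg at hlt
      interval_cases d
      all_goals {
        have hfle : f.natDegree ≤ 1 := by omega
        have hf := Polynomial.eq_X_add_C_of_natDegree_le_one hfle
        rw [hf] at hval
        simp only [map_add, map_mul, Polynomial.aeval_C, Polynomial.aeval_X, hcast] at hval
        by_cases hc1 : f.coeff 1 = 0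
        · rw [hc1] at hval
          push_cast at hval
          simp only [zero_mul, zero_add] at hval
          exact hlin (f.coeff 0) (by rw [← hval])
        · have hγmem : γ ∈ IntermediateField.adjoin ℚ {u, v} := by
            have h1 : ((f.coeff 1 : ℚ):L) * γ = (u + (a:L) * v) - ((f.coeff 0 : ℚ):L) := by
              rw [← hval]
              push_cast
              ring
            rw [hsolve _ _ _ hc1 h1]
            exact mul_mem (hQmem _ _) (sub_mem (add_mem
              (IntermediateField.subset_adjoin ℚ _ (by left; rfl))
              (mul_mem (hQmem _ _) (IntermediateField.subset_adjoin ℚ _ (by right; rfl))))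
              (hQmem _ _))
          have huv : IntermediateField.adjoin ℚ {u, v} = ⊤ := by
            rw [eq_top_iff, ← hγtop]
            apply IntermediateField.adjoin_le_iff.mpr
            intro z hz
            rcases hz with rfl
            exact hγmem
          exact adjoin_two_ne_top deg u v (A:ℚ) (B:ℚ)
            (by rw [hcast]; exact_mod_cast hu) (by rw [hcast]; exact_mod_cast hv) huv
      }
  · exact ⟨α, hprim, a₀, 0, a₂, ha₂ne, by simp only [hcast]; exact hrep⟩
end

section
/- Let A, B be integers and let a, b be nonzero rational numbers satisfying a² − 1 = (B − A)b². Then the pair (X, Y) = ((a²/b²)(Bb² + 1), (a²/b³)(Bb² + 1)) satisfies Y² = X(X − a²B)(X − (a²B − A)). Moreover, if Bb² + 1 ≠ 0 then Y ≠ 0, so this is a rational point of the curve that is not a 2-torsion point. -/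
/-- If `a² − 1 = (B − A)b²` with `a, b ≠ 0`, then
`(X, Y) = ((a²/b²)(Bb² + 1), (a²/b³)(Bb² + 1))` lies on the curve
`Y² = X(X − a²B)(X − (a²B − A))`; moreover if `Bb² + 1 ≠ 0` then `Y ≠ 0`,
so this point is not a 2-torsion point. -/
theorem stmt_13 (A B : ℤ) (a b : ℚ) (ha : a ≠ 0) (hb : b ≠ 0)
    (h : a ^ 2 - 1 = ((B : ℚ) - (A : ℚ)) * b ^ 2) :
    (a ^ 2 / b ^ 3 * ((B : ℚ) * b ^ 2 + 1)) ^ 2 =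
      (a ^ 2 / b ^ 2 * ((B : ℚ) * b ^ 2 + 1)) *
        (a ^ 2 / b ^ 2 * ((B : ℚ) * b ^ 2 + 1) - a ^ 2 * (B : ℚ)) *
        (a ^ 2 / b ^ 2 * ((B : ℚ) * b ^ 2 + 1) - (a ^ 2 * (B : ℚ) - (A : ℚ))) ∧
    ((B : ℚ) * b ^ 2 + 1 ≠ 0 → a ^ 2 / b ^ 3 * ((B : ℚ) * b ^ 2 + 1) ≠ 0) := by
  constructor
  · have hA : (A : ℚ) = ((B : ℚ) * b ^ 2 - a ^ 2 + 1) / b ^ 2 := by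
      field_simp
      linarith [h]
    rw [hA]
    field_simp
    ring
  · intro hne
    exact mul_ne_zero (div_ne_zero (pow_ne_zero 2 ha) (pow_ne_zero 3 hb)) hne
end

section
/- Let A, B be integers and let a, b be nonzero rational numbers satisfying a² − 1 = (B − A)b². Then the pair (X, Y) = ((B − A)a², −A(B − A)a²b) satisfies Y² = X(X − a²B)(X − (a²B − A)). Moreover, if A ≠ 0 and B ≠ A then Y ≠ 0, so this is a rational point of the curve that is not a 2-torsion point. -/
/-- If `a² − 1 = (B − A)b²` with `a, b ≠ 0`, then
`(X, Y) = ((B − A)a², −A(B − A)a²b)` lies on the curve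
`Y² = X(X − a²B)(X − (a²B − A))`; moreover if `A ≠ 0` and `B ≠ A` then `Y ≠ 0`,
so this point is not a 2-torsion point. -/
theorem stmt_14 (A B : ℤ) (a b : ℚ) (ha : a ≠ 0) (hb : b ≠ 0)
    (h : a ^ 2 - 1 = ((B : ℚ) - (A : ℚ)) * b ^ 2) :
    (-((A : ℚ) * ((B : ℚ) - (A : ℚ)) * a ^ 2 * b)) ^ 2 =
      (((B : ℚ) - (A : ℚ)) * a ^ 2) *
        (((B : ℚ) - (A : ℚ)) * a ^ 2 - a ^ 2 * (B : ℚ)) *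
        (((B : ℚ) - (A : ℚ)) * a ^ 2 - (a ^ 2 * (B : ℚ) - (A : ℚ))) ∧
    (A ≠ 0 → B ≠ A → -((A : ℚ) * ((B : ℚ) - (A : ℚ)) * a ^ 2 * b) ≠ 0) := by
  constructor
  · linear_combination (-(A : ℚ)^2 * a^4 * ((B : ℚ) - A)) * h
  · intro hA hBA
    have h1 : (A : ℚ) ≠ 0 := Int.cast_ne_zero.mpr hA
    have h2 : (B : ℚ) - A ≠ 0 := by
      intro hc
      exact hBA (by exact_mod_cast sub_eq_zero.mp hc)
    simp only [neg_ne_zero]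
    exact mul_ne_zero (mul_ne_zero (mul_ne_zero h1 h2) (pow_ne_zero 2 ha)) hb
end

section
/- Let L = ℚ(√A, √B, √C) be a triquadratic number field such that B − A = c² for some nonzero integer c. Then the set of rational numbers a for which min deg_L(√A + a√B) = 2 is infinite. (For any integers m > n > 0, the pair a = (m² + n²)/(m² − n²), b = 2mn/(c(m² − n²)) satisfies a² − 1 = (B − A)b², and each such a works.) -/
open Polynomial IntermediateField

lemma not_rat_sq {D : ℤ} (hD : Squarefree D) (hD1 : D ≠ 1) (q : ℚ) : q ^ 2 ≠ (D : ℚ) := by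
  intro h
  have hden : (q ^ 2).den = 1 := by rw [h]; exact Rat.den_intCast D
  have hden1 : q.den = 1 := by
    have h2 := Rat.den_pow q 2
    rw [hden] at h2
    nlinarith [q.den_pos, h2.symm, sq_nonneg q.den]
  have hq : (q.num : ℚ) = q := by
    conv_rhs => rw [← Rat.num_div_den q]
    rw [hden1]; simp
  have hnum : q.num ^ 2 = D := by
    have : ((q.num : ℚ)) ^ 2 = (D : ℚ) := by rw [hq]; exact h
    exact_mod_cast this
  have : IsUnit q.num := hD q.num ⟨1, by rw [← hnum]; ring⟩
  rcases Int.isUnit_iff.mp this with h1 | h1 <;> rw [h1] at hnum <;> omega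

section Main

variable {A B C : ℤ} {L : Type*} [Field L] [Algebra ℚ L] {u v w : L}

set_option maxHeartbeats 1000000 in
/-- Main lemma: if `a^2 - 1 = (B-A) b^2` with `a, b ≠ 0`, then
`min deg (√A + a √B) = 2`. -/
lemma mindeg_aux (hL : IsTriquadratic A B C L u v w) (c : ℤ) (hc : c ≠ 0)
    (hBA : B - A = c ^ 2) (a b : ℚ) (ha : a ≠ 0) (hb : b ≠ 0)
    (hab : a ^ 2 - 1 = ((B : ℚ) - (A : ℚ)) * b ^ 2) :
    minDegree L (u + algebraMap ℚ L a * v) = 2 := by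
  set φ := algebraMap ℚ L with hφ
  have hinj : Function.Injective φ := (algebraMap ℚ L).injective
  have hu := hL.hu
  have hv := hL.hv
  rw [← hφ] at hu hv
  -- basic facts
  have NSQA := not_rat_sq hL.sqfA hL.A_ne_one
  have NSQB := not_rat_sq hL.sqfB hL.B_ne_one
  have hABsf : Squarefree (A * B) := hL.sqfABC.squarefree_of_dvd ⟨C, rfl⟩
  have hAB1 : A * B ≠ 1 := by
    intro h
    rcases Int.mul_eq_one_iff_eq_one_or_neg_one.mp h with ⟨h1, h2⟩ | ⟨h1, h2⟩
    · exact hL.A_ne_one h1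
    · exact hL.A_ne_B (h1.trans h2.symm)
  have NSQAB := not_rat_sq hABsf hAB1
  have hA0 : (A : ℚ) ≠ 0 := Int.cast_ne_zero.mpr hL.A_ne_zero
  have hB0 : (B : ℚ) ≠ 0 := Int.cast_ne_zero.mpr hL.B_ne_zero
  have hC0 : (C : ℚ) ≠ 0 := Int.cast_ne_zero.mpr hL.C_ne_zero
  have hcQ : (c : ℚ) ≠ 0 := Int.cast_ne_zero.mpr hc
  have hBQ : (B : ℚ) = (A : ℚ) + (c : ℚ) ^ 2 := by
    have h0 : ((B - A : ℤ) : ℚ) = ((c ^ 2 : ℤ) : ℚ) := by rw [hBA]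
    push_cast at h0; linarith
  have ha2 : a ^ 2 = 1 + (c : ℚ) ^ 2 * b ^ 2 := by
    rw [hBQ] at hab; ring_nf at hab ⊢; linarith
  have haB : a ^ 2 * (B : ℚ) ≠ (A : ℚ) := by
    intro h
    apply NSQAB (a * B)
    push_cast
    linear_combination (B : ℚ) * h
  -- the rational constants
  set e : ℚ := ((A : ℚ) * b ^ 2 - 1) / (2 * b) with he_def
  set a0 : ℚ := ((A : ℚ) * b ^ 2 + 1) / (2 * b) with ha0_def
  set g : ℚ := (((A : ℚ) + 2 * (c : ℚ) ^ 2) * b ^ 2 + 1) / (2 * b) with hg_def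
  have he : e ≠ 0 := by
    intro h
    apply NSQA (1 / b)
    rw [he_def] at h
    field_simp at h ⊢
    linarith
  have R1 : a0 ^ 2 = (A : ℚ) + e ^ 2 := by
    rw [ha0_def, he_def]; field_simp; ring
  have R2 : g ^ 2 = a ^ 2 * (B : ℚ) + e ^ 2 := by
    rw [hg_def, he_def, ha2, hBQ]; field_simp; ring
  set a1 : ℚ := g / e with ha1_def
  set t : ℚ := -(a0 * a1) with ht_def
  set v1 : ℚ := 1 + a1 with hv1_def
  set wn : ℚ := (a0 + e) * v1 with hwn_def
  have R3 : a1 * e = g := by rw [ha1_def]; field_simp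
  have heg : e + g = b * (B : ℚ) := by
    rw [he_def, hg_def, hBQ]; field_simp; ring
  have hv1 : v1 ≠ 0 := by
    intro h
    have h1 : v1 * e = e + g := by rw [hv1_def]; linear_combination R3
    rw [h] at h1
    have : b * (B : ℚ) = 0 := by rw [← heg, ← h1]; ring
    exact (mul_ne_zero hb hB0) this
  have hae : a0 + e = (A : ℚ) * b := by rw [ha0_def, he_def]; field_simp; ring
  have hwn : wn ≠ 0 := by
    rw [hwn_def, hae]; exact mul_ne_zero (mul_ne_zero hA0 hb) hv1
  have S1 : a0 ^ 2 + a1 ^ 2 * (A : ℚ) + a ^ 2 * (B : ℚ) = a0 ^ 2 * a1 ^ 2 + (A : ℚ) := by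
    linear_combination (1 - a1 ^ 2) * R1 - R2 - (a1 * e + g) * R3
  -- mapped facts
  have S1L : (φ a0) ^ 2 + (φ a1) ^ 2 * φ (A : ℚ) + (φ a) ^ 2 * φ (B : ℚ)
      = (φ a0) ^ 2 * (φ a1) ^ 2 + φ (A : ℚ) := by
    simpa only [map_add, map_mul, map_pow] using congrArg φ S1
  have R1L : (φ a0) ^ 2 = φ (A : ℚ) + (φ e) ^ 2 := by
    simpa only [map_add, map_mul, map_pow] using congrArg φ R1
  have hφt : φ t = -(φ a0 * φ a1) := by rw [ht_def, map_neg, map_mul]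
  have hφN : φ (e * v1) = φ e * φ v1 := map_mul φ e v1
  have hφv1 : φ v1 = 1 + φ a1 := by rw [hv1_def, map_add, map_one]
  have hφwn : φ wn = (φ a0 + φ e) * φ v1 := by rw [hwn_def, map_mul, map_add]
  -- x is irrational
  have hxrat : ∀ q : ℚ, u + φ a * v ≠ φ q := by
    intro q h
    have hu' : (φ q - φ a * v) ^ 2 = φ (A : ℚ) := by
      linear_combination hu - (φ q - φ a * v + u) * h
    have veq : (2 * φ q * φ a) * v = φ q ^ 2 + φ a ^ 2 * φ (B : ℚ) - φ (A : ℚ) := by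
      linear_combination (φ a) ^ 2 * hv - hu'
    by_cases hq : q = 0
    · rw [hq] at veq
      simp only [map_zero, mul_zero, zero_mul, ne_eq, OfNat.ofNat_ne_zero,
        not_false_eq_true, zero_pow, zero_add] at veq
      apply haB
      apply hinj
      simp only [map_mul, map_pow]
      linear_combination -veq
    · set s : ℚ := (q ^ 2 + a ^ 2 * B - A) / (2 * q * a) with hs_def
      have h2q : (2 * q * a) ≠ 0 := mul_ne_zero (mul_ne_zero two_ne_zero hq) ha
      have hs : v = φ s := by
        apply mul_right_cancel₀ ((map_ne_zero φ).mpr h2q)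
        rw [← map_mul]
        have hsc : s * (2 * q * a) = q ^ 2 + a ^ 2 * (B : ℚ) - (A : ℚ) := by
          rw [hs_def]; field_simp
        rw [hsc]
        simp only [map_sub, map_add, map_pow, map_mul, map_ofNat]
        linear_combination veq
      apply NSQB s
      apply hinj
      rw [map_pow, ← hs, hv]
  -- key identities in L
  have I1 : ((u + φ a * v - φ t) + (φ a0 + φ a1 * u)) ^ 2
      = 2 * (u + φ a * v - φ t) * (u - φ t + (φ a0 + φ a1 * u)) := by
    rw [hφt]
    linear_combination ((φ a1) ^ 2 - 1) * hu + (φ a) ^ 2 * hv + S1L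
  have I2 : ((u - φ t + (φ a0 + φ a1 * u)) + φ (e * v1)) ^ 2
      = 2 * (u - φ t + (φ a0 + φ a1 * u)) * φ wn := by
    rw [hφt, hφN, hφwn, hφv1]
    linear_combination (1 + φ a1) ^ 2 * hu - (1 + φ a1) ^ 2 * R1L
  have key : (u + φ a * v - φ t) * ((u - φ t + (φ a0 + φ a1 * u)) + φ (e * v1)) ^ 2
      = φ wn * ((u + φ a * v - φ t) + (φ a0 + φ a1 * u)) ^ 2 := by
    rw [I2, I1]; ring
  have hzNeq : (u - φ t + (φ a0 + φ a1 * u)) + φ (e * v1) = φ wn + φ v1 * u := by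
    rw [hφt, hφN, hφwn, hφv1]; ring
  have hv1L : φ v1 ≠ 0 := (map_ne_zero φ).mpr hv1
  have hwnL : φ wn ≠ 0 := (map_ne_zero φ).mpr hwn
  have hzN0 : (u - φ t + (φ a0 + φ a1 * u)) + φ (e * v1) ≠ 0 := by
    rw [hzNeq]
    intro h
    apply NSQA (-(wn / v1))
    apply hinj
    have hueq : u = φ (-(wn / v1)) := by
      have h1 : φ v1 * u = φ v1 * φ (-(wn / v1)) := by
        rw [← map_mul]
        have hc1 : v1 * -(wn / v1) = -wn := by field_simp
        rw [hc1, map_neg]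
        linear_combination h
      exact mul_left_cancel₀ hv1L h1
    rw [map_pow, ← hueq, hu]
  set γ : L := ((u + φ a * v - φ t) + (φ a0 + φ a1 * u))
      * (((u - φ t + (φ a0 + φ a1 * u)) + φ (e * v1)))⁻¹ with hγ_def
  have hγsq : φ wn * γ ^ 2 = u + φ a * v - φ t := by
    have h2 : ((u - φ t + (φ a0 + φ a1 * u)) + φ (e * v1)) ^ 2 ≠ 0 := pow_ne_zero _ hzN0
    rw [hγ_def, mul_pow, inv_pow, ← div_eq_mul_inv, mul_div_assoc']
    rw [div_eq_iff h2]
    linear_combination -key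
  have hy0 : u + φ a * v - φ t ≠ 0 := sub_ne_zero.mpr (hxrat t)
  have hγ0 : γ ≠ 0 := by
    intro h
    apply hy0
    rw [← hγsq, h]; ring

  -- upper bound material
  set β : L := γ * w with hβ_def
  have hwL := hL.hw
  rw [← hφ] at hwL
  have hβsq : β ^ 2 = φ (C : ℚ) * γ ^ 2 := by
    rw [hβ_def, mul_pow, hwL]; ring
  have hφC : φ (wn / (C : ℚ)) * φ (C : ℚ) = φ wn := by
    rw [← map_mul]; congr 1; field_simp
  have hinv : ∀ r : ℚ, r ≠ 0 → φ (1 / r) * φ r = 1 := fun r hr => by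
    rw [← map_mul, one_div, inv_mul_cancel₀ hr, map_one]
  set T := IntermediateField.adjoin ℚ {β} with hT_def
  have hβT : β ∈ T := IntermediateField.mem_adjoin_simple_self ℚ β
  have hmapT : ∀ q : ℚ, φ q ∈ T := fun q => T.algebraMap_mem q
  have hyT : u + φ a * v - φ t ∈ T := by
    have hyeq : u + φ a * v - φ t = φ (wn / (C : ℚ)) * β ^ 2 := by
      rw [hβsq, ← hγsq, ← mul_assoc, hφC]
    rw [hyeq]
    exact T.mul_mem (hmapT _) (pow_mem hβT 2)
  have hxT : u + φ a * v ∈ T := by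
    have hh : u + φ a * v = (u + φ a * v - φ t) + φ t := by ring
    rw [hh]; exact T.add_mem hyT (hmapT t)
  have h2a : (2 * a) ≠ 0 := mul_ne_zero two_ne_zero ha
  have hsq2 : φ (2 * a) * (u * v) = (u + φ a * v) ^ 2 - φ ((A : ℚ) + a ^ 2 * (B : ℚ)) := by
    simp only [map_add, map_mul, map_pow, map_ofNat]
    linear_combination -hu - (φ a) ^ 2 * hv
  have huvT : u * v ∈ T := by
    have hh : u * v = φ (1 / (2 * a)) * (φ (2 * a) * (u * v)) := by
      rw [← mul_assoc, hinv _ h2a, one_mul]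
    rw [hh, hsq2]
    exact T.mul_mem (hmapT _) (T.sub_mem (pow_mem hxT 2) (hmapT _))
  have hQT : φ (a * (B : ℚ)) * u + φ (A : ℚ) * v ∈ T := by
    have hh : φ (a * (B : ℚ)) * u + φ (A : ℚ) * v = (u + φ a * v) * (u * v) := by
      simp only [map_mul]
      linear_combination -v * hu - (φ a * u) * hv
    rw [hh]; exact T.mul_mem hxT huvT
  have hDQ : (A : ℚ) - a ^ 2 * B ≠ 0 := sub_ne_zero.mpr (fun h => haB h.symm)
  have huT : u ∈ T := by
    have h1 : φ ((A : ℚ) - a ^ 2 * B) * u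
        = φ (A : ℚ) * (u + φ a * v) - φ a * (φ (a * (B : ℚ)) * u + φ (A : ℚ) * v) := by
      simp only [map_sub, map_mul, map_pow]
      ring
    have h2 : u = φ (1 / ((A : ℚ) - a ^ 2 * B)) * (φ ((A : ℚ) - a ^ 2 * B) * u) := by
      rw [← mul_assoc, hinv _ hDQ, one_mul]
    rw [h2, h1]
    exact T.mul_mem (hmapT _)
      (T.sub_mem (T.mul_mem (hmapT _) hxT) (T.mul_mem (hmapT _) hQT))
  have hvT : v ∈ T := by
    have h2 : v = φ (1 / a) * (φ a * v) := by rw [← mul_assoc, hinv _ ha, one_mul]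
    have h1 : φ a * v = (u + φ a * v) - u := by ring
    rw [h2, h1]; exact T.mul_mem (hmapT _) (T.sub_mem hxT huT)
  have hγT : γ ∈ T := by
    rw [hγ_def]
    refine T.mul_mem ?_ (T.inv_mem ?_)
    · exact T.add_mem (T.sub_mem (T.add_mem huT (T.mul_mem (hmapT a) hvT)) (hmapT t))
        (T.add_mem (hmapT a0) (T.mul_mem (hmapT a1) huT))
    · exact T.add_mem (T.add_mem (T.sub_mem huT (hmapT t))
        (T.add_mem (hmapT a0) (T.mul_mem (hmapT a1) huT))) (hmapT _)
  have hwT : w ∈ T := by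
    have hh : w = γ⁻¹ * β := by rw [hβ_def, ← mul_assoc, inv_mul_cancel₀ hγ0, one_mul]
    rw [hh]; exact T.mul_mem (T.inv_mem hγT) hβT
  have hβtop : IntermediateField.adjoin ℚ {β} = ⊤ := by
    apply le_antisymm le_top
    rw [← hL.gen, IntermediateField.adjoin_le_iff]
    intro x hx
    simp only [Set.mem_insert_iff, Set.mem_singleton_iff] at hx
    rcases hx with rfl | rfl | rfl
    · exact huT
    · exact hvT
    · exact hwT
  have hkne : wn / (C : ℚ) ≠ 0 := div_ne_zero hwn hC0
  have hfdeg : (Polynomial.C (wn / (C : ℚ)) * Polynomial.X ^ 2 + Polynomial.C (0 : ℚ) *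
      Polynomial.X + Polynomial.C t).natDegree = 2 := Polynomial.natDegree_quadratic hkne
  have hfeval : Polynomial.aeval β (Polynomial.C (wn / (C : ℚ)) * Polynomial.X ^ 2 +
      Polynomial.C (0 : ℚ) * Polynomial.X + Polynomial.C t) = u + φ a * v := by
    simp only [map_add, map_mul, Polynomial.aeval_C, Polynomial.aeval_X, map_pow, map_zero,
      zero_mul, add_zero]
    rw [hβsq]
    linear_combination hγsq + γ ^ 2 * hφC
  -- x has degree at most 4
  have hPeval : Polynomial.aeval (u + φ a * v) ((Polynomial.X ^ 2 -
      Polynomial.C ((A : ℚ) + a ^ 2 * (B : ℚ))) ^ 2 -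
      Polynomial.C (4 * a ^ 2 * (A : ℚ) * (B : ℚ))) = 0 := by
    simp only [map_sub, map_pow, Polynomial.aeval_X, Polynomial.aeval_C, map_mul, map_add,
      map_ofNat]
    linear_combination ((u ^ 2 - φ (A : ℚ)) + 2 * (φ a) ^ 2 * (v ^ 2 - φ (B : ℚ)) +
      4 * (φ a) * (u * v) + 4 * (φ a) ^ 2 * v ^ 2) * hu +
      ((φ a) ^ 4 * (v ^ 2 - φ (B : ℚ)) + 4 * (φ a) ^ 3 * (u * v) +
      4 * (φ a) ^ 2 * (φ (A : ℚ))) * hv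
  have hPmonic : ((Polynomial.X ^ 2 - Polynomial.C ((A : ℚ) + a ^ 2 * (B : ℚ))) ^ 2 -
      Polynomial.C (4 * a ^ 2 * (A : ℚ) * (B : ℚ))).Monic := by
    apply Polynomial.Monic.sub_of_left ((Polynomial.monic_X_pow_sub_C _ two_ne_zero).pow 2)
    have hd4 : ((Polynomial.X ^ 2 - Polynomial.C ((A : ℚ) + a ^ 2 * (B : ℚ))) ^ 2).degree
        = ((4 : ℕ) : WithBot ℕ) := by
      rw [Polynomial.degree_eq_natDegree (Polynomial.Monic.ne_zero
        ((Polynomial.monic_X_pow_sub_C _ two_ne_zero).pow 2))]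
      rw [Polynomial.natDegree_pow, Polynomial.natDegree_X_pow_sub_C]
    rw [hd4]
    exact lt_of_le_of_lt Polynomial.degree_C_le (by decide)
  have hP4 : ((Polynomial.X ^ 2 - Polynomial.C ((A : ℚ) + a ^ 2 * (B : ℚ))) ^ 2 -
      Polynomial.C (4 * a ^ 2 * (A : ℚ) * (B : ℚ))).natDegree = 4 := by
    rw [Polynomial.natDegree_sub_C, Polynomial.natDegree_pow, Polynomial.natDegree_X_pow_sub_C]
  have hxint : IsIntegral ℚ (u + φ a * v) := by
    refine ⟨(Polynomial.X ^ 2 - Polynomial.C ((A : ℚ) + a ^ 2 * (B : ℚ))) ^ 2 -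
      Polynomial.C (4 * a ^ 2 * (A : ℚ) * (B : ℚ)), hPmonic, ?_⟩
    rw [← Polynomial.aeval_def]; exact hPeval
  have hdegx : Module.finrank ℚ (IntermediateField.adjoin ℚ {u + φ a * v}) ≤ 4 := by
    rw [IntermediateField.adjoin.finrank hxint]
    refine le_trans (Polynomial.natDegree_le_of_dvd (minpoly.dvd ℚ _ hPeval)
      hPmonic.ne_zero) ?_
    rw [hP4]
  -- conclusion
  have hmem2 : (2 : ℕ) ∈ {d : ℕ | ∃ α : L, IntermediateField.adjoin ℚ {α} = ⊤ ∧
      ∃ f : Polynomial ℚ, f.natDegree = d ∧ Polynomial.aeval α f = u + φ a * v} :=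
    ⟨β, hβtop, _, hfdeg, hfeval⟩
  unfold minDegree
  apply le_antisymm
  · exact Nat.sInf_le hmem2
  · apply le_csInf ⟨2, hmem2⟩
    rintro d ⟨α, hαtop, f, hfd, hfx⟩
    by_contra hlt
    push_neg at hlt
    interval_cases d
    · have hfc : f = Polynomial.C (f.coeff 0) := Polynomial.eq_C_of_natDegree_eq_zero hfd
      rw [hfc] at hfx
      simp only [Polynomial.aeval_C] at hfx
      exact hxrat _ hfx.symm
    · have hf0 : f ≠ 0 := fun h => by simp [h] at hfd
      have hf1 : f.coeff 1 ≠ 0 := by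
        rw [← hfd]; exact Polynomial.leadingCoeff_ne_zero.mpr hf0
      have hfform : f = Polynomial.C (f.coeff 1) * Polynomial.X + Polynomial.C (f.coeff 0) :=
        Polynomial.eq_X_add_C_of_natDegree_le_one (by rw [hfd])
      rw [hfform] at hfx
      simp only [map_add, map_mul, Polynomial.aeval_C, Polynomial.aeval_X] at hfx
      have hαmem : α ∈ IntermediateField.adjoin ℚ {u + φ a * v} := by
        have hc1 : φ (1 / f.coeff 1) * φ (f.coeff 1) = 1 := hinv _ hf1
        have hαeq : α = φ (1 / f.coeff 1) * ((u + φ a * v) - φ (f.coeff 0)) := by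
          rw [← hfx]
          calc α = (φ (1 / f.coeff 1) * φ (f.coeff 1)) * α := by rw [hc1, one_mul]
          _ = φ (1 / f.coeff 1) * (φ (f.coeff 1) * α + φ (f.coeff 0) - φ (f.coeff 0)) := by
              ring
        rw [hαeq]
        exact mul_mem ((IntermediateField.adjoin ℚ _).algebraMap_mem _)
          (sub_mem (IntermediateField.mem_adjoin_simple_self ℚ _)
            ((IntermediateField.adjoin ℚ _).algebraMap_mem _))
      have htop2 : IntermediateField.adjoin ℚ {u + φ a * v} = ⊤ := by
        apply le_antisymm le_top
        rw [← hαtop]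
        exact IntermediateField.adjoin_le_iff.mpr (Set.singleton_subset_iff.mpr hαmem)
      have h8 : Module.finrank ℚ (IntermediateField.adjoin ℚ {u + φ a * v}) = 8 := by
        rw [htop2, IntermediateField.finrank_top']
        exact hL.deg
      omega


end Main

/-- If `L = ℚ(√A, √B, √C)` is triquadratic with `B − A = c²` for a nonzero integer `c`,
then the set of rationals `a` with `min deg_L(√A + a√B) = 2` is infinite; indeed for all
integers `m > n > 0`, the pair `a = (m² + n²)/(m² − n²)`, `b = 2mn/(c(m² − n²))`
satisfies `a² − 1 = (B − A)b²`, and each such `a` works. -/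
theorem stmt_15 (A B C : ℤ) (L : Type*) [Field L] [Algebra ℚ L] (u v w : L)
    (hL : IsTriquadratic A B C L u v w) (c : ℤ) (hc : c ≠ 0) (hBA : B - A = c ^ 2) :
    {a : ℚ | minDegree L (u + algebraMap ℚ L a * v) = 2}.Infinite ∧
    ∀ m n : ℤ, 0 < n → n < m →
      (((m : ℚ) ^ 2 + (n : ℚ) ^ 2) / ((m : ℚ) ^ 2 - (n : ℚ) ^ 2)) ^ 2 - 1 =
          ((B : ℚ) - (A : ℚ)) *
            (2 * (m : ℚ) * (n : ℚ) / ((c : ℚ) * ((m : ℚ) ^ 2 - (n : ℚ) ^ 2))) ^ 2 ∧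
      minDegree L (u + algebraMap ℚ L
          (((m : ℚ) ^ 2 + (n : ℚ) ^ 2) / ((m : ℚ) ^ 2 - (n : ℚ) ^ 2)) * v) = 2 := by
  have hcQ : (c : ℚ) ≠ 0 := Int.cast_ne_zero.mpr hc
  have hBAQ : (B : ℚ) - (A : ℚ) = (c : ℚ) ^ 2 := by
    have h0 : ((B - A : ℤ) : ℚ) = ((c ^ 2 : ℤ) : ℚ) := by rw [hBA]
    push_cast at h0; linarith
  have main : ∀ M N : ℚ, 0 < N → N < M →
      minDegree L (u + algebraMap ℚ L ((M ^ 2 + N ^ 2) / (M ^ 2 - N ^ 2)) * v) = 2 := by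
    intro M N hN hM
    have hMN : 0 < M ^ 2 - N ^ 2 := by nlinarith
    apply mindeg_aux hL c hc hBA _ (2 * M * N / ((c : ℚ) * (M ^ 2 - N ^ 2)))
    · exact ne_of_gt (div_pos (by nlinarith) hMN)
    · exact div_ne_zero (ne_of_gt (by nlinarith)) (mul_ne_zero hcQ (ne_of_gt hMN))
    · rw [hBAQ]
      field_simp
      ring
  constructor
  · apply Set.infinite_of_injective_forall_mem
      (f := fun k : ℕ => ((((k : ℚ) + 2) ^ 2 + 1 ^ 2) / (((k : ℚ) + 2) ^ 2 - 1 ^ 2)))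
    · have hstrict : StrictAnti fun k : ℕ =>
          ((((k : ℚ) + 2) ^ 2 + 1 ^ 2) / (((k : ℚ) + 2) ^ 2 - 1 ^ 2)) := by
        intro j k hjk
        have hj : (0 : ℚ) ≤ (j : ℚ) := Nat.cast_nonneg j
        have hk : (0 : ℚ) ≤ (k : ℚ) := Nat.cast_nonneg k
        have hjk' : (j : ℚ) < (k : ℚ) := by exact_mod_cast hjk
        have hdj : (0 : ℚ) < ((j : ℚ) + 2) ^ 2 - 1 ^ 2 := by nlinarith
        have hdk : (0 : ℚ) < ((k : ℚ) + 2) ^ 2 - 1 ^ 2 := by nlinarith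
        have heq : ∀ x : ℚ, 0 ≤ x →
            ((x + 2) ^ 2 + 1 ^ 2) / ((x + 2) ^ 2 - 1 ^ 2) = 1 + 2 / ((x + 2) ^ 2 - 1) := by
          intro x hx
          have : (x + 2) ^ 2 - 1 ≠ 0 := by nlinarith
          field_simp
          ring
        simp only
        rw [heq _ hj, heq _ hk]
        have hlt : ((j : ℚ) + 2) ^ 2 - 1 < ((k : ℚ) + 2) ^ 2 - 1 := by nlinarith
        have := div_lt_div_of_pos_left (by norm_num : (0:ℚ) < 2) (by nlinarith) hlt
        linarith
      exact hstrict.injective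
    · intro k
      simp only [Set.mem_setOf_eq]
      apply main
      · norm_num
      · have : (0 : ℚ) ≤ (k : ℚ) := Nat.cast_nonneg k
        nlinarith
  · intro m n hn hm
    have hnQ : (0 : ℚ) < (n : ℚ) := by exact_mod_cast hn
    have hmQ : (n : ℚ) < (m : ℚ) := by exact_mod_cast hm
    have hMN : (0 : ℚ) < (m : ℚ) ^ 2 - (n : ℚ) ^ 2 := by nlinarith
    refine ⟨?_, main _ _ hnQ hmQ⟩
    rw [hBAQ]
    have h1 : (m : ℚ) ^ 2 - (n : ℚ) ^ 2 ≠ 0 := ne_of_gt hMN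
    field_simp
    ring
end

section
/- Let A, B be distinct square-free nonzero integers and let a be a nonzero rational number. Suppose (X, Y) ∈ ℚ² satisfies Y² = X(X − a²B)(X − (a²B − A)) with Y ≠ 0. Then there exist nonzero rational numbers y, z satisfying aB·y·z² − a·y = A·z² − y². (Explicitly, y = AX/(aB(X − (a²B − A))) and z = Y/(aB(X − (a²B − A))), which are well defined and nonzero since Y ≠ 0 forces X ∉ {0, a²B, a²B − A}.) -/
/-- Let `A, B` be distinct square-free nonzero integers, `a` a nonzero rational, and
`(X, Y) ∈ ℚ²` a point on `Y² = X(X − a²B)(X − (a²B − A))` with `Y ≠ 0`. Then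
`X ∉ {0, a²B, a²B − A}`, and the explicit nonzero rationals
`y = AX/(aB(X − (a²B − A)))` and `z = Y/(aB(X − (a²B − A)))` satisfy
`aB·y·z² − a·y = A·z² − y²`. -/
theorem stmt_16 (A B : ℤ) (hA : Squarefree A) (hB : Squarefree B) (hAB : A ≠ B)
    (hA0 : A ≠ 0) (hB0 : B ≠ 0) (a : ℚ) (ha : a ≠ 0) (X Y : ℚ) (hY : Y ≠ 0)
    (hE : Y ^ 2 = X * (X - a ^ 2 * (B : ℚ)) * (X - (a ^ 2 * (B : ℚ) - (A : ℚ)))) :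
    (X ≠ 0 ∧ X ≠ a ^ 2 * (B : ℚ) ∧ X ≠ a ^ 2 * (B : ℚ) - (A : ℚ)) ∧
    ∃ y z : ℚ, y ≠ 0 ∧ z ≠ 0 ∧
      y = (A : ℚ) * X / (a * (B : ℚ) * (X - (a ^ 2 * (B : ℚ) - (A : ℚ)))) ∧
      z = Y / (a * (B : ℚ) * (X - (a ^ 2 * (B : ℚ) - (A : ℚ)))) ∧
      a * (B : ℚ) * y * z ^ 2 - a * y = (A : ℚ) * z ^ 2 - y ^ 2 := by
  have hprod : X * (X - a ^ 2 * (B : ℚ)) * (X - (a ^ 2 * (B : ℚ) - (A : ℚ))) ≠ 0 :=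
    hE ▸ pow_ne_zero 2 hY
  obtain ⟨⟨hX, h1⟩, h2⟩ :
      (X ≠ 0 ∧ X - a ^ 2 * (B : ℚ) ≠ 0) ∧ X - (a ^ 2 * (B : ℚ) - (A : ℚ)) ≠ 0 := by
    rw [← mul_ne_zero_iff, ← mul_ne_zero_iff]; exact hprod
  have hBQ : (B : ℚ) ≠ 0 := Int.cast_ne_zero.mpr hB0
  have hAQ : (A : ℚ) ≠ 0 := Int.cast_ne_zero.mpr hA0
  have hden : a * (B : ℚ) * (X - (a ^ 2 * (B : ℚ) - (A : ℚ))) ≠ 0 :=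
    mul_ne_zero (mul_ne_zero ha hBQ) h2
  refine ⟨⟨hX, sub_ne_zero.mp h1, sub_ne_zero.mp h2⟩,
    (A : ℚ) * X / (a * (B : ℚ) * (X - (a ^ 2 * (B : ℚ) - (A : ℚ)))),
    Y / (a * (B : ℚ) * (X - (a ^ 2 * (B : ℚ) - (A : ℚ)))),
    div_ne_zero (mul_ne_zero hAQ hX) hden, div_ne_zero hY hden, rfl, rfl, ?_⟩
  field_simp
  linear_combination (a ^ 2 * (B:ℚ) - (A:ℚ)) * hE
end

section
/- Let L = ℚ(√A, √B, √C) be a triquadratic number field, let a be a nonzero rational number, and suppose α is a primitive element of L for which there exist rationals a₀, a₁, a₂ with a₂ ≠ 0 and √A + a√B = a₂α² + a₁α + a₀. Write α = b₀ + b₁√A + b₂√B + b₃√C + b₄√(AB) + b₅√(AC) + b₆√(BC) + b₇√(ABC) with all bᵢ ∈ ℚ. Then b₁ = b₂ = b₄ = 0, i.e. α lies in the ℚ-span of {1, √C, √(AC), √(BC), √(ABC)}, and moreover b₅ ≠ 0. -/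
set_option maxHeartbeats 3200000 in
/-- Let `L = ℚ(√A, √B, √C)` be triquadratic, `a ≠ 0` rational, and `α` a primitive
element of `L` with `√A + a√B = a₂α² + a₁α + a₀` for some rationals `a₀, a₁, a₂`,
`a₂ ≠ 0`. Writing `α = b₀ + b₁√A + b₂√B + b₃√C + b₄√(AB) + b₅√(AC) + b₆√(BC) + b₇√(ABC)`
with all `bᵢ ∈ ℚ`, one has `b₁ = b₂ = b₄ = 0` and `b₅ ≠ 0`. -/
theorem stmt_17 (A B C : ℤ) (L : Type*) [Field L] [Algebra ℚ L] (u v w : L)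
    (hL : IsTriquadratic A B C L u v w) (a : ℚ) (ha : a ≠ 0)
    (α : L) (hα : IntermediateField.adjoin ℚ {α} = ⊤)
    (b₀ b₁ b₂ b₃ b₄ b₅ b₆ b₇ : ℚ)
    (hrep : α = algebraMap ℚ L b₀ + algebraMap ℚ L b₁ * u + algebraMap ℚ L b₂ * v +
        algebraMap ℚ L b₃ * w + algebraMap ℚ L b₄ * (u * v) + algebraMap ℚ L b₅ * (u * w) +
        algebraMap ℚ L b₆ * (v * w) + algebraMap ℚ L b₇ * (u * v * w))
    (a₀ a₁ a₂ : ℚ) (ha₂ : a₂ ≠ 0)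
    (heq : u + algebraMap ℚ L a * v =
        algebraMap ℚ L a₂ * α ^ 2 + algebraMap ℚ L a₁ * α + algebraMap ℚ L a₀) :
    b₁ = 0 ∧ b₂ = 0 ∧ b₄ = 0 ∧ b₅ ≠ 0 := by
  obtain ⟨-, -, -, -, -, -, -, -, -, -, hA0, hB0, hC0, -, -, -, -, ju, jv, jw, jgen, jdeg⟩ := hL
  haveI hfd : FiniteDimensional ℚ L :=
    Module.finite_of_finrank_pos (by rw [jdeg]; norm_num)
  haveI halgL : Algebra.IsAlgebraic ℚ L := Algebra.IsAlgebraic.of_finite ℚ L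
  -- the span of the eight basis elements
  set S : Set L := {1, u, v, w, u*v, u*w, v*w, u*v*w} with hS
  have mem1 : (1:L) ∈ Submodule.span ℚ S := Submodule.subset_span (by simp [hS])
  have memu : u ∈ Submodule.span ℚ S := Submodule.subset_span (by simp [hS])
  have memv : v ∈ Submodule.span ℚ S := Submodule.subset_span (by simp [hS])
  have memw : w ∈ Submodule.span ℚ S := Submodule.subset_span (by simp [hS])
  have memuv : u*v ∈ Submodule.span ℚ S := Submodule.subset_span (by simp [hS])
  have memuw : u*w ∈ Submodule.span ℚ S := Submodule.subset_span (by simp [hS])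
  have memvw : v*w ∈ Submodule.span ℚ S := Submodule.subset_span (by simp [hS])
  have memuvw : u*v*w ∈ Submodule.span ℚ S := Submodule.subset_span (by simp [hS])
  have hscale : ∀ (q : ℚ) (x : L), x ∈ Submodule.span ℚ S → algebraMap ℚ L q * x ∈ Submodule.span ℚ S := by
    intro q x hx
    rw [← Algebra.smul_def]
    exact Submodule.smul_mem _ q hx
  have humul : ∀ t ∈ Submodule.span ℚ S, u * t ∈ Submodule.span ℚ S := by
    intro t ht
    induction ht using Submodule.span_induction with
    | mem z hz =>
      simp only [hS, Set.mem_insert_iff, Set.mem_singleton_iff] at hz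
      rcases hz with h|h|h|h|h|h|h|h <;> rw [h]
      · rw [mul_one]; exact memu
      · rw [show u * u = algebraMap ℚ L (A:ℚ) * 1 by linear_combination ju]
        exact hscale _ _ mem1
      · exact memuv
      · exact memuw
      · rw [show u * (u*v) = algebraMap ℚ L (A:ℚ) * v by linear_combination v * ju]
        exact hscale _ _ memv
      · rw [show u * (u*w) = algebraMap ℚ L (A:ℚ) * w by linear_combination w * ju]
        exact hscale _ _ memw
      · rw [show u * (v*w) = u*v*w by ring]; exact memuvw
      · rw [show u * (u*v*w) = algebraMap ℚ L (A:ℚ) * (v*w) by linear_combination v*w*ju]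
        exact hscale _ _ memvw
    | zero => rw [mul_zero]; exact zero_mem _
    | add x y hx hy ihx ihy => rw [mul_add]; exact add_mem ihx ihy
    | smul q x hx ih => rw [mul_smul_comm]; exact Submodule.smul_mem _ q ih
  have hvmul : ∀ t ∈ Submodule.span ℚ S, v * t ∈ Submodule.span ℚ S := by
    intro t ht
    induction ht using Submodule.span_induction with
    | mem z hz =>
      simp only [hS, Set.mem_insert_iff, Set.mem_singleton_iff] at hz
      rcases hz with h|h|h|h|h|h|h|h <;> rw [h]
      · rw [mul_one]; exact memv
      · rw [show v * u = u*v by ring]; exact memuv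
      · rw [show v * v = algebraMap ℚ L (B:ℚ) * 1 by linear_combination jv]
        exact hscale _ _ mem1
      · exact memvw
      · rw [show v * (u*v) = algebraMap ℚ L (B:ℚ) * u by linear_combination u * jv]
        exact hscale _ _ memu
      · rw [show v * (u*w) = u*v*w by ring]; exact memuvw
      · rw [show v * (v*w) = algebraMap ℚ L (B:ℚ) * w by linear_combination w * jv]
        exact hscale _ _ memw
      · rw [show v * (u*v*w) = algebraMap ℚ L (B:ℚ) * (u*w) by linear_combination u*w*jv]
        exact hscale _ _ memuw
    | zero => rw [mul_zero]; exact zero_mem _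
    | add x y hx hy ihx ihy => rw [mul_add]; exact add_mem ihx ihy
    | smul q x hx ih => rw [mul_smul_comm]; exact Submodule.smul_mem _ q ih
  have hwmul : ∀ t ∈ Submodule.span ℚ S, w * t ∈ Submodule.span ℚ S := by
    intro t ht
    induction ht using Submodule.span_induction with
    | mem z hz =>
      simp only [hS, Set.mem_insert_iff, Set.mem_singleton_iff] at hz
      rcases hz with h|h|h|h|h|h|h|h <;> rw [h]
      · rw [mul_one]; exact memw
      · rw [show w * u = u*w by ring]; exact memuw
      · rw [show w * v = v*w by ring]; exact memvw
      · rw [show w * w = algebraMap ℚ L (C:ℚ) * 1 by linear_combination jw]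
        exact hscale _ _ mem1
      · rw [show w * (u*v) = u*v*w by ring]; exact memuvw
      · rw [show w * (u*w) = algebraMap ℚ L (C:ℚ) * u by linear_combination u * jw]
        exact hscale _ _ memu
      · rw [show w * (v*w) = algebraMap ℚ L (C:ℚ) * v by linear_combination v * jw]
        exact hscale _ _ memv
      · rw [show w * (u*v*w) = algebraMap ℚ L (C:ℚ) * (u*v) by linear_combination u*v*jw]
        exact hscale _ _ memuv
    | zero => rw [mul_zero]; exact zero_mem _
    | add x y hx hy ihx ihy => rw [mul_add]; exact add_mem ihx ihy
    | smul q x hx ih => rw [mul_smul_comm]; exact Submodule.smul_mem _ q ih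
  have hTmul : ∀ x ∈ Algebra.adjoin ℚ ({u, v, w} : Set L), ∀ t ∈ Submodule.span ℚ S, x * t ∈ Submodule.span ℚ S := by
    intro x hx
    induction hx using Algebra.adjoin_induction with
    | mem y hy =>
      simp only [Set.mem_insert_iff, Set.mem_singleton_iff] at hy
      rcases hy with h|h|h <;> rw [h]
      · exact humul
      · exact hvmul
      · exact hwmul
    | algebraMap r => exact fun t ht => hscale r t ht
    | add x y hx hy ihx ihy =>
      intro t ht; rw [add_mul]; exact add_mem (ihx t ht) (ihy t ht)
    | mul x y hx hy ihx ihy =>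
      intro t ht; rw [mul_assoc]; exact ihx _ (ihy t ht)
  have hadj : Algebra.adjoin ℚ ({u, v, w} : Set L) = ⊤ := by
    rw [← IntermediateField.adjoin_toSubalgebra_of_isAlgebraic
      (fun x _ => Algebra.IsAlgebraic.isAlgebraic x), jgen, IntermediateField.top_toSubalgebra]
  have hrange : Set.range (![1, u, v, w, u*v, u*w, v*w, u*v*w] : Fin 8 → L) = S := by
    rw [hS]
    simp only [Matrix.range_cons, Matrix.range_empty, Set.singleton_union, Set.union_empty]
  have li : LinearIndependent ℚ (![1, u, v, w, u*v, u*w, v*w, u*v*w] : Fin 8 → L) := by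
    apply linearIndependent_of_top_le_span_of_card_eq_finrank
    · rw [hrange]
      intro x _
      have hx : x ∈ Algebra.adjoin ℚ ({u, v, w} : Set L) := by rw [hadj]; exact Algebra.mem_top
      have := hTmul x hx 1 mem1
      rwa [mul_one] at this
    · rw [jdeg]; simp
  have key : ∀ c0 c1 c2 c3 c4 c5 c6 c7 : ℚ,
      algebraMap ℚ L c0 * 1 + algebraMap ℚ L c1 * u + algebraMap ℚ L c2 * v +
        algebraMap ℚ L c3 * w + algebraMap ℚ L c4 * (u*v) + algebraMap ℚ L c5 * (u*w) +
        algebraMap ℚ L c6 * (v*w) + algebraMap ℚ L c7 * (u*v*w) = 0 →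
      c0 = 0 ∧ c1 = 0 ∧ c2 = 0 ∧ c3 = 0 ∧ c4 = 0 ∧ c5 = 0 ∧ c6 = 0 ∧ c7 = 0 := by
    intro c0 c1 c2 c3 c4 c5 c6 c7 h
    have h2 := Fintype.linearIndependent_iff.mp li ![c0, c1, c2, c3, c4, c5, c6, c7] (by
      simp only [Fin.sum_univ_succ, Fin.sum_univ_zero, Matrix.cons_val_zero,
        Matrix.cons_val_succ, Algebra.smul_def, add_zero]
      linear_combination h)
    exact ⟨h2 0, h2 1, h2 2, h2 3, h2 4, h2 5, h2 6, h2 7⟩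
  -- main coefficient equations
  rw [hrep] at heq
  obtain ⟨h0, h1, h2, h3, h4, h5, h6, h7⟩ := key
    ((a₀) + (b₇)^2 * (a₂) * ((A:ℚ)) * ((B:ℚ)) * ((C:ℚ)) + (b₆)^2 * (a₂) * ((B:ℚ)) * ((C:ℚ)) + (b₅)^2 * (a₂) * ((A:ℚ)) * ((C:ℚ)) + (b₄)^2 * (a₂) * ((A:ℚ)) * ((B:ℚ)) + (b₃)^2 * (a₂) * ((C:ℚ)) + (b₂)^2 * (a₂) * ((B:ℚ)) + (b₁)^2 * (a₂) * ((A:ℚ)) + (b₀) * (a₁) + (b₀)^2 * (a₂))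
    ((-1 : ℚ) + (2 : ℚ) * (b₆) * (b₇) * (a₂) * ((B:ℚ)) * ((C:ℚ)) + (2 : ℚ) * (b₃) * (b₅) * (a₂) * ((C:ℚ)) + (2 : ℚ) * (b₂) * (b₄) * (a₂) * ((B:ℚ)) + (b₁) * (a₁) + (2 : ℚ) * (b₀) * (b₁) * (a₂))
    ((-1 : ℚ) * (a) + (2 : ℚ) * (b₅) * (b₇) * (a₂) * ((A:ℚ)) * ((C:ℚ)) + (2 : ℚ) * (b₃) * (b₆) * (a₂) * ((C:ℚ)) + (b₂) * (a₁) + (2 : ℚ) * (b₁) * (b₄) * (a₂) * ((A:ℚ)) + (2 : ℚ) * (b₀) * (b₂) * (a₂))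
    ((2 : ℚ) * (b₄) * (b₇) * (a₂) * ((A:ℚ)) * ((B:ℚ)) + (b₃) * (a₁) + (2 : ℚ) * (b₂) * (b₆) * (a₂) * ((B:ℚ)) + (2 : ℚ) * (b₁) * (b₅) * (a₂) * ((A:ℚ)) + (2 : ℚ) * (b₀) * (b₃) * (a₂))
    ((2 : ℚ) * (b₅) * (b₆) * (a₂) * ((C:ℚ)) + (b₄) * (a₁) + (2 : ℚ) * (b₃) * (b₇) * (a₂) * ((C:ℚ)) + (2 : ℚ) * (b₁) * (b₂) * (a₂) + (2 : ℚ) * (b₀) * (b₄) * (a₂))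
    ((b₅) * (a₁) + (2 : ℚ) * (b₄) * (b₆) * (a₂) * ((B:ℚ)) + (2 : ℚ) * (b₂) * (b₇) * (a₂) * ((B:ℚ)) + (2 : ℚ) * (b₁) * (b₃) * (a₂) + (2 : ℚ) * (b₀) * (b₅) * (a₂))
    ((b₆) * (a₁) + (2 : ℚ) * (b₄) * (b₅) * (a₂) * ((A:ℚ)) + (2 : ℚ) * (b₂) * (b₃) * (a₂) + (2 : ℚ) * (b₁) * (b₇) * (a₂) * ((A:ℚ)) + (2 : ℚ) * (b₀) * (b₆) * (a₂))
    ((b₇) * (a₁) + (2 : ℚ) * (b₃) * (b₄) * (a₂) + (2 : ℚ) * (b₂) * (b₅) * (a₂) + (2 : ℚ) * (b₁) * (b₆) * (a₂) + (2 : ℚ) * (b₀) * (b₇) * (a₂))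
    (by
      simp only [map_add, map_mul, map_sub, map_neg, map_pow, map_one, map_ofNat, map_zero]
      linear_combination (-1 : L) * heq + ((-1 : L) * (algebraMap ℚ L b₇)^2 * (algebraMap ℚ L a₂) * (v)^2 * (w)^2 + (-2 : L) * (algebraMap ℚ L b₅) * (algebraMap ℚ L b₇) * (algebraMap ℚ L a₂) * (v) * (w)^2 + (-1 : L) * (algebraMap ℚ L b₅)^2 * (algebraMap ℚ L a₂) * (w)^2 + (-2 : L) * (algebraMap ℚ L b₄) * (algebraMap ℚ L b₇) * (algebraMap ℚ L a₂) * (v)^2 * (w) + (-2 : L) * (algebraMap ℚ L b₄) * (algebraMap ℚ L b₅) * (algebraMap ℚ L a₂) * (v) * (w) + (-1 : L) * (algebraMap ℚ L b₄)^2 * (algebraMap ℚ L a₂) * (v)^2 + (-2 : L) * (algebraMap ℚ L b₁) * (algebraMap ℚ L b₇) * (algebraMap ℚ L a₂) * (v) * (w) + (-2 : L) * (algebraMap ℚ L b₁) * (algebraMap ℚ L b₅) * (algebraMap ℚ L a₂) * (w) + (-2 : L) * (algebraMap ℚ L b₁) * (algebraMap ℚ L b₄) * (algebraMap ℚ L a₂)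 * (v) + (-1 : L) * (algebraMap ℚ L b₁)^2 * (algebraMap ℚ L a₂)) * ju + ((-1 : L) * (algebraMap ℚ L b₇)^2 * (algebraMap ℚ L a₂) * (algebraMap ℚ L (A:ℚ)) * (w)^2 + (-2 : L) * (algebraMap ℚ L b₆) * (algebraMap ℚ L b₇) * (algebraMap ℚ L a₂) * (u) * (w)^2 + (-1 : L) * (algebraMap ℚ L b₆)^2 * (algebraMap ℚ L a₂) * (w)^2 + (-2 : L) * (algebraMap ℚ L b₄) * (algebraMap ℚ L b₇) * (algebraMap ℚ L a₂) * (algebraMap ℚ L (A:ℚ)) * (w) + (-2 : L) * (algebraMap ℚ L b₄) * (algebraMap ℚ L b₆) * (algebraMap ℚ L a₂) * (u) * (w) + (-1 : L) * (algebraMap ℚ L b₄)^2 * (algebraMap ℚ L a₂) * (algebraMap ℚ L (A:ℚ)) + (-2 : L) * (algebraMap ℚ L b₂) * (algebraMap ℚ L b₇) * (algebraMap ℚ L a₂) * (u) * (w) + (-2 : L) * (algebraMap ℚ L b₂) * (algebraMap ℚ L b₆) * (algebraMap ℚ L a₂) * (w) + (-2 : L) * (algebraMap ℚ L b₂) * (algebraMap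 ℚ L b₄) * (algebraMap ℚ L a₂) * (u) + (-1 : L) * (algebraMap ℚ L b₂)^2 * (algebraMap ℚ L a₂)) * jv + ((-1 : L) * (algebraMap ℚ L b₇)^2 * (algebraMap ℚ L a₂) * (algebraMap ℚ L (A:ℚ)) * (algebraMap ℚ L (B:ℚ)) + (-2 : L) * (algebraMap ℚ L b₆) * (algebraMap ℚ L b₇) * (algebraMap ℚ L a₂) * (algebraMap ℚ L (B:ℚ)) * (u) + (-1 : L) * (algebraMap ℚ L b₆)^2 * (algebraMap ℚ L a₂) * (algebraMap ℚ L (B:ℚ)) + (-2 : L) * (algebraMap ℚ L b₅) * (algebraMap ℚ L b₇) * (algebraMap ℚ L a₂) * (algebraMap ℚ L (A:ℚ)) * (v) + (-2 : L) * (algebraMap ℚ L b₅) * (algebraMap ℚ L b₆) * (algebraMap ℚ L a₂) * (u) * (v) + (-1 : L) * (algebraMap ℚ L b₅)^2 * (algebraMap ℚ L a₂) * (algebraMap ℚ L (A:ℚ)) + (-2 : L) * (algebraMap ℚ L b₃) * (algebraMap ℚ L b₇) * (algebraMap ℚ L a₂) * (u) * (v) + (-2 : L) * (algebraMap ℚ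 L b₃) * (algebraMap ℚ L b₆) * (algebraMap ℚ L a₂) * (v) + (-2 : L) * (algebraMap ℚ L b₃) * (algebraMap ℚ L b₅) * (algebraMap ℚ L a₂) * (u) + (-1 : L) * (algebraMap ℚ L b₃)^2 * (algebraMap ℚ L a₂)) * jw)
  -- factorized identity
  have hXY : (algebraMap ℚ L b₃ * w + algebraMap ℚ L b₅ * (u*w) + algebraMap ℚ L b₆ * (v*w) +
        algebraMap ℚ L b₇ * (u*v*w)) *
      (algebraMap ℚ L a₁ + (2:L) * algebraMap ℚ L a₂ * algebraMap ℚ L b₀ +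
        (2:L) * algebraMap ℚ L a₂ * algebraMap ℚ L b₁ * u +
        (2:L) * algebraMap ℚ L a₂ * algebraMap ℚ L b₂ * v +
        (2:L) * algebraMap ℚ L a₂ * algebraMap ℚ L b₄ * (u*v)) = 0 := by
    have q3 := congrArg (algebraMap ℚ L) h3
    have q5 := congrArg (algebraMap ℚ L) h5
    have q6 := congrArg (algebraMap ℚ L) h6
    have q7 := congrArg (algebraMap ℚ L) h7
    simp only [map_add, map_mul, map_sub, map_neg, map_pow, map_one, map_ofNat, map_zero]
      at q3 q5 q6 q7
    linear_combination w * q3 + (u*w) * q5 + (v*w) * q6 + (u*v*w) * q7 +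
      ((2 : L) * (algebraMap ℚ L b₄) * (algebraMap ℚ L b₇) * (algebraMap ℚ L a₂) * (v)^2 * (w) + (2 : L) * (algebraMap ℚ L b₄) * (algebraMap ℚ L b₅) * (algebraMap ℚ L a₂) * (v) * (w) + (2 : L) * (algebraMap ℚ L b₁) * (algebraMap ℚ L b₇) * (algebraMap ℚ L a₂) * (v) * (w) + (2 : L) * (algebraMap ℚ L b₁) * (algebraMap ℚ L b₅) * (algebraMap ℚ L a₂) * (w)) * ju + ((2 : L) * (algebraMap ℚ L b₄) * (algebraMap ℚ L b₇) * (algebraMap ℚ L a₂) * (algebraMap ℚ L (A:ℚ)) * (w) + (2 : L) * (algebraMap ℚ L b₄) * (algebraMap ℚ L b₆) * (algebraMap ℚ L a₂) * (u) * (w) + (2 : L) * (algebraMap ℚ L b₂) * (algebraMap ℚ L b₇) * (algebraMap ℚ L a₂) * (u) * (w) + (2 : L) * (algebraMap ℚ L b₂) * (algebraMap ℚ L b₆) * (algebraMap ℚ L a₂) * (w)) * jv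
  rcases mul_eq_zero.mp hXY with hX | hY
  · -- first factor zero: α would lie in ℚ(√A, √B), contradiction
    exfalso
    obtain ⟨-, -, -, e3, -, e5, e6, e7⟩ := key 0 0 0 b₃ 0 b₅ b₆ b₇ (by
      simp only [map_zero]
      linear_combination hX)
    have hα4 : α = algebraMap ℚ L b₀ + algebraMap ℚ L b₁ * u + algebraMap ℚ L b₂ * v +
        algebraMap ℚ L b₄ * (u*v) := by
      rw [hrep, e3, e5, e6, e7]; simp
    -- the span of {1, u, v, u*v}
    set S4 : Set L := {1, u, v, u*v} with hS4
    have mem1' : (1:L) ∈ Submodule.span ℚ S4 := Submodule.subset_span (by simp [hS4])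
    have memu' : u ∈ Submodule.span ℚ S4 := Submodule.subset_span (by simp [hS4])
    have memv' : v ∈ Submodule.span ℚ S4 := Submodule.subset_span (by simp [hS4])
    have memuv' : u*v ∈ Submodule.span ℚ S4 := Submodule.subset_span (by simp [hS4])
    have hscale4 : ∀ (q : ℚ) (x : L), x ∈ Submodule.span ℚ S4 → algebraMap ℚ L q * x ∈ Submodule.span ℚ S4 := by
      intro q x hx
      rw [← Algebra.smul_def]
      exact Submodule.smul_mem _ q hx
    have hmemα : α ∈ Submodule.span ℚ S4 := by
      rw [hα4]
      exact add_mem (add_mem (add_mem (by simpa using hscale4 b₀ 1 mem1') (hscale4 _ _ memu'))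
        (hscale4 _ _ memv')) (hscale4 _ _ memuv')
    have hαmul : ∀ t ∈ Submodule.span ℚ S4, α * t ∈ Submodule.span ℚ S4 := by
      intro t ht
      induction ht using Submodule.span_induction with
      | mem z hz =>
        simp only [hS4, Set.mem_insert_iff, Set.mem_singleton_iff] at hz
        rcases hz with h|h|h|h <;> rw [h]
        · rw [mul_one]; exact hmemα
        · rw [show α * u = algebraMap ℚ L (b₁*(A:ℚ)) * 1 + algebraMap ℚ L b₀ * u +
              algebraMap ℚ L (b₄*(A:ℚ)) * v + algebraMap ℚ L b₂ * (u*v) by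
            rw [hα4]
            linear_combination (norm := (simp only [map_mul]; ring1))
              (algebraMap ℚ L b₁ + algebraMap ℚ L b₄ * v) * ju]
          exact add_mem (add_mem (add_mem (hscale4 _ _ mem1') (hscale4 _ _ memu'))
            (hscale4 _ _ memv')) (hscale4 _ _ memuv')
        · rw [show α * v = algebraMap ℚ L (b₂*(B:ℚ)) * 1 + algebraMap ℚ L (b₄*(B:ℚ)) * u +
              algebraMap ℚ L b₀ * v + algebraMap ℚ L b₁ * (u*v) by
            rw [hα4]
            linear_combination (norm := (simp only [map_mul]; ring1))
              (algebraMap ℚ L b₂ + algebraMap ℚ L b₄ * u) * jv]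
          exact add_mem (add_mem (add_mem (hscale4 _ _ mem1') (hscale4 _ _ memu'))
            (hscale4 _ _ memv')) (hscale4 _ _ memuv')
        · rw [show α * (u*v) = algebraMap ℚ L (b₄*(A:ℚ)*(B:ℚ)) * 1 +
              algebraMap ℚ L (b₂*(B:ℚ)) * u + algebraMap ℚ L (b₁*(A:ℚ)) * v +
              algebraMap ℚ L b₀ * (u*v) by
            rw [hα4]
            linear_combination (norm := (simp only [map_mul]; ring1))
              (algebraMap ℚ L b₁ * v + algebraMap ℚ L b₄ * v^2) * ju +
              (algebraMap ℚ L b₂ * u + algebraMap ℚ L b₄ * algebraMap ℚ L (A:ℚ)) * jv]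
          exact add_mem (add_mem (add_mem (hscale4 _ _ mem1') (hscale4 _ _ memu'))
            (hscale4 _ _ memv')) (hscale4 _ _ memuv')
      | zero => rw [mul_zero]; exact zero_mem _
      | add x y hx hy ihx ihy => rw [mul_add]; exact add_mem ihx ihy
      | smul q x hx ih => rw [mul_smul_comm]; exact Submodule.smul_mem _ q ih
    have hT4mul : ∀ x ∈ Algebra.adjoin ℚ ({α} : Set L), ∀ t ∈ Submodule.span ℚ S4, x * t ∈ Submodule.span ℚ S4 := by
      intro x hx
      induction hx using Algebra.adjoin_induction with
      | mem y hy =>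
        simp only [Set.mem_singleton_iff] at hy
        rw [hy]
        exact hαmul
      | algebraMap r => exact fun t ht => hscale4 r t ht
      | add x y hx hy ihx ihy =>
        intro t ht; rw [add_mul]; exact add_mem (ihx t ht) (ihy t ht)
      | mul x y hx hy ihx ihy =>
        intro t ht; rw [mul_assoc]; exact ihx _ (ihy t ht)
    have hadjα : Algebra.adjoin ℚ ({α} : Set L) = ⊤ := by
      rw [← IntermediateField.adjoin_toSubalgebra_of_isAlgebraic
        (fun x _ => Algebra.IsAlgebraic.isAlgebraic x), hα, IntermediateField.top_toSubalgebra]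
    have hw4 : w ∈ Submodule.span ℚ S4 := by
      have hx : w ∈ Algebra.adjoin ℚ ({α} : Set L) := by rw [hadjα]; exact Algebra.mem_top
      have := hT4mul w hx 1 mem1'
      rwa [mul_one] at this
    have hrange4 : Set.range (![1, u, v, u*v] : Fin 4 → L) = S4 := by
      rw [hS4]
      simp only [Matrix.range_cons, Matrix.range_empty, Set.singleton_union, Set.union_empty]
    rw [← hrange4] at hw4
    obtain ⟨c, hc⟩ := (Submodule.mem_span_range_iff_exists_fun ℚ).mp hw4
    rw [Fin.sum_univ_four] at hc
    simp only [Matrix.cons_val_zero, Matrix.cons_val_one, Matrix.head_cons,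
      Matrix.cons_val_two, Matrix.tail_cons, Matrix.cons_val_three, Algebra.smul_def] at hc
    obtain ⟨-, -, -, e3', -, -, -, -⟩ := key (c 0) (c 1) (c 2) (-1) (c 3) 0 0 0 (by
      simp only [map_zero, map_neg, map_one]
      linear_combination hc)
    norm_num at e3'
  · -- second factor zero: b₁ = b₂ = b₄ = 0
    obtain ⟨f0, f1, f2, -, f4, -, -, -⟩ := key (a₁ + 2*a₂*b₀) (2*a₂*b₁) (2*a₂*b₂) 0 (2*a₂*b₄)
      0 0 0 (by
        simp only [map_zero, map_add, map_mul, map_ofNat]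
        linear_combination hY)
    have h2a : (2:ℚ) * a₂ ≠ 0 := mul_ne_zero two_ne_zero ha₂
    have hb1 : b₁ = 0 := by
      rcases mul_eq_zero.mp f1 with h' | h'
      · rcases mul_eq_zero.mp h' with h'' | h''
        · norm_num at h''
        · exact absurd h'' ha₂
      · exact h'
    have hb2 : b₂ = 0 := by
      rcases mul_eq_zero.mp f2 with h' | h'
      · rcases mul_eq_zero.mp h' with h'' | h''
        · norm_num at h''
        · exact absurd h'' ha₂
      · exact h'
    have hb4 : b₄ = 0 := by
      rcases mul_eq_zero.mp f4 with h' | h'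
      · rcases mul_eq_zero.mp h' with h'' | h''
        · norm_num at h''
        · exact absurd h'' ha₂
      · exact h'
    refine ⟨hb1, hb2, hb4, ?_⟩
    intro hb5
    have hCq : (C:ℚ) ≠ 0 := Int.cast_ne_zero.mpr hC0
    rw [hb1, hb2, hb4, hb5] at h1 h2 h4
    have h37 : b₃ * b₇ * (a₂ * (C:ℚ)) = 0 := by linear_combination h4 / 2
    rcases mul_eq_zero.mp h37 with h' | h'
    · rcases mul_eq_zero.mp h' with hb3 | hb7
      · exact ha (by rw [hb3] at h2; linear_combination -h2)
      · exact one_ne_zero (by rw [hb7] at h1; linear_combination -h1)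
    · exact (mul_ne_zero ha₂ hCq) h'
end
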